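/- arXiv:2306.06947 — 5 statements merged into one kernel-verified Lean document; each statement's English description precedes it below -/
import Mathlib

section
/- Let P, X, Y be real Banach spaces, K ⊆ Y a pointed closed convex cone, f : P × X → Y a K-convex and K-closed map, and C : P ⇉ X a closed convex set-valued map. Let (p̄, x̄) ∈ gph S with ȳ = f(p̄, x̄), let H : P ⇉ P × X be H(p) = {p} × C(p), and assume (i) ℝ⁺(rge H − dom f) is a closed linear subspace of P × X, and (ii) ℝ⁺(P − dom C) is a closed linear subspace of P. Then for every y* ∈ K*, D*(F + K)(p̄, ȳ)(y*) = ⋃_{(p*, x*) ∈ ∂⟨y*, f⟩(p̄, x̄)} {p* + q* : q* ∈ D*C(p̄, x̄)(x*)}. -/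
open Set Pointwise Topology Filter

/-- The graph of a set-valued map. -/
def gph {α β : Type*} (H : α → Set β) : Set (α × β) := {q | q.2 ∈ H q.1}

/-- The domain of a set-valued map. -/
def dom {α β : Type*} (H : α → Set β) : Set α := {a | (H a).Nonempty}

/-- The coderivative (in the sense of convex analysis) of a set-valued map `H` at
`(a, b) ∈ gph H`:  `φ ∈ coderiv H a b ψ` iff `(φ, -ψ) ∈ N((a,b), gph H)`, that is,
`⟨φ, u - a⟩ - ⟨ψ, v - b⟩ ≤ 0` for all `(u, v) ∈ gph H`. -/
def coderiv {α β : Type*} [NormedAddCommGroup α] [NormedSpace ℝ α]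
    [NormedAddCommGroup β] [NormedSpace ℝ β]
    (H : α → Set β) (a : α) (b : β) (ψ : β →L[ℝ] ℝ) : Set (α →L[ℝ] ℝ) :=
  {φ | ∀ u : α, ∀ v ∈ H u, φ (u - a) - ψ (v - b) ≤ 0}

/-- The Fréchet coderivative of a set-valued map `H` at `(a, b) ∈ gph H`, with the sum
norm `‖(u,v)‖ = ‖u‖ + ‖v‖` on the product:  `φ ∈ fCoderiv H a b ψ` iff
`(φ, -ψ) ∈ N̂((a,b), gph H)`, the Fréchet normal cone, expressed by its standard
`ε`–`δ` characterization. -/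
def fCoderiv {α β : Type*} [NormedAddCommGroup α] [NormedSpace ℝ α]
    [NormedAddCommGroup β] [NormedSpace ℝ β]
    (H : α → Set β) (a : α) (b : β) (ψ : β →L[ℝ] ℝ) : Set (α →L[ℝ] ℝ) :=
  {φ | ∀ ε > (0:ℝ), ∃ δ > (0:ℝ), ∀ u : α, ∀ v ∈ H u, ‖u - a‖ + ‖v - b‖ < δ →
      φ (u - a) - ψ (v - b) ≤ ε * (‖u - a‖ + ‖v - b‖)}

/-- The subdifferential (in the sense of convex analysis) of `g : α → ℝ` at `a`. -/
def subdiff {α : Type*} [NormedAddCommGroup α] [NormedSpace ℝ α]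
    (g : α → ℝ) (a : α) : Set (α →L[ℝ] ℝ) :=
  {φ | ∀ u : α, φ (u - a) ≤ g u - g a}

private lemma sandwich_aux {E : Type*} [NormedAddCommGroup E] [NormedSpace ℝ E]
    (G : E → ℝ) (hG0 : G 0 = 0)
    (hGc : ∀ a b : E, ∀ t : ℝ, 0 ≤ t → t ≤ 1 →
      G (t • a + (1 - t) • b) ≤ t * G a + (1 - t) * G b)
    (D : Set E) (hD0 : (0:E) ∈ D) (hDc : Convex ℝ D)
    (Φ : E →ₗ[ℝ] ℝ) (hΦD : ∀ d ∈ D, Φ d ≤ G d)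
    (c0 : E) (r0 B : ℝ) (hr0 : 0 < r0) (hGb : ∀ h ∈ Metric.ball c0 r0, G h ≤ B) :
    ∃ ξ : E →L[ℝ] ℝ, (∀ h, ξ h ≤ G h) ∧ (∀ d ∈ D, Φ d ≤ ξ d) := by
  classical
  set S : E → Set ℝ := fun h => (fun t : ℝ => G (t • h) / t) '' Set.Ioi 0 with hS
  have hSne : ∀ h, (S h).Nonempty := fun h => ⟨G h, 1, by simp⟩
  have hmono : ∀ (h : E) (s t : ℝ), 0 < s → s ≤ t → G (s • h) / s ≤ G (t • h) / t := by
    intro h s t hs hst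
    have ht : 0 < t := lt_of_lt_of_le hs hst
    have key : G (s • h) ≤ (s / t) * G (t • h) := by
      have h1 : s • h = (s / t) • (t • h) + (1 - s / t) • (0:E) := by
        rw [smul_zero, add_zero, smul_smul, div_mul_cancel₀ _ (ne_of_gt ht)]
      calc G (s • h) = G ((s / t) • (t • h) + (1 - s / t) • (0:E)) := by rw [← h1]
        _ ≤ (s / t) * G (t • h) + (1 - s / t) * G 0 :=
            hGc _ _ _ (by positivity) (by rw [div_le_one ht]; exact hst)
        _ = (s / t) * G (t • h) := by rw [hG0]; ring
    rw [div_le_div_iff₀ hs ht]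
    calc G (s • h) * t ≤ ((s / t) * G (t • h)) * t := by nlinarith
      _ = G (t • h) * s := by field_simp
  have hGsym : ∀ h : E, -G (-h) ≤ G h := by
    intro h
    have h0 := hGc h (-h) (1/2) (by norm_num) (by norm_num)
    have h2 : (1/2 : ℝ) • h + (1 - 1/2 : ℝ) • (-h) = 0 := by
      norm_num
    rw [h2, hG0] at h0
    nlinarith
  have hlb : ∀ (h : E) (t : ℝ), 0 < t → -G (-h) ≤ G (t • h) / t := by
    intro h t ht
    rcases le_total 1 t with h1t | ht1
    · have h1 := hmono h 1 t one_pos h1t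
      simp only [one_smul, div_one] at h1
      exact le_trans (hGsym h) h1
    · have h3 : G (t • (-h)) / t ≤ G (-h) := by
        have := hmono (-h) t 1 ht ht1
        simpa using this
      have h2 : -G (t • (-h)) ≤ G (t • h) := by
        have := hGsym (t • h)
        rwa [← smul_neg] at this
      have h4 : (-G (t • (-h))) / t ≤ G (t • h) / t :=
        (div_le_div_iff_of_pos_right ht).mpr h2
      calc -G (-h) ≤ -(G (t • (-h)) / t) := by linarith
        _ = (-G (t • (-h))) / t := (neg_div _ _).symm
        _ ≤ G (t • h) / t := h4
  have hbdd : ∀ h, BddBelow (S h) := by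
    intro h
    refine ⟨-G (-h), ?_⟩
    rintro b ⟨t, ht, rfl⟩
    exact hlb h t ht
  set p : E → ℝ := fun h => sInf (S h) with hp
  have hp_le : ∀ h (t : ℝ), 0 < t → p h ≤ G (t • h) / t := by
    intro h t ht
    exact csInf_le (hbdd h) ⟨t, ht, rfl⟩
  have hp_leG : ∀ h, p h ≤ G h := by
    intro h
    have := hp_le h 1 one_pos
    simpa using this
  have hp_ge : ∀ h, -G (-h) ≤ p h := fun h => le_csInf (hSne h) (by rintro b ⟨t, ht, rfl⟩; exact hlb h t ht)
  have hp0 : p 0 = 0 := by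
    have h1 : p 0 ≤ 0 := by simpa [hG0] using hp_leG 0
    have h2 : (0:ℝ) ≤ p 0 := by simpa [hG0] using hp_ge 0
    linarith
  -- p is positively homogeneous
  have hp_homle : ∀ (c : ℝ), 0 < c → ∀ h, p (c • h) ≤ c * p h := by
    intro c hc h
    have key : ∀ b ∈ S h, p (c • h) ≤ c * b := by
      rintro b ⟨t, ht, rfl⟩
      simp only [Set.mem_Ioi] at ht
      have h1 : p (c • h) ≤ G ((t / c) • (c • h)) / (t / c) := hp_le _ _ (by positivity)
      have h2 : (t / c) • (c • h) = t • h := by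
        rw [smul_smul, div_mul_cancel₀ _ (ne_of_gt hc)]
      rw [h2] at h1
      calc p (c • h) ≤ G (t • h) / (t / c) := h1
        _ = c * (G (t • h) / t) := by field_simp
    have h3 : p (c • h) / c ≤ p h := by
      apply le_csInf (hSne h)
      rintro b hb
      have := key b hb
      rw [div_le_iff₀ hc]
      linarith [key b hb]
    calc p (c • h) = c * (p (c • h) / c) := by field_simp
      _ ≤ c * p h := by nlinarith
  have hp_hom : ∀ (c : ℝ), 0 < c → ∀ h, p (c • h) = c * p h := by
    intro c hc h
    refine le_antisymm (hp_homle c hc h) ?_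
    have := hp_homle c⁻¹ (by positivity) (c • h)
    rw [smul_smul, inv_mul_cancel₀ (ne_of_gt hc), one_smul] at this
    calc c * p h ≤ c * (c⁻¹ * p (c • h)) := by nlinarith
      _ = p (c • h) := by field_simp
  -- p is subadditive
  have hp_add : ∀ h1 h2, p (h1 + h2) ≤ p h1 + p h2 := by
    intro h1 h2
    have key : ∀ a ∈ S h1, ∀ b ∈ S h2, p (h1 + h2) ≤ a + b := by
      rintro a ⟨s, hs, rfl⟩ b ⟨t, ht, rfl⟩
      simp only [Set.mem_Ioi] at hs ht
      set r : ℝ := s * t / (s + t) with hr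
      have hst : 0 < s + t := by linarith
      have hstne : s + t ≠ 0 := ne_of_gt hst
      have hrpos : 0 < r := by rw [hr]; positivity
      have hcoef1 : (0:ℝ) ≤ t / (s + t) := by positivity
      have hcoef2 : t / (s + t) ≤ 1 := by
        rw [div_le_one hst]; linarith
      have hco : (1 : ℝ) - t / (s + t) = s / (s + t) := by field_simp; ring
      have e1 : (t / (s + t)) * s = r := by rw [hr]; field_simp; try ring
      have e2 : (s / (s + t)) * t = r := by rw [hr]; field_simp; try ring
      have hcomb : (t / (s + t)) • (s • h1) + (s / (s + t)) • (t • h2) = r • (h1 + h2) := by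
        rw [smul_smul, smul_smul, e1, e2, smul_add]
      have h1' : G (r • (h1 + h2)) ≤ (t / (s + t)) * G (s • h1) + (s / (s + t)) * G (t • h2) := by
        have hg := hGc (s • h1) (t • h2) (t / (s + t)) hcoef1 hcoef2
        rw [hco, hcomb] at hg
        exact hg
      have h2' : p (h1 + h2) ≤ G (r • (h1 + h2)) / r := hp_le _ _ hrpos
      have h3' : G (r • (h1 + h2)) / r ≤ G (s • h1) / s + G (t • h2) / t := by
        rw [div_le_iff₀ hrpos]
        have expand : (G (s • h1) / s + G (t • h2) / t) * r
            = (t / (s + t)) * G (s • h1) + (s / (s + t)) * G (t • h2) := by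
          rw [hr]; field_simp; try ring
        rw [expand]
        exact h1'
      linarith
    have step : ∀ a ∈ S h1, p (h1 + h2) - a ≤ p h2 := by
      intro a ha
      apply le_csInf (hSne h2)
      intro b hb
      linarith [key a ha b hb]
    have : p (h1 + h2) - p h2 ≤ p h1 := by
      apply le_csInf (hSne h1)
      intro a ha
      linarith [step a ha]
    linarith
  -- Φ ≤ p on D
  have hΦp : ∀ d ∈ D, Φ d ≤ p d := by
    intro d hd
    apply le_csInf (hSne d)
    rintro b ⟨t, ht, rfl⟩
    simp only [Set.mem_Ioi] at ht
    rcases le_total t 1 with ht1 | h1t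
    · have hmem : t • d ∈ D := hDc.smul_mem_of_zero_mem hD0 hd ⟨ht.le, ht1⟩
      have h2 : Φ (t • d) ≤ G (t • d) := hΦD _ hmem
      rw [map_smul, smul_eq_mul] at h2
      rw [le_div_iff₀ ht]
      linarith
    · have h2 := hmono d 1 t one_pos h1t
      simp only [one_smul, div_one] at h2
      exact le_trans (hΦD d hd) h2
  -- the cone generated by D
  set Dc : Set E := {w : E | ∃ c : ℝ, 0 ≤ c ∧ ∃ d ∈ D, w = c • d} with hDcdef
  have hDc0 : (0:E) ∈ Dc := ⟨0, le_refl 0, 0, hD0, by simp⟩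
  have hDcadd : ∀ w1 ∈ Dc, ∀ w2 ∈ Dc, w1 + w2 ∈ Dc := by
    rintro w1 ⟨c1, hc1, d1, hd1, rfl⟩ w2 ⟨c2, hc2, d2, hd2, rfl⟩
    rcases eq_or_lt_of_le (by positivity : (0:ℝ) ≤ c1 + c2) with hc | hc
    · have hc1' : c1 = 0 := by linarith
      have hc2' : c2 = 0 := by linarith
      exact ⟨0, le_refl 0, 0, hD0, by simp [hc1', hc2']⟩
    · refine ⟨c1 + c2, hc.le, (c1 / (c1 + c2)) • d1 + (c2 / (c1 + c2)) • d2, ?_, ?_⟩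
      · exact hDc hd1 hd2 (by positivity) (by positivity) (by field_simp)
      · rw [smul_add, smul_smul, smul_smul]
        congr 2 <;> field_simp
  have hDcsmul : ∀ (c : ℝ), 0 < c → ∀ w ∈ Dc, c • w ∈ Dc := by
    rintro c hc w ⟨c1, hc1, d1, hd1, rfl⟩
    exact ⟨c * c1, by positivity, d1, hd1, by rw [smul_smul]⟩
  have hΦpc : ∀ w ∈ Dc, Φ w ≤ p w := by
    rintro w ⟨c, hc, d, hd, rfl⟩
    rcases eq_or_lt_of_le hc with hc0 | hcpos
    · simp [← hc0, hp0]
    · rw [map_smul, smul_eq_mul, hp_hom c hcpos]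
      exact mul_le_mul_of_nonneg_left (hΦp d hd) hc
  -- the sublinear function σ
  set T : E → Set ℝ := fun h => (fun w => p (h + w) - Φ w) '' Dc with hT
  have hTne : ∀ h, (T h).Nonempty := fun h => ⟨p (h + 0) - Φ 0, 0, hDc0, rfl⟩
  have hTlb : ∀ h, ∀ b ∈ T h, -p (-h) ≤ b := by
    rintro h b ⟨w, hw, rfl⟩
    show -p (-h) ≤ p (h + w) - Φ w
    have h1 : p w ≤ p (h + w) + p (-h) := by
      have := hp_add (h + w) (-h)
      simpa [add_comm, add_assoc, add_left_comm] using this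
    have h2 : Φ w ≤ p w := hΦpc w hw
    linarith
  have hTbdd : ∀ h, BddBelow (T h) := fun h => ⟨-p (-h), fun b hb => hTlb h b hb⟩
  set σ : E → ℝ := fun h => sInf (T h) with hσ
  have hσ_le : ∀ h, ∀ w ∈ Dc, σ h ≤ p (h + w) - Φ w := by
    intro h w hw
    exact csInf_le (hTbdd h) ⟨w, hw, rfl⟩
  have hσ_lep : ∀ h, σ h ≤ p h := by
    intro h
    have := hσ_le h 0 hDc0
    simpa using this
  have hσ_ge : ∀ h, -p (-h) ≤ σ h := fun h => le_csInf (hTne h) (hTlb h)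
  have hσ0 : (0:ℝ) ≤ σ 0 := by
    have := hσ_ge 0
    simpa [hp0] using this
  -- σ is subadditive
  have hσ_add : ∀ h1 h2, σ (h1 + h2) ≤ σ h1 + σ h2 := by
    intro h1 h2
    have key : ∀ a ∈ T h1, ∀ b ∈ T h2, σ (h1 + h2) ≤ a + b := by
      rintro a ⟨w1, hw1, rfl⟩ b ⟨w2, hw2, rfl⟩
      have hmem := hDcadd w1 hw1 w2 hw2
      have h1' : σ (h1 + h2) ≤ p ((h1 + h2) + (w1 + w2)) - Φ (w1 + w2) := hσ_le _ _ hmem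
      have h2' : p ((h1 + h2) + (w1 + w2)) ≤ p (h1 + w1) + p (h2 + w2) := by
        have := hp_add (h1 + w1) (h2 + w2)
        have e : (h1 + w1) + (h2 + w2) = (h1 + h2) + (w1 + w2) := by abel
        rwa [e] at this
      rw [map_add] at h1'
      show σ (h1 + h2) ≤ (p (h1 + w1) - Φ w1) + (p (h2 + w2) - Φ w2)
      linarith
    have step : ∀ a ∈ T h1, σ (h1 + h2) - a ≤ σ h2 := by
      intro a ha
      apply le_csInf (hTne h2)
      intro b hb
      linarith [key a ha b hb]
    have : σ (h1 + h2) - σ h2 ≤ σ h1 := by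
      apply le_csInf (hTne h1)
      intro a ha
      linarith [step a ha]
    linarith
  -- σ is positively homogeneous
  have hσ_homle : ∀ (c : ℝ), 0 < c → ∀ h, σ (c • h) ≤ c * σ h := by
    intro c hc h
    have key : ∀ b ∈ T h, σ (c • h) ≤ c * b := by
      rintro b ⟨w, hw, rfl⟩
      have h1 : σ (c • h) ≤ p (c • h + c • w) - Φ (c • w) := hσ_le _ _ (hDcsmul c hc w hw)
      rw [← smul_add, hp_hom c hc, map_smul, smul_eq_mul] at h1
      calc σ (c • h) ≤ c * p (h + w) - c * Φ w := h1
        _ = c * (p (h + w) - Φ w) := by ring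
    have h3 : σ (c • h) / c ≤ σ h := by
      apply le_csInf (hTne h)
      rintro b hb
      rw [div_le_iff₀ hc]
      linarith [key b hb]
    calc σ (c • h) = c * (σ (c • h) / c) := by field_simp
      _ ≤ c * σ h := by nlinarith
  have hσ_hom : ∀ (c : ℝ), 0 < c → ∀ h, σ (c • h) = c * σ h := by
    intro c hc h
    refine le_antisymm (hσ_homle c hc h) ?_
    have := hσ_homle c⁻¹ (by positivity) (c • h)
    rw [smul_smul, inv_mul_cancel₀ (ne_of_gt hc), one_smul] at this
    calc c * σ h ≤ c * (c⁻¹ * σ (c • h)) := by nlinarith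
      _ = σ (c • h) := by field_simp
  -- Hahn-Banach
  obtain ⟨ℓ, -, hℓle⟩ := exists_extension_of_le_sublinear
    ⟨(⊥ : Submodule ℝ E), 0⟩ σ hσ_hom hσ_add
    (by
      rintro ⟨x, hx⟩
      rw [Submodule.mem_bot] at hx
      subst hx
      simpa using hσ0)
  -- ℓ ≤ G everywhere
  have hℓG : ∀ h, ℓ h ≤ G h := fun h => le_trans (hℓle h) (le_trans (hσ_lep h) (hp_leG h))
  -- ℓ ≥ Φ on D
  have hℓΦ : ∀ d ∈ D, Φ d ≤ ℓ d := by
    intro d hd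
    have h1 : ℓ (-d) ≤ σ (-d) := hℓle (-d)
    have h2 : σ (-d) ≤ p (-d + d) - Φ d := hσ_le (-d) d ⟨1, zero_le_one, d, hd, (one_smul ℝ d).symm⟩
    rw [neg_add_cancel, hp0] at h2
    rw [map_neg] at h1
    linarith
  -- continuity of ℓ
  have hMb : ∀ u : E, ‖u‖ < r0 → ℓ u ≤ B - ℓ c0 := by
    intro u hu
    have h1 : ℓ (c0 + u) ≤ G (c0 + u) := hℓG _
    have h2 : G (c0 + u) ≤ B := hGb _ (by
      rw [Metric.mem_ball, dist_eq_norm]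
      simpa using hu)
    rw [map_add] at h1
    linarith
  set Mb : ℝ := B - ℓ c0 with hMbdef
  have hMb0 : 0 ≤ Mb := by
    have := hMb 0 (by simpa using hr0)
    simpa using this
  have habs : ∀ u : E, ‖u‖ < r0 → |ℓ u| ≤ Mb := by
    intro u hu
    rcases abs_cases (ℓ u) with ⟨h, -⟩ | ⟨h, -⟩
    · rw [h]; exact hMb u hu
    · rw [h, ← map_neg]
      exact hMb (-u) (by simpa using hu)
  have hbound : ∀ x : E, ‖ℓ x‖ ≤ (2 * Mb / r0) * ‖x‖ := by
    intro x
    rcases eq_or_ne x 0 with rfl | hx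
    · simp
    · have hxn : 0 < ‖x‖ := norm_pos_iff.mpr hx
      have hu : ‖(r0 / (2 * ‖x‖)) • x‖ < r0 := by
        rw [norm_smul, Real.norm_eq_abs, abs_of_pos (by positivity)]
        rw [div_mul_eq_mul_div, mul_comm]
        rw [div_lt_iff₀ (by positivity)]
        nlinarith
      have h1 := habs _ hu
      rw [map_smul, smul_eq_mul, abs_mul, abs_of_pos (by positivity : (0:ℝ) < r0 / (2 * ‖x‖))] at h1
      rw [Real.norm_eq_abs]
      rw [div_mul_eq_mul_div, mul_comm] at h1
      have h2 : |ℓ x| * r0 ≤ Mb * (2 * ‖x‖) := by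
        rw [div_le_iff₀ (by positivity)] at h1
        linarith
      rw [div_mul_eq_mul_div, le_div_iff₀ hr0]
      nlinarith
  set ξ : E →L[ℝ] ℝ := LinearMap.mkContinuous ℓ (2 * Mb / r0) hbound with hξ
  have hξeq : ∀ x, ξ x = ℓ x := fun x => rfl
  exact ⟨ξ, fun h => by rw [hξeq]; exact hℓG h, fun d hd => by rw [hξeq]; exact hℓΦ d hd⟩

private lemma stepB {E Y : Type*} [NormedAddCommGroup E] [NormedSpace ℝ E]
    [NormedAddCommGroup Y] [NormedSpace ℝ Y] [CompleteSpace Y]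
    (M : Set (E × Y)) (hMc : Convex ℝ M) (hMcl : IsClosed M)
    (N ρ : ℝ) (hρ : 0 < ρ) (q0 : E)
    (hdense : ∀ q ∈ Metric.ball q0 ρ, ∀ ε > (0:ℝ), ∃ m ∈ M, ‖m.2‖ ≤ N ∧ ‖q - m.1‖ < ε) :
    ∀ w ∈ Metric.ball q0 (ρ/2), ∃ y, ‖y‖ ≤ N ∧ (w, y) ∈ M := by
  classical
  intro w hw
  have hsel : ∀ t : E, t ∈ Metric.ball q0 ρ → ∃ m : E × Y, m ∈ M ∧ ‖m.2‖ ≤ N ∧ ‖t - m.1‖ < ρ/2 := by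
    intro t ht
    obtain ⟨m, hm, hm2, hm1⟩ := hdense t ht (ρ/2) (by positivity)
    exact ⟨m, hm, hm2, hm1⟩
  set B := Metric.ball q0 ρ with hB
  -- the chosen approximant for a point of the ball
  set pick : {t : E // t ∈ B} → E × Y := fun t => Classical.choose (hsel t.1 t.2) with hpick
  have hpick_spec : ∀ t : {t : E // t ∈ B},
      pick t ∈ M ∧ ‖(pick t).2‖ ≤ N ∧ ‖t.1 - (pick t).1‖ < ρ/2 :=
    fun t => Classical.choose_spec (hsel t.1 t.2)
  -- the iteration step
  have hnextmem : ∀ t : {t : E // t ∈ B}, q0 + (2:ℝ) • (t.1 - (pick t).1) ∈ B := by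
    intro t
    have h1 := (hpick_spec t).2.2
    show q0 + (2:ℝ) • (t.1 - (pick t).1) ∈ Metric.ball q0 ρ
    rw [Metric.mem_ball, dist_eq_norm, add_sub_cancel_left, norm_smul]
    simp only [Real.norm_ofNat]
    linarith
  set next : {t : E // t ∈ B} → {t : E // t ∈ B} :=
    fun t => ⟨q0 + (2:ℝ) • (t.1 - (pick t).1), hnextmem t⟩ with hnext
  -- the target point:  w = (q + q0)/2 with q ∈ B
  set q : E := (2:ℝ) • w - q0 with hq
  have hqB : q ∈ B := by
    show q ∈ Metric.ball q0 ρ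
    rw [Metric.mem_ball, dist_eq_norm, hq]
    have he2 : (2:ℝ) • w - q0 - q0 = (2:ℝ) • (w - q0) := by module
    rw [he2, norm_smul]
    simp only [Real.norm_ofNat]
    rw [Metric.mem_ball, dist_eq_norm] at hw
    linarith
  set T : ℕ → {t : E // t ∈ B} := fun n => next^[n] ⟨q, hqB⟩ with hT
  set a : ℕ → E × Y := fun n => pick (T n) with ha
  set e : ℕ → E := fun n => (T n).1 - (a n).1 with he
  have hae : ∀ n, a n ∈ M ∧ ‖(a n).2‖ ≤ N ∧ ‖e n‖ < ρ/2 := fun n => hpick_spec (T n)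
  have hTsucc : ∀ n, (T (n+1)).1 = q0 + (2:ℝ) • e n := by
    intro n
    have h : T (n+1) = next (T n) := Function.iterate_succ_apply' next n _
    rw [h]
  -- the key identity
  have hkey : ∀ n, w = (∑ j ∈ Finset.range (n+1), ((1:ℝ)/2)^(j+1) • (a j).1)
      + ((1:ℝ)/2)^(n+1) • (e n + q0) := by
    intro n
    induction n with
    | zero =>
      simp only [zero_add, Finset.range_one, Finset.sum_singleton, pow_one]
      have h0 : e 0 = q - (a 0).1 := rfl
      rw [h0, hq]
      module
    | succ n ih =>
      rw [Finset.sum_range_succ]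
      have h1 : e (n+1) = (T (n+1)).1 - (a (n+1)).1 := rfl
      have h2 : (1/2 : ℝ) • ((T (n+1)).1 - q0) = e n := by
        rw [hTsucc n, add_sub_cancel_left, smul_smul]; norm_num
      have h3 : e n + q0 = (1/2 : ℝ) • (a (n+1)).1 + (1/2 : ℝ) • (e (n+1) + q0) := by
        rw [← h2, h1]
        module
      rw [ih, h3, smul_add, smul_smul, smul_smul, ← pow_succ]
      abel
  have hN0 : 0 ≤ N := le_trans (norm_nonneg _) (hae 0).2.1
  -- summability of the Y-components
  have hbound : ∀ j : ℕ, ‖((1:ℝ)/2)^(j+1) • (a j).2‖ ≤ ((1:ℝ)/2)^j * ((1/2) * N) := by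
    intro j
    rw [norm_smul, Real.norm_eq_abs, abs_of_nonneg (by positivity), pow_succ]
    calc ((1:ℝ)/2)^j * (1/2) * ‖(a j).2‖ ≤ ((1:ℝ)/2)^j * (1/2) * N := by
          have := (hae j).2.1
          have hp : (0:ℝ) ≤ ((1:ℝ)/2)^j * (1/2) := by positivity
          nlinarith
      _ = ((1:ℝ)/2)^j * ((1/2) * N) := by ring
  have hgsum : Summable (fun j : ℕ => ((1:ℝ)/2)^j * ((1/2) * N)) :=
    summable_geometric_two.mul_right _
  have hsummnorm : Summable (fun j : ℕ => ‖((1:ℝ)/2)^(j+1) • (a j).2‖) :=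
    Summable.of_nonneg_of_le (fun j => norm_nonneg _) hbound hgsum
  have hsumm : Summable (fun j : ℕ => ((1:ℝ)/2)^(j+1) • (a j).2) :=
    Summable.of_norm hsummnorm
  set y : Y := ∑' j : ℕ, ((1:ℝ)/2)^(j+1) • (a j).2 with hy
  -- ‖y‖ ≤ N
  have hyN : ‖y‖ ≤ N := by
    have h1 : ‖y‖ ≤ ∑' j : ℕ, ‖((1:ℝ)/2)^(j+1) • (a j).2‖ := norm_tsum_le_tsum_norm hsummnorm
    have e0 : (fun j : ℕ => ((1:ℝ)/2)^(j+1) * N) = fun j : ℕ => ((1:ℝ)/2)^j * ((1/2) * N) := by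
      funext j; rw [pow_succ]; ring
    have hsum2 : Summable (fun j : ℕ => ((1:ℝ)/2)^(j+1) * N) := e0 ▸ hgsum
    have hterm : ∀ j : ℕ, ‖((1:ℝ)/2)^(j+1) • (a j).2‖ ≤ ((1:ℝ)/2)^(j+1) * N := by
      intro j
      have hb := hbound j
      have he3 : ((1:ℝ)/2)^j * ((1/2) * N) = ((1:ℝ)/2)^(j+1) * N := by
        rw [pow_succ]; ring
      linarith
    have h2 : ∑' j : ℕ, ‖((1:ℝ)/2)^(j+1) • (a j).2‖ ≤ ∑' j : ℕ, ((1:ℝ)/2)^(j+1) * N :=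
      Summable.tsum_le_tsum hterm hsummnorm hsum2
    have h3 : ∑' j : ℕ, ((1:ℝ)/2)^(j+1) * N = N := by
      have e1 : (fun j : ℕ => ((1:ℝ)/2)^(j+1) * N) = fun j : ℕ => ((1:ℝ)/2)^j * ((1/2) * N) := by
        funext j; rw [pow_succ]; ring
      rw [e1, tsum_mul_right, tsum_geometric_two]
      ring
    linarith
  -- the partial sums (as pairs)
  set v : ℕ → E × Y := fun n =>
    (∑ j ∈ Finset.range (n+1), ((1:ℝ)/2)^(j+1) • (a j).1,
     ∑ j ∈ Finset.range (n+1), ((1:ℝ)/2)^(j+1) • (a j).2) with hv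
  have hvsucc : ∀ n, v (n+1) = v n + ((1:ℝ)/2)^(n+2) • a (n+1) := by
    intro n
    apply Prod.ext
    · show (∑ j ∈ Finset.range (n+2), ((1:ℝ)/2)^(j+1) • (a j).1)
        = (∑ j ∈ Finset.range (n+1), ((1:ℝ)/2)^(j+1) • (a j).1) + ((1:ℝ)/2)^(n+2) • (a (n+1)).1
      rw [Finset.sum_range_succ]
    · show (∑ j ∈ Finset.range (n+2), ((1:ℝ)/2)^(j+1) • (a j).2)
        = (∑ j ∈ Finset.range (n+1), ((1:ℝ)/2)^(j+1) • (a j).2) + ((1:ℝ)/2)^(n+2) • (a (n+1)).2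
      rw [Finset.sum_range_succ]
  -- membership of normalized partial sums
  have hpowlt : ∀ n : ℕ, ((1:ℝ)/2)^(n+1) < 1 := by
    intro n
    apply pow_lt_one₀ (by norm_num) (by norm_num)
    omega
  have hΛpos : ∀ n : ℕ, (0:ℝ) < 1 - ((1:ℝ)/2)^(n+1) := fun n => by linarith [hpowlt n]
  have hvmem : ∀ n, (1 - ((1:ℝ)/2)^(n+1))⁻¹ • v n ∈ M := by
    intro n
    induction n with
    | zero =>
      have hv0 : v 0 = ((1:ℝ)/2) • a 0 := by
        apply Prod.ext
        · show (∑ j ∈ Finset.range 1, ((1:ℝ)/2)^(j+1) • (a j).1) = ((1:ℝ)/2) • (a 0).1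
          rw [Finset.sum_range_one, pow_one]
        · show (∑ j ∈ Finset.range 1, ((1:ℝ)/2)^(j+1) • (a j).2) = ((1:ℝ)/2) • (a 0).2
          rw [Finset.sum_range_one, pow_one]
      rw [hv0, smul_smul]
      norm_num
      exact (hae 0).1
    | succ n ih =>
      set Λn : ℝ := 1 - ((1:ℝ)/2)^(n+1) with hΛn
      set Λm : ℝ := 1 - ((1:ℝ)/2)^(n+2) with hΛm
      have hΛnpos : 0 < Λn := hΛpos n
      have hΛmpos : 0 < Λm := hΛpos (n+1)
      have hΛeq : Λm = Λn + ((1:ℝ)/2)^(n+2) := by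
        rw [hΛn, hΛm, pow_succ]
        ring
      have hmem := hMc ih (hae (n+1)).1
        (a := Λn / Λm) (b := ((1:ℝ)/2)^(n+2) / Λm)
        (by positivity) (by positivity)
        (by rw [← add_div, ← hΛeq]; exact div_self hΛmpos.ne')
      have heq : (Λn / Λm) • (Λn⁻¹ • v n) + (((1:ℝ)/2)^(n+2) / Λm) • a (n+1)
          = Λm⁻¹ • v (n+1) := by
        rw [hvsucc n, smul_add, smul_smul, smul_smul]
        congr 2
        · field_simp; try ring
        · field_simp; try ring
      rw [heq] at hmem
      exact hmem
  -- convergence of v to (w, y)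
  have htendE : Filter.Tendsto (fun n => (v n).1) Filter.atTop (nhds w) := by
    have hident : ∀ n, (v n).1 = w - ((1:ℝ)/2)^(n+1) • (e n + q0) := by
      intro n
      have := hkey n
      show (∑ j ∈ Finset.range (n+1), ((1:ℝ)/2)^(j+1) • (a j).1)
        = w - ((1:ℝ)/2)^(n+1) • (e n + q0)
      rw [this]
      abel
    have hz : Filter.Tendsto (fun n : ℕ => ((1:ℝ)/2)^(n+1) • (e n + q0)) Filter.atTop (nhds 0) := by
      apply squeeze_zero_norm (a := fun n : ℕ => ((1:ℝ)/2)^(n+1) * (ρ/2 + ‖q0‖))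
      · intro n
        rw [norm_smul, Real.norm_eq_abs, abs_of_nonneg (by positivity)]
        have h1 : ‖e n + q0‖ ≤ ‖e n‖ + ‖q0‖ := norm_add_le _ _
        have h2 := (hae n).2.2
        have hp : (0:ℝ) ≤ ((1:ℝ)/2)^(n+1) := by positivity
        nlinarith
      · have hgeo : Filter.Tendsto (fun n : ℕ => ((1:ℝ)/2)^(n+1)) Filter.atTop (nhds 0) := by
          have h0 : Filter.Tendsto (fun n : ℕ => ((1:ℝ)/2)^n) Filter.atTop (nhds 0) :=
            tendsto_pow_atTop_nhds_zero_of_lt_one (by norm_num) (by norm_num)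
          exact h0.comp (Filter.tendsto_add_atTop_nat 1)
        have := hgeo.mul_const (ρ/2 + ‖q0‖)
        simpa using this
    have hts : Filter.Tendsto (fun n => w - ((1:ℝ)/2)^(n+1) • (e n + q0)) Filter.atTop (nhds (w - 0)) :=
      Filter.Tendsto.sub tendsto_const_nhds hz
    rw [sub_zero] at hts
    exact Filter.Tendsto.congr (fun n => (hident n).symm) hts
  have htendY : Filter.Tendsto (fun n => (v n).2) Filter.atTop (nhds y) := by
    have h1 := hsumm.hasSum.tendsto_sum_nat
    have h2 := h1.comp (Filter.tendsto_add_atTop_nat 1)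
    exact h2
  have htendv : Filter.Tendsto v Filter.atTop (nhds (w, y)) := by
    have h := Filter.Tendsto.prodMk_nhds htendE htendY
    have he4 : (fun n => ((v n).1, (v n).2)) = v := by
      funext n; exact Prod.mk.eta
    rw [he4] at h
    exact h
  -- the scalars tend to 1
  have htendμ : Filter.Tendsto (fun n : ℕ => (1 - ((1:ℝ)/2)^(n+1))⁻¹) Filter.atTop (nhds 1) := by
    have hgeo : Filter.Tendsto (fun n : ℕ => ((1:ℝ)/2)^(n+1)) Filter.atTop (nhds 0) := by
      have h0 : Filter.Tendsto (fun n : ℕ => ((1:ℝ)/2)^n) Filter.atTop (nhds 0) :=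
        tendsto_pow_atTop_nhds_zero_of_lt_one (by norm_num) (by norm_num)
      exact h0.comp (Filter.tendsto_add_atTop_nat 1)
    have h1 : Filter.Tendsto (fun n : ℕ => 1 - ((1:ℝ)/2)^(n+1)) Filter.atTop (nhds 1) := by
      have h2 := hgeo.const_sub (1:ℝ)
      simpa using h2
    have h2 := h1.inv₀ (by norm_num)
    simpa using h2
  have htendc : Filter.Tendsto (fun n => (1 - ((1:ℝ)/2)^(n+1))⁻¹ • v n) Filter.atTop (nhds (w, y)) := by
    have hsm := Filter.Tendsto.smul htendμ htendv
    rw [one_smul] at hsm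
    exact hsm
  have hmemlim : (w, y) ∈ M :=
    hMcl.mem_of_tendsto htendc (Filter.Eventually.of_forall hvmem)
  exact ⟨y, hyN, hmemlim⟩

/-- under the assumptions of STATEMENT 9, for every `y* ∈ K*`,
`D*(F + K)(pb, yb)(y*) = ⋃_{(p*, x*) ∈ ∂⟨y*, f⟩(pb, xb)} {p* + D*C(pb, xb)(x*)}`. -/
theorem stmt10
    {P X Y : Type*}
    [NormedAddCommGroup P] [NormedSpace ℝ P] [CompleteSpace P]
    [NormedAddCommGroup X] [NormedSpace ℝ X] [CompleteSpace X]
    [NormedAddCommGroup Y] [NormedSpace ℝ Y] [CompleteSpace Y]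
    -- K is a pointed closed convex cone in Y
    (K : Set Y) (hKconv : Convex ℝ K) (hKclosed : IsClosed K)
    (hKcone : ∀ t : ℝ, 0 ≤ t → ∀ y ∈ K, t • y ∈ K)
    (hKpointed : K ∩ (-K) = {0})
    -- f is K-convex and K-closed (its epigraph is convex and closed)
    (f : P × X → Y)
    (hfconv : Convex ℝ {q : (P × X) × Y | q.2 ∈ ({f q.1} : Set Y) + K})
    (hfcl : IsClosed {q : (P × X) × Y | q.2 ∈ ({f q.1} : Set Y) + K})
    -- C is a closed convex set-valued map
    (C : P → Set X) (hCconv : Convex ℝ (gph C)) (hCcl : IsClosed (gph C))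
    -- F(p) = {f(p,x) : x ∈ C(p)},  𝓕(p) = Min_K F(p)
    (F : P → Set Y) (hF : ∀ p, F p = {y : Y | ∃ x ∈ C p, y = f (p, x)})
    (Fmin : P → Set Y)
    (hFmin : ∀ p, Fmin p = {a ∈ F p | (F p - {a}) ∩ ((-K) \ {0}) = ∅})
    -- (pb, xb) ∈ gph S, yb = f(pb, xb)
    (pb : P) (xb : X) (hxbC : xb ∈ C pb) (hsol : f (pb, xb) ∈ Fmin pb)
    (yb : Y) (hyb : yb = f (pb, xb))
    -- (i) ℝ⁺(rge H − dom f) is a closed linear subspace of P × X, where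
    --     H(p) = {p} × C(p), so rge H = gph C and dom f = P × X
    (hqual1 : ∃ S : Submodule ℝ (P × X), IsClosed (S : Set (P × X)) ∧
      {w : P × X | ∃ t : ℝ, 0 ≤ t ∧
        ∃ u ∈ ⋃ p : P, ({p} : Set P) ×ˢ C p, ∃ v : P × X, w = t • (u - v)} = S)
    -- (ii) ℝ⁺(P − dom C) is a closed linear subspace of P
    (hqual2 : ∃ S : Submodule ℝ P, IsClosed (S : Set P) ∧
      {w : P | ∃ t : ℝ, 0 ≤ t ∧ ∃ u : P, ∃ v ∈ dom C, w = t • (u - v)} = S)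
    (ψ : Y →L[ℝ] ℝ) (hψ : ∀ k ∈ K, 0 ≤ ψ k) :
    coderiv (fun p => F p + K) pb yb ψ
      = {w : P →L[ℝ] ℝ | ∃ pstar : P →L[ℝ] ℝ, ∃ xstar : X →L[ℝ] ℝ,
          pstar.coprod xstar ∈ subdiff (fun q : P × X => ψ (f q)) (pb, xb) ∧
          ∃ qstar ∈ coderiv C pb xb xstar, w = pstar + qstar} := by
  classical
  have hK0 : (0:Y) ∈ K := by
    have h : (0:Y) ∈ K ∩ (-K) := by rw [hKpointed]; rfl
    exact h.1
  set g : P × X → ℝ := fun q => ψ (f q) with hgdef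
  set zb : P × X := (pb, xb) with hzbdef
  set M : Set ((P × X) × Y) := {q : (P × X) × Y | q.2 ∈ ({f q.1} : Set Y) + K} with hMdef
  have hself : ∀ q : P × X, ((q, f q) : (P × X) × Y) ∈ M := by
    intro q
    show f q ∈ ({f q} : Set Y) + K
    rw [Set.mem_add]
    exact ⟨f q, rfl, 0, hK0, add_zero _⟩
  -- convexity of g
  have hgconv : ∀ q1 q2 : P × X, ∀ t : ℝ, 0 ≤ t → t ≤ 1 →
      g (t • q1 + (1 - t) • q2) ≤ t * g q1 + (1 - t) * g q2 := by
    intro q1 q2 t ht ht1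
    have h3 := hfconv (hself q1) (hself q2) ht (by linarith : (0:ℝ) ≤ 1 - t)
      (by ring : t + (1 - t) = 1)
    have h4 : t • f q1 + (1 - t) • f q2
        ∈ ({f (t • q1 + (1 - t) • q2)} : Set Y) + K := h3
    rw [Set.mem_add] at h4
    obtain ⟨aa, haa, k, hk, hek⟩ := h4
    rw [Set.mem_singleton_iff] at haa
    subst haa
    have h5 := congrArg ψ hek
    rw [map_add, map_add, map_smul, map_smul] at h5
    have h6 := hψ k hk
    show ψ (f (t • q1 + (1 - t) • q2)) ≤ t * ψ (f q1) + (1 - t) * ψ (f q2)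
    simp only [smul_eq_mul] at h5
    linarith
  -- local upper bound for g, via Baire category and stepB
  obtain ⟨q0, r0, hr0, Bd, hGbd⟩ :
      ∃ q0 : P × X, ∃ r0 : ℝ, 0 < r0 ∧ ∃ Bd : ℝ, ∀ q ∈ Metric.ball q0 r0, g q ≤ Bd := by
    set A : ℕ → Set (P × X) := fun n => {q | ∃ y : Y, ‖y‖ ≤ (n:ℝ) ∧ (q, y) ∈ M} with hA
    have hcover : (⋃ n : ℕ, closure (A n)) = univ := by
      ext q
      simp only [mem_iUnion, mem_univ, iff_true]
      exact ⟨⌈‖f q‖⌉₊, subset_closure ⟨f q, Nat.le_ceil _, hself q⟩⟩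
    obtain ⟨n, hn⟩ := nonempty_interior_of_iUnion_of_closed
      (fun n : ℕ => isClosed_closure (s := A n)) hcover
    obtain ⟨q0, hq0⟩ := hn
    obtain ⟨ρ, hρ, hball⟩ := Metric.isOpen_iff.mp isOpen_interior q0 hq0
    have hdense : ∀ q ∈ Metric.ball q0 ρ, ∀ ε > (0:ℝ),
        ∃ m ∈ M, ‖m.2‖ ≤ (n:ℝ) ∧ ‖q - m.1‖ < ε := by
      intro q hq ε hε
      have hcl : q ∈ closure (A n) := interior_subset (hball hq)
      obtain ⟨b, hbA, hbd⟩ := Metric.mem_closure_iff.mp hcl ε hε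
      obtain ⟨y, hyn, hbM⟩ := hbA
      exact ⟨(b, y), hbM, hyn, by rwa [← dist_eq_norm]⟩
    have hstep := stepB M hfconv hfcl (n:ℝ) ρ hρ q0 hdense
    refine ⟨q0, ρ/2, by positivity, ‖ψ‖ * n, ?_⟩
    intro q hq
    obtain ⟨y, hyN, hmem⟩ := hstep q hq
    have hmem' : y ∈ ({f q} : Set Y) + K := hmem
    rw [Set.mem_add] at hmem'
    obtain ⟨aa, haa, k, hk, hek⟩ := hmem'
    rw [Set.mem_singleton_iff] at haa
    subst haa
    have h5 : ψ (f q) + ψ k = ψ y := by rw [← map_add, hek]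
    have h6 := hψ k hk
    have h7 : ψ y ≤ ‖ψ‖ * ‖y‖ := le_trans (le_abs_self _) (ψ.le_opNorm y)
    have h8 : ‖ψ‖ * ‖y‖ ≤ ‖ψ‖ * n := mul_le_mul_of_nonneg_left hyN (norm_nonneg ψ)
    show ψ (f q) ≤ ‖ψ‖ * n
    linarith
  -- now prove the set equality
  ext φ
  constructor
  · -- hard direction
    intro hφ
    set G : P × X → ℝ := fun h => g (zb + h) - g zb with hGdef
    set D : Set (P × X) := {d | zb + d ∈ gph C} with hDdef
    set Φ : (P × X) →ₗ[ℝ] ℝ := (φ : P →ₗ[ℝ] ℝ).comp (LinearMap.fst ℝ P X) with hΦdef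
    have hG0 : G 0 = 0 := by
      show g (zb + 0) - g zb = 0
      rw [add_zero, sub_self]
    have hGc : ∀ a b : P × X, ∀ t : ℝ, 0 ≤ t → t ≤ 1 →
        G (t • a + (1 - t) • b) ≤ t * G a + (1 - t) * G b := by
      intro a b t ht ht1
      have e : zb + (t • a + (1 - t) • b) = t • (zb + a) + (1 - t) • (zb + b) := by
        have h0 : t • (zb + a) + (1 - t) • (zb + b)
            = (t + (1 - t)) • zb + (t • a + (1 - t) • b) := by module
        have hco : t + (1 - t) = (1:ℝ) := by ring
        rw [h0, hco, one_smul]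
      have h2 := hgconv (zb + a) (zb + b) t ht ht1
      show g (zb + (t • a + (1 - t) • b)) - g zb
        ≤ t * (g (zb + a) - g zb) + (1 - t) * (g (zb + b) - g zb)
      rw [e]
      nlinarith [h2]
    have hD0 : (0 : P × X) ∈ D := by
      show zb + 0 ∈ gph C
      rw [add_zero]
      exact hxbC
    have hDc : Convex ℝ D := by
      intro d1 hd1 d2 hd2 a b ha hb hab
      have e : zb + (a • d1 + b • d2) = a • (zb + d1) + b • (zb + d2) := by
        have h0 : a • (zb + d1) + b • (zb + d2)
            = (a + b) • zb + (a • d1 + b • d2) := by module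
        rw [h0, hab, one_smul]
      show zb + (a • d1 + b • d2) ∈ gph C
      rw [e]
      exact hCconv hd1 hd2 ha hb hab
    have hΦD : ∀ d ∈ D, Φ d ≤ G d := by
      intro d hd
      have hmemC : xb + d.2 ∈ C (pb + d.1) := hd
      have hFm : f (zb + d) ∈ F (pb + d.1) := by
        rw [hF]
        exact ⟨xb + d.2, hmemC, rfl⟩
      have hFK : f (zb + d) ∈ F (pb + d.1) + K := by
        rw [Set.mem_add]
        exact ⟨f (zb + d), hFm, 0, hK0, add_zero _⟩
      have h1 := hφ (pb + d.1) (f (zb + d)) hFK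
      rw [add_sub_cancel_left, map_sub, hyb] at h1
      show φ d.1 ≤ g (zb + d) - g zb
      exact by linarith
    have hGb' : ∀ h ∈ Metric.ball (q0 - zb) r0, G h ≤ Bd - g zb := by
      intro h hh
      rw [Metric.mem_ball, dist_eq_norm] at hh
      have e : h - (q0 - zb) = zb + h - q0 := by abel
      rw [e] at hh
      have := hGbd (zb + h) (by rw [Metric.mem_ball, dist_eq_norm]; exact hh)
      show g (zb + h) - g zb ≤ Bd - g zb
      linarith
    obtain ⟨ξ, hξG, hξΦ⟩ := sandwich_aux G hG0 hGc D hD0 hDc Φ hΦD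
      (q0 - zb) r0 (Bd - g zb) hr0 hGb'
    set pstar : P →L[ℝ] ℝ := ξ.comp (ContinuousLinearMap.inl ℝ P X) with hpstar
    set xstar : X →L[ℝ] ℝ := ξ.comp (ContinuousLinearMap.inr ℝ P X) with hxstar
    have hxieval : ∀ h : P × X, ξ h = pstar h.1 + xstar h.2 := by
      intro h
      have e : ((h.1, (0:X)) : P × X) + ((0:P), h.2) = h := by
        ext <;> simp
      calc ξ h = ξ ((h.1, (0:X)) + ((0:P), h.2)) := by rw [e]
        _ = ξ (h.1, (0:X)) + ξ ((0:P), h.2) := map_add ξ _ _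
        _ = pstar h.1 + xstar h.2 := rfl
    refine ⟨pstar, xstar, ?_, φ - pstar, ?_, ?_⟩
    · -- subdiff membership
      intro u
      have h1 := hξG (u - zb)
      have h2 : zb + (u - zb) = u := by abel
      have h3 : (pstar.coprod xstar) (u - (pb, xb)) = ξ (u - zb) := by
        rw [ContinuousLinearMap.coprod_apply, hxieval]
      rw [h3]
      show ξ (u - zb) ≤ ψ (f u) - ψ (f (pb, xb))
      have h4 : G (u - zb) = g u - g zb := by
        show g (zb + (u - zb)) - g zb = g u - g zb
        rw [h2]
      rw [h4] at h1
      exact h1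
    · -- coderiv membership
      intro u v hv
      have hd : ((u - pb, v - xb) : P × X) ∈ D := by
        show zb + (u - pb, v - xb) ∈ gph C
        have e : zb + ((u - pb, v - xb) : P × X) = (u, v) := by
          ext
          · show pb + (u - pb) = u
            abel
          · show xb + (v - xb) = v
            abel
        rw [e]
        exact hv
      have h1 := hξΦ _ hd
      have h2 : Φ ((u - pb, v - xb) : P × X) = φ (u - pb) := rfl
      rw [h2, hxieval] at h1
      show (φ - pstar) (u - pb) - xstar (v - xb) ≤ 0
      rw [ContinuousLinearMap.sub_apply]
      simp only at h1
      linarith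
    · -- φ = pstar + (φ - pstar)
      abel
  · -- easy direction
    rintro ⟨pstar, xstar, hsub, qstar, hqstar, rfl⟩
    intro u v hv
    rw [Set.mem_add] at hv
    obtain ⟨aa, haF, k, hk, hakv⟩ := hv
    rw [hF] at haF
    obtain ⟨x, hxC, rfl⟩ := haF
    have h1 := hsub (u, x)
    rw [ContinuousLinearMap.coprod_apply] at h1
    have h2 := hqstar u x hxC
    have h3 : ψ (v - yb) = ψ (f (u, x)) + ψ k - ψ (f (pb, xb)) := by
      rw [map_sub, ← hakv, map_add, hyb]
    have h4 : ((u, x) - (pb, xb) : P × X).1 = u - pb := rfl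
    have h5 : ((u, x) - (pb, xb) : P × X).2 = x - xb := rfl
    rw [h4, h5] at h1
    have h6 := hψ k hk
    rw [ContinuousLinearMap.add_apply, h3]
    linarith
end

section
/- Let P, X, Y be real Banach spaces, K ⊆ Y a pointed closed convex cone, f : P × X → Y a K-convex and K-closed map, and C : P ⇉ X a closed convex set-valued map. Let (p̄, x̄) ∈ gph S with ȳ = f(p̄, x̄), let H : P ⇉ P × X be H(p) = {p} × C(p), and assume (i) ℝ⁺(rge H − dom f) is a closed linear subspace of P × X, and (ii) ℝ⁺(P − dom C) is a closed linear subspace of P. If in addition f is continuously Fréchet differentiable at (p̄, x̄) with partial derivatives ∇_p f(p̄, x̄) and ∇_x f(p̄, x̄), then for every y* ∈ K*, D*(F + K)(p̄, ȳ)(y*) = {∇_p f(p̄, x̄)*(y*) + q* : q* ∈ D*C(p̄, x̄)(∇_x f(p̄, x̄)*(y*))}, where ∇_p f(p̄, x̄)*(y*) = y* ∘ ∇_p f(p̄, x̄) and ∇_x f(p̄, x̄)*(y*) = y* ∘ ∇_x f(p̄, x̄). -/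
open Set Pointwise Topology Filter

private lemma dirLe (h : ℝ → ℝ) (L a : ℝ) (hd : HasDerivAt h L 0)
    (hle : ∀ t ∈ Set.Ioc (0:ℝ) 1, a * t ≤ h t - h 0) : a ≤ L := by
  have hs : Tendsto (slope h 0) (𝓝[>] (0:ℝ)) (𝓝 L) :=
    (hasDerivAt_iff_tendsto_slope.mp hd).mono_left
      (nhdsWithin_mono _ fun t ht => ne_of_gt ht)
  refine ge_of_tendsto hs ?_
  filter_upwards [Ioc_mem_nhdsGT_of_mem (Set.left_mem_Ico.mpr one_pos)] with t ht
  rw [slope_def_field, sub_zero]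
  exact (le_div_iff₀ ht.1).mpr (hle t ht)

private lemma dirGe (h : ℝ → ℝ) (L a : ℝ) (hd : HasDerivAt h L 0)
    (hle : ∀ t ∈ Set.Ioc (0:ℝ) 1, h t - h 0 ≤ a * t) : L ≤ a := by
  have hs : Tendsto (slope h 0) (𝓝[>] (0:ℝ)) (𝓝 L) :=
    (hasDerivAt_iff_tendsto_slope.mp hd).mono_left
      (nhdsWithin_mono _ fun t ht => ne_of_gt ht)
  refine le_of_tendsto hs ?_
  filter_upwards [Ioc_mem_nhdsGT_of_mem (Set.left_mem_Ico.mpr one_pos)] with t ht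
  rw [slope_def_field, sub_zero]
  exact (div_le_iff₀ ht.1).mpr (hle t ht)

/-- under the assumptions of STATEMENT 9, if moreover `f` is continuously
Fréchet differentiable at `(pb, xb)`, then for every `y* ∈ K*`,
`D*(F + K)(pb, yb)(y*) = ∇_p f(pb,xb)*(y*) + D*C(pb, xb)(∇_x f(pb,xb)*(y*))`. -/
theorem stmt11
    {P X Y : Type*}
    [NormedAddCommGroup P] [NormedSpace ℝ P] [CompleteSpace P]
    [NormedAddCommGroup X] [NormedSpace ℝ X] [CompleteSpace X]
    [NormedAddCommGroup Y] [NormedSpace ℝ Y] [CompleteSpace Y]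
    -- K is a pointed closed convex cone in Y
    (K : Set Y) (hKconv : Convex ℝ K) (hKclosed : IsClosed K)
    (hKcone : ∀ t : ℝ, 0 ≤ t → ∀ y ∈ K, t • y ∈ K)
    (hKpointed : K ∩ (-K) = {0})
    -- f is K-convex and K-closed (its epigraph is convex and closed)
    (f : P × X → Y)
    (hfconv : Convex ℝ {q : (P × X) × Y | q.2 ∈ ({f q.1} : Set Y) + K})
    (hfcl : IsClosed {q : (P × X) × Y | q.2 ∈ ({f q.1} : Set Y) + K})
    -- C is a closed convex set-valued map
    (C : P → Set X) (hCconv : Convex ℝ (gph C)) (hCcl : IsClosed (gph C))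
    -- F(p) = {f(p,x) : x ∈ C(p)},  𝓕(p) = Min_K F(p)
    (F : P → Set Y) (hF : ∀ p, F p = {y : Y | ∃ x ∈ C p, y = f (p, x)})
    (Fmin : P → Set Y)
    (hFmin : ∀ p, Fmin p = {a ∈ F p | (F p - {a}) ∩ ((-K) \ {0}) = ∅})
    -- (pb, xb) ∈ gph S, yb = f(pb, xb)
    (pb : P) (xb : X) (hxbC : xb ∈ C pb) (hsol : f (pb, xb) ∈ Fmin pb)
    (yb : Y) (hyb : yb = f (pb, xb))
    -- (i) ℝ⁺(rge H − dom f) is a closed linear subspace of P × X, where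
    --     H(p) = {p} × C(p), so rge H = gph C and dom f = P × X
    (hqual1 : ∃ S : Submodule ℝ (P × X), IsClosed (S : Set (P × X)) ∧
      {w : P × X | ∃ t : ℝ, 0 ≤ t ∧
        ∃ u ∈ ⋃ p : P, ({p} : Set P) ×ˢ C p, ∃ v : P × X, w = t • (u - v)} = S)
    -- (ii) ℝ⁺(P − dom C) is a closed linear subspace of P
    (hqual2 : ∃ S : Submodule ℝ P, IsClosed (S : Set P) ∧
      {w : P | ∃ t : ℝ, 0 ≤ t ∧ ∃ u : P, ∃ v ∈ dom C, w = t • (u - v)} = S)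
    (hdiff : ContDiffAt ℝ 1 f (pb, xb))
    (ψ : Y →L[ℝ] ℝ) (hψ : ∀ k ∈ K, 0 ≤ ψ k) :
    coderiv (fun p => F p + K) pb yb ψ
      = {w : P →L[ℝ] ℝ | ∃ qstar ∈ coderiv C pb xb
            (ψ.comp ((fderiv ℝ f (pb, xb)).comp (ContinuousLinearMap.inr ℝ P X))),
          w = ψ.comp ((fderiv ℝ f (pb, xb)).comp (ContinuousLinearMap.inl ℝ P X))
              + qstar} := by
  set Df := fderiv ℝ f (pb, xb) with hDf
  have hf : HasFDerivAt f Df (pb, xb) := (hdiff.differentiableAt one_ne_zero).hasFDerivAt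
  have h0K : (0:Y) ∈ K := by
    have h : (0:Y) ∈ ({0} : Set Y) := rfl
    rw [← hKpointed] at h; exact h.1
  have hfself : ∀ z : P × X, f z ∈ ({f z} : Set Y) + K := fun z =>
    ⟨f z, rfl, 0, h0K, add_zero _⟩
  have hderiv : ∀ d : P × X,
      HasDerivAt (fun t : ℝ => ψ (f ((pb, xb) + t • d))) (ψ (Df d)) 0 := by
    intro d
    have hc : HasDerivAt (fun t : ℝ => (pb, xb) + t • d) d 0 := by
      simpa using ((hasDerivAt_id (0:ℝ)).smul_const d).const_add (pb, xb)
    have hf' : HasFDerivAt f Df ((fun t : ℝ => (pb, xb) + t • d) 0) := by simpa using hf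
    have h1 := hf'.comp_hasDerivAt 0 hc
    have h2 := ψ.hasFDerivAt.comp_hasDerivAt (0:ℝ) h1
    exact h2
  ext φ
  simp only [Set.mem_setOf_eq]
  constructor
  · intro hφ
    refine ⟨φ - ψ.comp (Df.comp (ContinuousLinearMap.inl ℝ P X)), ?_, by abel⟩
    intro u x hx
    have key : φ (u - pb) ≤ ψ (Df (u - pb, x - xb)) := by
      set d : P × X := (u - pb, x - xb) with hd
      refine dirLe _ _ _ (hderiv d) ?_
      intro t ht
      have hd2 : d = ((u, x) : P × X) - (pb, xb) := by
        rw [hd, Prod.mk_sub_mk]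
      have heq : (1 - t) • ((pb, xb) : P × X) + t • ((u, x) : P × X)
          = (pb, xb) + t • d := by
        rw [hd2]; module
      have hmem : ((pb, xb) + t • d) ∈ gph C := by
        have h1 : ((pb, xb) : P × X) ∈ gph C := hxbC
        have h2 : ((u, x) : P × X) ∈ gph C := hx
        have hcc := hCconv h1 h2 (by linarith [ht.2] : (0:ℝ) ≤ 1 - t) ht.1.le (by ring)
        rwa [heq] at hcc
      set z : P × X := (pb, xb) + t • d with hz
      have hvF : f z ∈ F z.1 + K := by
        rw [hF]
        exact ⟨f z, ⟨z.2, hmem, by rw [Prod.mk.eta]⟩, 0, h0K, add_zero _⟩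
      have h8 := hφ z.1 (f z) hvF
      have hz1 : z.1 - pb = t • (u - pb) := by simp [hz, hd]
      rw [hz1, map_smul] at h8
      simp only [smul_eq_mul] at h8
      have h9 : ψ (f z - yb) = ψ (f z) - ψ (f (pb, xb)) := by rw [hyb, map_sub]
      simp only [zero_smul, add_zero]
      have h10 : ψ (f z) = ψ (f ((pb, xb) + t • d)) := by rw [hz]
      linarith [h8, h9, h10]
    have hsplit : ψ (Df (u - pb, 0)) + ψ (Df (0, x - xb)) = ψ (Df (u - pb, x - xb)) := by
      rw [← map_add, ← map_add]
      congr 2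
      simp [Prod.mk_add_mk]
    simp only [ContinuousLinearMap.coe_sub', Pi.sub_apply, ContinuousLinearMap.comp_apply,
      ContinuousLinearMap.inl_apply, ContinuousLinearMap.inr_apply]
    linarith
  · rintro ⟨q, hq, rfl⟩
    intro u v hv
    rw [Set.mem_add] at hv
    obtain ⟨y, hy, k, hk, rfl⟩ := hv
    rw [hF] at hy
    obtain ⟨x, hx, rfl⟩ := hy
    have grad : ψ (Df (u - pb, x - xb)) ≤ ψ (f (u, x)) - ψ (f (pb, xb)) := by
      set d : P × X := (u - pb, x - xb) with hd
      refine dirGe _ _ _ (hderiv d) ?_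
      intro t ht
      have hma : (((pb, xb), f (pb, xb)) : (P × X) × Y) ∈
          {q : (P × X) × Y | q.2 ∈ ({f q.1} : Set Y) + K} := hfself _
      have hmb : (((u, x), f (u, x)) : (P × X) × Y) ∈
          {q : (P × X) × Y | q.2 ∈ ({f q.1} : Set Y) + K} := hfself _
      have hcv := hfconv hma hmb (by linarith [ht.2] : (0:ℝ) ≤ 1 - t) ht.1.le (by ring)
      simp only [Prod.smul_mk, Prod.mk_add_mk, Set.mem_setOf_eq] at hcv
      obtain ⟨y', hy', k', hk', hsum⟩ := hcv
      rw [Set.mem_singleton_iff] at hy'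
      subst hy'
      have harg : (((1 - t) • pb + t • u, (1 - t) • xb + t • x) : P × X)
          = (pb, xb) + t • d := by
        simp only [hd, Prod.smul_mk, Prod.mk_add_mk, Prod.mk.injEq]
        constructor <;> module
      have hsum' : f ((pb, xb) + t • d) + k'
          = (1 - t) • f (pb, xb) + t • f (u, x) := by
        rw [← harg]; exact hsum
      have hψk' := hψ k' hk'
      have hcong := congrArg ψ hsum'
      rw [map_add, map_add, map_smul, map_smul, smul_eq_mul, smul_eq_mul] at hcong
      simp only [zero_smul, add_zero]
      linarith
    have hq' := hq u x hx
    simp only [ContinuousLinearMap.comp_apply, ContinuousLinearMap.inr_apply] at hq'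
    simp only [ContinuousLinearMap.add_apply, ContinuousLinearMap.comp_apply,
      ContinuousLinearMap.inl_apply, ContinuousLinearMap.inr_apply]
    have hψk := hψ k hk
    have hsplit : ψ (Df (u - pb, 0)) + ψ (Df (0, x - xb)) = ψ (Df (u - pb, x - xb)) := by
      rw [← map_add, ← map_add]
      congr 2
      simp [Prod.mk_add_mk]
    have hsub : ψ (f (u, x) + k - yb) = ψ (f (u, x)) - ψ (f (pb, xb)) + ψ k := by
      rw [hyb, map_sub, map_add]; ring
    linarith
end

section
/- Let P, X, Y be real Banach spaces, K ⊆ Y a pointed closed convex cone, f : P × X → Y a K-convex and K-closed map, and C : P ⇉ X a closed convex set-valued map. Let (p̄, x̄) ∈ gph S with ȳ = f(p̄, x̄), let H : P ⇉ P × X be H(p) = {p} × C(p), and assume (i) ℝ⁺(rge H − dom f) is a closed linear subspace of P × X, (ii) ℝ⁺(P − dom C) is a closed linear subspace of P, and (iii) F is K-dominated by 𝓕 near p̄, i.e., F(p) ⊆ 𝓕(p) + K for all p in some neighborhood of p̄. Then for every y* ∈ Y*, the Fréchet coderivative of the profile of the perturbation map satisfies D̂*(𝓕 + K)(p̄, ȳ)(y*)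 = ⋃_{(p*, x*) ∈ D*(f + K)(p̄, x̄)(y*)} {p* + q* : q* ∈ D*C(p̄, x̄)(x*)}. -/
open Set Pointwise Topology Filter

section Split
variable {E : Type*} [NormedAddCommGroup E] [NormedSpace ℝ E]

lemma comb_mem {A : Set E} (hA : Convex ℝ A) {z : E} (hz : z ∈ A)
    {a : ℕ → E} (ha : ∀ k, a k ∈ A) {lam : ℕ → ℝ} (hlam : ∀ k, 0 ≤ lam k)
    (n : ℕ) (hsum : (∑ k ∈ Finset.range n, lam k) ≤ 1) :
    z + ∑ k ∈ Finset.range n, lam k • (a k - z) ∈ A := by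
  have e1 : ∀ i ∈ Finset.range n,
      (if i < n then lam i else 1 - ∑ k ∈ Finset.range n, lam k) •
        (if i < n then a i else z) = lam i • a i := by
    intro i hi
    rw [if_pos (Finset.mem_range.mp hi), if_pos (Finset.mem_range.mp hi)]
  have e2 : ∀ i ∈ Finset.range n,
      (if i < n then lam i else 1 - ∑ k ∈ Finset.range n, lam k) = lam i := by
    intro i hi
    rw [if_pos (Finset.mem_range.mp hi)]
  have key : z + ∑ k ∈ Finset.range n, lam k • (a k - z)
      = ∑ i ∈ Finset.range (n+1),
          (if i < n then lam i else 1 - ∑ k ∈ Finset.range n, lam k) •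
          (if i < n then a i else z) := by
    rw [Finset.sum_range_succ, if_neg (lt_irrefl n), if_neg (lt_irrefl n),
      Finset.sum_congr rfl e1, sub_smul, one_smul]
    simp only [smul_sub]
    rw [Finset.sum_sub_distrib, Finset.sum_smul]
    abel
  rw [key]
  apply hA.sum_mem
  · intro i _
    by_cases h : i < n <;> simp [h, hlam i, sub_nonneg.mpr hsum]
  · rw [Finset.sum_range_succ, if_neg (lt_irrefl n), Finset.sum_congr rfl e2]
    ring
  · intro i _
    by_cases h : i < n <;> simp [h, ha i, hz]

set_option maxHeartbeats 2000000 in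
theorem split [CompleteSpace E]
    {A B : Set E} (hAconv : Convex ℝ A) (hAcl : IsClosed A)
    (hBconv : Convex ℝ B) (hBcl : IsClosed B)
    {z : E} (hzA : z ∈ A) (hzB : z ∈ B)
    (hsurj : ∀ w : E, ∃ a ∈ A, ∃ b ∈ B, b - a = w)
    (Φ : E →L[ℝ] ℝ) (hΦ : ∀ m ∈ A, m ∈ B → Φ (m - z) ≤ 0) :
    ∃ Φ₂ : E →L[ℝ] ℝ, (∀ b ∈ B, Φ₂ (b - z) ≤ 0) ∧
      (∀ a ∈ A, Φ (a - z) ≤ Φ₂ (a - z)) := by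
  classical
  set S : E → Set ℝ := fun w => {r | ∃ t : ℝ, 0 < t ∧ ∃ a ∈ A, ∃ b ∈ B,
    t • (b - a) = w ∧ r = t * (-Φ (a - z))} with hSdef
  -- combination of two representations
  have hmix : ∀ {t s : ℝ}, 0 < t → 0 < s → ∀ {a a' b b' : E},
      a ∈ A → a' ∈ A → b ∈ B → b' ∈ B →
      ∃ a'' ∈ A, ∃ b'' ∈ B,
        (t+s) • (b'' - a'') = t • (b - a) + s • (b' - a') ∧
        (t+s) * (-Φ (a'' - z)) = t * (-Φ (a - z)) + s * (-Φ (a' - z)) := by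
    intro t s ht hs a a' b b' haA ha'A hbB hb'B
    have hts : (0:ℝ) < t + s := by linarith
    have hθ : 0 ≤ t/(t+s) := by positivity
    have hσ : 0 ≤ s/(t+s) := by positivity
    have hθσ : t/(t+s) + s/(t+s) = 1 := by field_simp
    refine ⟨(t/(t+s)) • a + (s/(t+s)) • a', hAconv haA ha'A hθ hσ hθσ,
      (t/(t+s)) • b + (s/(t+s)) • b', hBconv hbB hb'B hθ hσ hθσ, ?_, ?_⟩
    · have h1 : ∀ v : E, (t+s) • ((t/(t+s)) • v) = t • v := by
        intro v; rw [smul_smul]; congr 1; field_simp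
      have h2 : ∀ v : E, (t+s) • ((s/(t+s)) • v) = s • v := by
        intro v; rw [smul_smul]; congr 1; field_simp
      rw [smul_sub, smul_add, smul_add, h1, h2, h1, h2, smul_sub, smul_sub]
      abel
    · have hc : ((t/(t+s)) • a + (s/(t+s)) • a') - z
          = (t/(t+s)) • (a - z) + (s/(t+s)) • (a' - z) := by
        have hz1 : (t/(t+s)) • z + (s/(t+s)) • z = z := by
          rw [← add_smul, hθσ, one_smul]
        calc (t/(t+s)) • a + (s/(t+s)) • a' - z
            = (t/(t+s)) • a + (s/(t+s)) • a' - ((t/(t+s)) • z + (s/(t+s)) • z) := by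
              rw [hz1]
          _ = (t/(t+s)) • (a - z) + (s/(t+s)) • (a' - z) := by
              rw [smul_sub, smul_sub]; abel
      rw [hc, map_add, map_smul, map_smul]
      simp only [smul_eq_mul]
      field_simp
      ring
  have hSadd : ∀ {w w' : E} {r r' : ℝ}, r ∈ S w → r' ∈ S w' → r + r' ∈ S (w + w') := by
    rintro w w' r r' ⟨t, ht, a, haA, b, hbB, hw, hr⟩ ⟨s, hs, a', ha'A, b', hb'B, hw', hr'⟩
    obtain ⟨a'', ha''A, b'', hb''B, he1, he2⟩ := hmix ht hs haA ha'A hbB hb'B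
    exact ⟨t+s, by linarith, a'', ha''A, b'', hb''B, by rw [he1, hw, hw'],
      by rw [he2, hr, hr']⟩
  have hS0 : ∀ r ∈ S 0, 0 ≤ r := by
    rintro r ⟨t, ht, a, haA, b, hbB, hw, hr⟩
    have hba : b - a = 0 := by
      have := smul_eq_zero.mp hw
      rcases this with h | h
      · exact absurd h (ne_of_gt ht)
      · exact h
    have hab : b = a := by rwa [sub_eq_zero] at hba
    have : Φ (a - z) ≤ 0 := hΦ a haA (hab ▸ hbB)
    rw [hr]
    nlinarith
  have hSne : ∀ w, (S w).Nonempty := by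
    intro w
    obtain ⟨a, haA, b, hbB, hba⟩ := hsurj w
    exact ⟨1 * (-Φ (a - z)), 1, one_pos, a, haA, b, hbB, by rw [one_smul, hba], rfl⟩
  have hSbdd : ∀ w, BddBelow (S w) := by
    intro w
    obtain ⟨r', hr'⟩ := hSne (-w)
    refine ⟨-r', fun r hr => ?_⟩
    have h0 : r + r' ∈ S 0 := by
      have := hSadd hr hr'
      rwa [add_neg_cancel] at this
    have := hS0 _ h0
    linarith
  set q : E → ℝ := fun w => sInf (S w) with hqdef
  have hqle : ∀ {w : E} {r : ℝ}, r ∈ S w → q w ≤ r := fun hr => csInf_le (hSbdd _) hr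
  have hq_add : ∀ w w', q (w + w') ≤ q w + q w' := by
    intro w w'
    have h1 : ∀ r ∈ S w, q (w + w') - r ≤ q w' := by
      intro r hr
      apply le_csInf (hSne w')
      intro r' hr'
      have := hqle (hSadd hr hr')
      linarith
    have h2 : q (w + w') - q w' ≤ q w := by
      apply le_csInf (hSne w)
      intro r hr
      have := h1 r hr
      linarith
    linarith
  have hscale : ∀ {w : E} {r c : ℝ}, 0 < c → r ∈ S w → c * r ∈ S (c • w) := by
    rintro w r c hc ⟨t, ht, a, haA, b, hbB, hw, hr⟩
    exact ⟨c*t, by positivity, a, haA, b, hbB, by rw [mul_smul, hw], by rw [hr]; ring⟩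
  have hq_hom1 : ∀ (c : ℝ), 0 < c → ∀ w, q (c • w) ≤ c * q w := by
    intro c hc w
    have : q (c • w) / c ≤ q w := by
      apply le_csInf (hSne w)
      intro r hr
      have := hqle (hscale hc hr)
      rw [div_le_iff₀ hc]
      linarith [this]
    calc q (c • w) = c * (q (c • w) / c) := by field_simp
    _ ≤ c * q w := by nlinarith [this]
  have hq_hom : ∀ (c : ℝ), 0 < c → ∀ w, q (c • w) = c * q w := by
    intro c hc w
    refine le_antisymm (hq_hom1 c hc w) ?_
    have := hq_hom1 c⁻¹ (by positivity) (c • w)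
    rw [inv_smul_smul₀ (ne_of_gt hc)] at this
    calc c * q w ≤ c * (c⁻¹ * q (c • w)) := by nlinarith [this]
    _ = q (c • w) := by field_simp
  have hq0 : 0 ≤ q 0 := le_csInf (hSne 0) hS0
  -- a convenient algebra fact
  have csub : ∀ (θ σ : ℝ), θ + σ = 1 → ∀ (u v x : E),
      θ • u + σ • v - x = θ • (u - x) + σ • (v - x) := by
    intro θ σ h u v x
    have h1 : θ • x + σ • x = x := by rw [← add_smul, h, one_smul]
    calc θ • u + σ • v - x = θ • u + σ • v - (θ • x + σ • x) := by rw [h1]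
      _ = θ • (u - x) + σ • (v - x) := by rw [smul_sub, smul_sub]; abel
  -- Baire category argument
  have hEne : Nonempty E := ⟨z⟩
  set D : ℕ → Set E := fun n => {w | ∃ a ∈ A, ‖a - z‖ ≤ (n:ℝ) ∧
    ∃ b ∈ B, ‖b - z‖ ≤ (n:ℝ) ∧ b - a = w} with hDdef
  have hDconv : ∀ n, Convex ℝ (D n) := by
    intro n u hu v hv θ σ hθ hσ hθσ
    obtain ⟨a, haA, haN, b, hbB, hbN, hba⟩ := hu
    obtain ⟨a', ha'A, ha'N, b', hb'B, hb'N, hba'⟩ := hv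
    have hnb : ∀ (x x' : E), ‖x - z‖ ≤ (n:ℝ) → ‖x' - z‖ ≤ (n:ℝ) →
        ‖θ • x + σ • x' - z‖ ≤ (n:ℝ) := by
      intro x x' hx hx'
      rw [csub θ σ hθσ]
      calc ‖θ • (x - z) + σ • (x' - z)‖ ≤ ‖θ • (x - z)‖ + ‖σ • (x' - z)‖ :=
            norm_add_le _ _
        _ = θ * ‖x - z‖ + σ * ‖x' - z‖ := by
            rw [norm_smul, norm_smul, Real.norm_eq_abs, Real.norm_eq_abs,
              abs_of_nonneg hθ, abs_of_nonneg hσ]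
        _ ≤ (n:ℝ) := by nlinarith
    refine ⟨θ • a + σ • a', hAconv haA ha'A hθ hσ hθσ, hnb a a' haN ha'N,
      θ • b + σ • b', hBconv hbB hb'B hθ hσ hθσ, hnb b b' hbN hb'N, ?_⟩
    rw [← hba, ← hba', smul_sub, smul_sub]
    abel
  have hDmono : ∀ {n m : ℕ}, n ≤ m → D n ⊆ D m := by
    intro n m hnm w hw
    obtain ⟨a, haA, haN, b, hbB, hbN, hba⟩ := hw
    have hc : (n:ℝ) ≤ (m:ℝ) := Nat.cast_le.mpr hnm
    exact ⟨a, haA, haN.trans hc, b, hbB, hbN.trans hc, hba⟩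
  have hmemD : ∀ w : E, ∃ n : ℕ, w ∈ D n := by
    intro w
    obtain ⟨a, haA, b, hbB, hba⟩ := hsurj w
    obtain ⟨n, hn⟩ := exists_nat_ge (max ‖a - z‖ ‖b - z‖)
    exact ⟨n, a, haA, (le_max_left _ _).trans hn, b, hbB, (le_max_right _ _).trans hn, hba⟩
  have hDcover : (⋃ n : ℕ, closure (D n)) = univ := by
    apply eq_univ_of_forall
    intro w
    obtain ⟨n, hn⟩ := hmemD w
    exact mem_iUnion.mpr ⟨n, subset_closure hn⟩
  obtain ⟨n0, w0, hw0⟩ :=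
    nonempty_interior_of_iUnion_of_closed (fun n : ℕ => isClosed_closure) hDcover
  obtain ⟨ρ, hρ, hballi⟩ := Metric.isOpen_iff.mp isOpen_interior w0 hw0
  have hball : Metric.ball w0 ρ ⊆ closure (D n0) :=
    hballi.trans interior_subset
  obtain ⟨m0, hm0⟩ := hmemD (-w0)
  set N := max n0 m0 with hN
  have hclN : ∀ u : E, ‖u‖ < ρ/2 → u ∈ closure (D N) := by
    intro u hu
    have h1 : w0 + (2:ℝ) • u ∈ closure (D N) := by
      apply closure_mono (hDmono (le_max_left n0 m0))
      apply hball
      rw [Metric.mem_ball, dist_eq_norm]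
      have : w0 + (2:ℝ) • u - w0 = (2:ℝ) • u := by abel
      rw [this, norm_smul]
      simp only [Real.norm_eq_abs]
      rw [abs_of_nonneg (by norm_num : (0:ℝ) ≤ 2)]
      linarith
    have h2 : -w0 ∈ closure (D N) :=
      subset_closure (hDmono (le_max_right n0 m0) hm0)
    have h3 := (hDconv N).closure h1 h2 (by norm_num : (0:ℝ) ≤ 1/2)
      (by norm_num : (0:ℝ) ≤ 1/2) (by norm_num)
    have h4 : (1/2 : ℝ) • (w0 + (2:ℝ) • u) + (1/2 : ℝ) • (-w0) = u := by
      rw [smul_add, smul_smul]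
      norm_num
    rwa [h4] at h3
  set r : ℝ := ρ/2 with hrdef
  have hr : 0 < r := by positivity
  set lam : ℕ → ℝ := fun k => (1/2 : ℝ)^(k+1) with hlamdef
  have hlampos : ∀ k, 0 < lam k := fun k => by positivity
  have hlamsum : ∀ n, (∑ k ∈ Finset.range n, lam k) ≤ 1 := by
    intro n
    have h1 : (∑ k ∈ Finset.range n, lam k)
        = (1/2 : ℝ) * ∑ k ∈ Finset.range n, (1/2 : ℝ)^k := by
      rw [Finset.mul_sum]
      apply Finset.sum_congr rfl
      intro k _
      rw [hlamdef]
      ring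
    rw [h1]
    have := sum_geometric_two_le n
    linarith
  have hstep' : ∀ (k : ℕ) (e : E), ‖e‖ < lam k * r → ∃ p : E × E,
      p.1 ∈ A ∧ ‖p.1 - z‖ ≤ (N:ℝ) ∧ p.2 ∈ B ∧ ‖p.2 - z‖ ≤ (N:ℝ) ∧
      ‖e - lam k • (p.2 - p.1)‖ < lam (k+1) * r := by
    intro k e he
    have hlk := hlampos k
    have h1 : ‖(lam k)⁻¹ • e‖ < ρ/2 := by
      rw [norm_smul, Real.norm_eq_abs, abs_of_pos (by positivity)]
      rw [inv_mul_lt_iff₀ hlk]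
      exact he
    have h2 := hclN _ h1
    rw [Metric.mem_closure_iff] at h2
    obtain ⟨d, hd, hdist⟩ := h2 (r/2) (by positivity)
    obtain ⟨a, haA, haN, b, hbB, hbN, hba⟩ := hd
    refine ⟨(a, b), haA, haN, hbB, hbN, ?_⟩
    have h3 : e - lam k • (b - a) = lam k • ((lam k)⁻¹ • e - d) := by
      rw [smul_sub (lam k) ((lam k)⁻¹ • e) d, smul_smul,
        mul_inv_cancel₀ (ne_of_gt hlk), one_smul, hba]
    rw [h3, norm_smul, Real.norm_eq_abs, abs_of_pos hlk]
    rw [dist_eq_norm] at hdist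
    have h4 : lam (k+1) * r = lam k * (r/2) := by rw [hlamdef]; ring
    rw [h4]
    exact (mul_lt_mul_iff_right₀ hlk).mpr hdist
  -- the key representation lemma
  have hkey : ∀ w : E, ‖w‖ < r/2 → ∃ a ∈ A, ‖a - z‖ ≤ (N:ℝ) ∧ ∃ b ∈ B, b - a = w := by
    intro w hw
    have hconstr : ∃ (e : ℕ → E) (a : ℕ → E) (b : ℕ → E),
        e 0 = w ∧ (∀ k, ‖e k‖ < lam k * r) ∧
        (∀ k, a k ∈ A ∧ ‖a k - z‖ ≤ (N:ℝ) ∧ b k ∈ B ∧ ‖b k - z‖ ≤ (N:ℝ) ∧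
          e (k+1) = e k - lam k • (b k - a k)) := by
      let T : ℕ → E × E × E := fun n => Nat.rec (motive := fun _ => E × E × E) (w, z, z)
        (fun k ih =>
          if h : ‖ih.1‖ < lam k * r then
            (ih.1 - lam k • ((hstep' k ih.1 h).choose.2 - (hstep' k ih.1 h).choose.1),
             (hstep' k ih.1 h).choose)
          else (w, z, z)) n
      have hT0 : T 0 = (w, z, z) := rfl
      have hTsucc : ∀ k, T (k+1) = if h : ‖(T k).1‖ < lam k * r then
          ((T k).1 - lam k • ((hstep' k (T k).1 h).choose.2 - (hstep' k (T k).1 h).choose.1),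
           (hstep' k (T k).1 h).choose) else (w, z, z) := fun k => rfl
      have hInv : ∀ k, ‖(T k).1‖ < lam k * r := by
        intro k
        induction k with
        | zero =>
          rw [hT0]
          have h0 : lam 0 * r = r / 2 := by rw [hlamdef]; ring
          rw [h0]; exact hw
        | succ k ih =>
          rw [hTsucc k, dif_pos ih]
          exact (hstep' k (T k).1 ih).choose_spec.2.2.2.2
      refine ⟨fun n => (T n).1, fun k => (T (k+1)).2.1, fun k => (T (k+1)).2.2, rfl, hInv, ?_⟩
      intro k
      have hspec := (hstep' k (T k).1 (hInv k)).choose_spec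
      have ha : (T (k+1)).2.1 = (hstep' k (T k).1 (hInv k)).choose.1 := by
        rw [hTsucc k, dif_pos (hInv k)]
      have hb : (T (k+1)).2.2 = (hstep' k (T k).1 (hInv k)).choose.2 := by
        rw [hTsucc k, dif_pos (hInv k)]
      have he : (T (k+1)).1 = (T k).1 - lam k • ((T (k+1)).2.2 - (T (k+1)).2.1) := by
        rw [ha, hb, hTsucc k, dif_pos (hInv k)]
      refine ⟨?_, ?_, ?_, ?_, he⟩
      · show (T (k+1)).2.1 ∈ A
        rw [ha]; exact hspec.1
      · show ‖(T (k+1)).2.1 - z‖ ≤ (N:ℝ)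
        rw [ha]; exact hspec.2.1
      · show (T (k+1)).2.2 ∈ B
        rw [hb]; exact hspec.2.2.1
      · show ‖(T (k+1)).2.2 - z‖ ≤ (N:ℝ)
        rw [hb]; exact hspec.2.2.2.1
    obtain ⟨e, a, b, he0', hInv, hfact⟩ := hconstr
    have hlnn : ∀ k, 0 ≤ lam k := fun k => (hlampos k).le
    set cA : ℕ → E := fun n => z + ∑ k ∈ Finset.range n, lam k • (a k - z) with hcAdef
    set cB : ℕ → E := fun n => z + ∑ k ∈ Finset.range n, lam k • (b k - z) with hcBdef
    have hcAmem : ∀ n, cA n ∈ A := fun n =>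
      comb_mem hAconv hzA (fun k => (hfact k).1) hlnn n (hlamsum n)
    have hcBmem : ∀ n, cB n ∈ B := fun n =>
      comb_mem hBconv hzB (fun k => (hfact k).2.2.1) hlnn n (hlamsum n)
    have hdist : ∀ (c : ℕ → E), (∀ k, ‖c k - z‖ ≤ (N:ℝ)) → ∀ n,
        dist (z + ∑ k ∈ Finset.range n, lam k • (c k - z))
          (z + ∑ k ∈ Finset.range (n+1), lam k • (c k - z)) ≤ ((N:ℝ)/2) * (1/2)^n := by
      intro c hc n
      rw [dist_eq_norm, Finset.sum_range_succ]
      have h1 : (z + ∑ k ∈ Finset.range n, lam k • (c k - z))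
          - (z + ((∑ k ∈ Finset.range n, lam k • (c k - z)) + lam n • (c n - z)))
          = -(lam n • (c n - z)) := by abel
      rw [h1, norm_neg, norm_smul, Real.norm_eq_abs, abs_of_pos (hlampos n)]
      have h2 : lam n = (1/2) * (1/2:ℝ)^n := by rw [hlamdef]; ring
      rw [h2]
      nlinarith [pow_nonneg (by norm_num : (0:ℝ) ≤ 1/2) n, norm_nonneg (c n - z), hc n,
        pow_pos (by norm_num : (0:ℝ) < 1/2) n]
    have hcauchyA : CauchySeq cA :=
      cauchySeq_of_le_geometric (1/2) ((N:ℝ)/2) (by norm_num)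
        (hdist a (fun k => (hfact k).2.1))
    have hcauchyB : CauchySeq cB :=
      cauchySeq_of_le_geometric (1/2) ((N:ℝ)/2) (by norm_num)
        (hdist b (fun k => (hfact k).2.2.2.1))
    obtain ⟨α, hαt⟩ := cauchySeq_tendsto_of_complete hcauchyA
    obtain ⟨β, hβt⟩ := cauchySeq_tendsto_of_complete hcauchyB
    have hαA : α ∈ A := hAcl.mem_of_tendsto hαt (Filter.Eventually.of_forall hcAmem)
    have hβB : β ∈ B := hBcl.mem_of_tendsto hβt (Filter.Eventually.of_forall hcBmem)
    have hnormbd : ∀ (c : ℕ → E), (∀ k, ‖c k - z‖ ≤ (N:ℝ)) → ∀ n,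
        ‖(z + ∑ k ∈ Finset.range n, lam k • (c k - z)) - z‖ ≤ (N:ℝ) := by
      intro c hc n
      have h1 : (z + ∑ k ∈ Finset.range n, lam k • (c k - z)) - z
          = ∑ k ∈ Finset.range n, lam k • (c k - z) := by abel
      rw [h1]
      calc ‖∑ k ∈ Finset.range n, lam k • (c k - z)‖
          ≤ ∑ k ∈ Finset.range n, ‖lam k • (c k - z)‖ := norm_sum_le _ _
        _ ≤ ∑ k ∈ Finset.range n, lam k * (N:ℝ) := by
            apply Finset.sum_le_sum
            intro k _
            rw [norm_smul, Real.norm_eq_abs, abs_of_pos (hlampos k)]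
            exact mul_le_mul_of_nonneg_left (hc k) (hlnn k)
        _ = (∑ k ∈ Finset.range n, lam k) * (N:ℝ) := by rw [Finset.sum_mul]
        _ ≤ 1 * (N:ℝ) := mul_le_mul_of_nonneg_right (hlamsum n) (Nat.cast_nonneg N)
        _ = (N:ℝ) := one_mul _
    have hαN : ‖α - z‖ ≤ (N:ℝ) := by
      apply le_of_tendsto ((hαt.sub tendsto_const_nhds).norm)
      exact Filter.Eventually.of_forall (hnormbd a (fun k => (hfact k).2.1))
    have hsum_e : ∀ n, e n = w - ∑ k ∈ Finset.range n, lam k • (b k - a k) := by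
      intro n
      induction n with
      | zero => simp [he0']
      | succ n ih => rw [Finset.sum_range_succ, (hfact n).2.2.2.2, ih]; abel
    have hcA_eq : ∀ n, cA n = z + ∑ k ∈ Finset.range n, lam k • (a k - z) := fun _ => rfl
    have hcB_eq : ∀ n, cB n = z + ∑ k ∈ Finset.range n, lam k • (b k - z) := fun _ => rfl
    have hcBA : ∀ n, cB n - cA n = w - e n := by
      intro n
      have h1 : ∀ k ∈ Finset.range n,
          lam k • (b k - z) - lam k • (a k - z) = lam k • (b k - a k) := by
        intro k _
        rw [← smul_sub]
        congr 1
        abel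
      have h2 : cB n - cA n = ∑ k ∈ Finset.range n, lam k • (b k - a k) := by
        rw [hcA_eq, hcB_eq]
        have h3 : (z + ∑ k ∈ Finset.range n, lam k • (b k - z))
            - (z + ∑ k ∈ Finset.range n, lam k • (a k - z))
            = (∑ k ∈ Finset.range n, lam k • (b k - z))
              - (∑ k ∈ Finset.range n, lam k • (a k - z)) := by abel
        rw [h3, ← Finset.sum_sub_distrib, Finset.sum_congr rfl h1]
      rw [h2, hsum_e n, sub_sub_cancel]
    have he0 : Filter.Tendsto (fun n => e n) atTop (nhds 0) := by
      apply squeeze_zero_norm (fun n => (hInv n).le)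
      have h1 : Filter.Tendsto (fun n : ℕ => (1/2:ℝ)^n * ((1/2)*r)) atTop (nhds 0) := by
        have := (tendsto_pow_atTop_nhds_zero_of_lt_one
          (by norm_num : (0:ℝ) ≤ 1/2) (by norm_num : (1/2:ℝ) < 1)).mul_const ((1/2)*r)
        simpa using this
      have h2 : (fun n : ℕ => lam n * r) = fun n : ℕ => (1/2:ℝ)^n * ((1/2)*r) := by
        funext n
        rw [hlamdef]
        ring
      rw [h2]
      exact h1
    have hβα : β - α = w := by
      have h1 : Filter.Tendsto (fun n => cB n - cA n) atTop (nhds (β - α)) := hβt.sub hαt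
      have h2 : Filter.Tendsto (fun n => cB n - cA n) atTop (nhds (w - 0)) := by
        have h3 : (fun n => cB n - cA n) = fun n => w - e n := funext hcBA
        rw [h3]
        exact tendsto_const_nhds.sub he0
      have := tendsto_nhds_unique h1 h2
      rw [sub_zero] at this
      exact this
    exact ⟨α, hαA, hαN, β, hβB, hβα⟩
  -- global bound on q
  set M0 : ℝ := ‖Φ‖ * (N:ℝ) with hM0
  have hM0nn : 0 ≤ M0 := mul_nonneg (norm_nonneg _) (Nat.cast_nonneg _)
  have hq_bdd : ∀ w : E, ‖w‖ < r/2 → q w ≤ M0 := by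
    intro w hw
    obtain ⟨a, haA, haN, b, hbB, hba⟩ := hkey w hw
    have hmem : 1 * (-Φ (a - z)) ∈ S w :=
      ⟨1, one_pos, a, haA, b, hbB, by rw [one_smul, hba], rfl⟩
    have h1 : -Φ (a - z) ≤ M0 := by
      have h2 := Φ.le_opNorm (a - z)
      rw [Real.norm_eq_abs] at h2
      have h3 : ‖Φ‖ * ‖a - z‖ ≤ M0 := by
        rw [hM0]
        exact mul_le_mul_of_nonneg_left haN (norm_nonneg _)
      have h4 := abs_le.mp (h2.trans h3)
      linarith [h4.1]
    calc q w ≤ 1 * (-Φ (a - z)) := hqle hmem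
      _ ≤ M0 := by linarith
  set CC : ℝ := 4 * M0 / r with hCCdef
  have hCCnn : 0 ≤ CC := by positivity
  have hq_glob : ∀ v : E, q v ≤ CC * ‖v‖ := by
    intro v
    by_cases hv : v = 0
    · subst hv
      have hmem0 : (0:ℝ) ∈ S 0 := ⟨1, one_pos, z, hzA, z, hzB, by simp, by simp⟩
      have := hqle hmem0
      simpa using this
    · have hnv : 0 < ‖v‖ := norm_pos_iff.mpr hv
      set c : ℝ := 4 * ‖v‖ / r with hcdef
      have hcpos : 0 < c := by positivity
      have h1 : c • (c⁻¹ • v) = v := smul_inv_smul₀ (ne_of_gt hcpos) v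
      have h2 : ‖c⁻¹ • v‖ < r/2 := by
        rw [norm_smul, Real.norm_eq_abs, abs_of_pos (by positivity : (0:ℝ) < c⁻¹), hcdef]
        rw [show (4 * ‖v‖ / r)⁻¹ * ‖v‖ = r / 4 by field_simp]
        linarith
      have h3 : q v = c * q (c⁻¹ • v) := by
        conv_lhs => rw [← h1]
        exact hq_hom c hcpos _
      have h4 := hq_bdd _ h2
      have h5 : c * M0 = CC * ‖v‖ := by
        rw [hcdef, hCCdef]
        field_simp
      rw [h3, ← h5]
      exact mul_le_mul_of_nonneg_left h4 (le_of_lt hcpos)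
  -- Hahn-Banach
  have hfzero : ∀ x : (⟨⊥, 0⟩ : E →ₗ.[ℝ] ℝ).domain, (⟨⊥, 0⟩ : E →ₗ.[ℝ] ℝ) x ≤ q x := by
    intro x
    have hx : (x : E) = 0 := (Submodule.mem_bot ℝ).mp x.2
    have h0 : (⟨⊥, 0⟩ : E →ₗ.[ℝ] ℝ) x = 0 := rfl
    rw [h0, hx]
    exact hq0
  obtain ⟨g, -, hg⟩ := exists_extension_of_le_sublinear ⟨⊥, 0⟩ q
    (fun c hc x => hq_hom c hc x) hq_add hfzero
  have hgb : ∀ v : E, ‖g v‖ ≤ CC * ‖v‖ := by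
    intro v
    rw [Real.norm_eq_abs, abs_le]
    constructor
    · have h1 := (hg (-v)).trans (hq_glob (-v))
      rw [map_neg, norm_neg] at h1
      linarith
    · exact (hg v).trans (hq_glob v)
  refine ⟨LinearMap.mkContinuous g CC hgb, ?_, ?_⟩
  · intro b hbB
    have hmem : (0:ℝ) ∈ S (b - z) :=
      ⟨1, one_pos, z, hzA, b, hbB, one_smul _ _, by simp⟩
    have h1 : (LinearMap.mkContinuous g CC hgb) (b - z) = g (b - z) := rfl
    rw [h1]
    exact (hg _).trans (hqle hmem)
  · intro a haA
    have hmem : (-Φ (a - z)) ∈ S (z - a) :=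
      ⟨1, one_pos, a, haA, z, hzB, one_smul _ _, by ring⟩
    have h1 : g (z - a) ≤ -Φ (a - z) := (hg _).trans (hqle hmem)
    have h2 : g (z - a) = -g (a - z) := by
      rw [show z - a = -(a - z) by abel, map_neg]
    have h3 : (LinearMap.mkContinuous g CC hgb) (a - z) = g (a - z) := rfl
    rw [h3]
    linarith

end Split

set_option maxHeartbeats 1000000 in
/-- under the assumptions of STATEMENT 9 together with the domination
property of `F` by `𝓕` near `pb`, for every `y* ∈ Y*`:
`D̂*(𝓕 + K)(pb, yb)(y*) = ⋃_{(p*,x*) ∈ D*(f + K)(pb, xb)(y*)} {p* + D*C(pb, xb)(x*)}`. -/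
theorem stmt13
    {P X Y : Type*}
    [NormedAddCommGroup P] [NormedSpace ℝ P] [CompleteSpace P]
    [NormedAddCommGroup X] [NormedSpace ℝ X] [CompleteSpace X]
    [NormedAddCommGroup Y] [NormedSpace ℝ Y] [CompleteSpace Y]
    -- K is a pointed closed convex cone in Y
    (K : Set Y) (hKconv : Convex ℝ K) (hKclosed : IsClosed K)
    (hKcone : ∀ t : ℝ, 0 ≤ t → ∀ y ∈ K, t • y ∈ K)
    (hKpointed : K ∩ (-K) = {0})
    -- f is K-convex and K-closed (its epigraph is convex and closed)
    (f : P × X → Y)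
    (hfconv : Convex ℝ {q : (P × X) × Y | q.2 ∈ ({f q.1} : Set Y) + K})
    (hfcl : IsClosed {q : (P × X) × Y | q.2 ∈ ({f q.1} : Set Y) + K})
    -- C is a closed convex set-valued map
    (C : P → Set X) (hCconv : Convex ℝ (gph C)) (hCcl : IsClosed (gph C))
    -- F(p) = {f(p,x) : x ∈ C(p)},  𝓕(p) = Min_K F(p)
    (F : P → Set Y) (hF : ∀ p, F p = {y : Y | ∃ x ∈ C p, y = f (p, x)})
    (Fmin : P → Set Y)
    (hFmin : ∀ p, Fmin p = {a ∈ F p | (F p - {a}) ∩ ((-K) \ {0}) = ∅})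
    -- (pb, xb) ∈ gph S, yb = f(pb, xb)
    (pb : P) (xb : X) (hxbC : xb ∈ C pb) (hsol : f (pb, xb) ∈ Fmin pb)
    (yb : Y) (hyb : yb = f (pb, xb))
    -- (i) ℝ⁺(rge H − dom f) is a closed linear subspace of P × X, where
    --     H(p) = {p} × C(p), so rge H = gph C and dom f = P × X
    (hqual1 : ∃ S : Submodule ℝ (P × X), IsClosed (S : Set (P × X)) ∧
      {w : P × X | ∃ t : ℝ, 0 ≤ t ∧
        ∃ u ∈ ⋃ p : P, ({p} : Set P) ×ˢ C p, ∃ v : P × X, w = t • (u - v)} = S)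
    -- (ii) ℝ⁺(P − dom C) is a closed linear subspace of P
    (hqual2 : ∃ S : Submodule ℝ P, IsClosed (S : Set P) ∧
      {w : P | ∃ t : ℝ, 0 ≤ t ∧ ∃ u : P, ∃ v ∈ dom C, w = t • (u - v)} = S)
    -- (iii) F is K-dominated by 𝓕 near pb
    (hdom : ∃ U ∈ nhds pb, ∀ p ∈ U, F p ⊆ Fmin p + K)
    (ψ : Y →L[ℝ] ℝ) :
    fCoderiv (fun p => Fmin p + K) pb yb ψ
      = {w : P →L[ℝ] ℝ | ∃ pstar : P →L[ℝ] ℝ, ∃ xstar : X →L[ℝ] ℝ,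
          pstar.coprod xstar
            ∈ coderiv (fun q : P × X => ({f q} : Set Y) + K) (pb, xb) (f (pb, xb)) ψ ∧
          ∃ qstar ∈ coderiv C pb xb xstar, w = pstar + qstar} := by
  have h0K : (0:Y) ∈ K := by
    have h1 : (0:Y) ∈ (K ∩ (-K)) := by rw [hKpointed]; rfl
    exact h1.1
  have hKadd : ∀ {k1 k2 : Y}, k1 ∈ K → k2 ∈ K → k1 + k2 ∈ K := by
    intro k1 k2 h1 h2
    have h3 := hKconv h1 h2 (by norm_num : (0:ℝ) ≤ 1/2) (by norm_num : (0:ℝ) ≤ 1/2)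
      (by norm_num)
    have h4 := hKcone 2 (by norm_num) _ h3
    have h5 : (2:ℝ) • ((1/2:ℝ) • k1 + (1/2:ℝ) • k2) = k1 + k2 := by
      rw [smul_add, smul_smul, smul_smul]; norm_num
    rwa [h5] at h4
  ext φ
  simp only [Set.mem_setOf_eq]
  constructor
  · -- hard direction
    intro hφ
    set A : Set ((P × X) × Y) := {q : (P × X) × Y | q.2 ∈ ({f q.1} : Set Y) + K} with hAdef
    set B : Set ((P × X) × Y) := {q : (P × X) × Y | q.1.2 ∈ C q.1.1} with hBdef
    set z : (P × X) × Y := ((pb, xb), yb) with hzdef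
    have hzA : z ∈ A := by
      show yb ∈ ({f (pb, xb)} : Set Y) + K
      exact ⟨f (pb, xb), rfl, 0, h0K, by simp [hyb]⟩
    have hzB : z ∈ B := hxbC
    have hBconv : Convex ℝ B := hCconv.linear_preimage (LinearMap.fst ℝ (P × X) Y)
    have hBcl : IsClosed B := hCcl.preimage continuous_fst
    have hsurj : ∀ w : (P × X) × Y, ∃ a ∈ A, ∃ b ∈ B, b - a = w := by
      rintro ⟨⟨wp, wx⟩, wy⟩
      refine ⟨((pb - wp, xb - wx), f (pb - wp, xb - wx)),
        ⟨f (pb - wp, xb - wx), rfl, 0, h0K, add_zero _⟩,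
        ((pb, xb), f (pb - wp, xb - wx) + wy), hxbC, ?_⟩
      simp [Prod.ext_iff, sub_sub_cancel]
    set Φ : ((P × X) × Y) →L[ℝ] ℝ :=
      φ.comp ((ContinuousLinearMap.fst ℝ P X).comp
        (ContinuousLinearMap.fst ℝ (P × X) Y)) -
      ψ.comp (ContinuousLinearMap.snd ℝ (P × X) Y) with hΦdef
    have hΦapp : ∀ v : (P × X) × Y, Φ v = φ v.1.1 - ψ v.2 := fun v => rfl
    have hΦ : ∀ m ∈ A, m ∈ B → Φ (m - z) ≤ 0 := by
      intro m hmA hmB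
      rw [hΦapp, Prod.fst_sub, Prod.fst_sub, Prod.snd_sub]
      show φ (m.1.1 - pb) - ψ (m.2 - yb) ≤ 0
      by_cases hdeg : m.1.1 = pb ∧ m.2 = yb
      · simp [hdeg.1, hdeg.2]
      · obtain ⟨U, hU, hdomU⟩ := hdom
        obtain ⟨η, hη, hballU⟩ := Metric.mem_nhds_iff.mp hU
        have hspos : 0 < ‖m.1.1 - pb‖ + ‖m.2 - yb‖ := by
          rcases not_and_or.mp hdeg with h | h
          · have h2 : 0 < ‖m.1.1 - pb‖ := norm_pos_iff.mpr (sub_ne_zero.mpr h)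
            linarith [norm_nonneg (m.2 - yb)]
          · have h2 : 0 < ‖m.2 - yb‖ := norm_pos_iff.mpr (sub_ne_zero.mpr h)
            linarith [norm_nonneg (m.1.1 - pb)]
        set sn : ℝ := ‖m.1.1 - pb‖ + ‖m.2 - yb‖ with hsn
        have hle : ∀ ε : ℝ, 0 < ε → φ (m.1.1 - pb) - ψ (m.2 - yb) ≤ ε * sn := by
          intro ε hε
          obtain ⟨δ, hδ, hcond⟩ := hφ ε hε
          set t : ℝ := (1/2) * min 1 ((min δ η) / sn) with htdef
          have hmin : 0 < min δ η := lt_min hδ hη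
          have ht0 : 0 < t := by positivity
          have ht1 : t ≤ 1 := by
            have := min_le_left 1 ((min δ η) / sn)
            rw [htdef]; linarith
          have htsn : t * sn < min δ η := by
            have h1 : min 1 ((min δ η) / sn) ≤ (min δ η) / sn :=
              min_le_right _ _
            have h2 : t ≤ (1/2) * ((min δ η) / sn) := by
              rw [htdef]; linarith [h1]
            have h3a : t * sn ≤ ((1/2) * ((min δ η) / sn)) * sn :=
              mul_le_mul_of_nonneg_right h2 (le_of_lt hspos)
            have h3b : ((1/2) * ((min δ η) / sn)) * sn = (1/2) * (min δ η) := by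
              field_simp
            nlinarith [h3a, h3b, hmin]
          set mt : (P × X) × Y := z + t • (m - z) with hmtdef
          have hcomb : z + t • (m - z) = (1 - t) • z + t • m := by
            rw [smul_sub, sub_smul, one_smul]; abel
          have hmtA : mt ∈ A := by
            rw [hmtdef, hcomb]
            exact hfconv hzA hmA (by linarith) (le_of_lt ht0) (by ring)
          have hmtB : mt ∈ B := by
            rw [hmtdef, hcomb]
            exact hBconv hzB hmB (by linarith) (le_of_lt ht0) (by ring)
          have hmt1 : mt.1.1 - pb = t • (m.1.1 - pb) := by
            rw [hmtdef]; show pb + t • (m - z).1.1 - pb = _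
            rw [add_sub_cancel_left]; rfl
          have hmt2 : mt.2 - yb = t • (m.2 - yb) := by
            rw [hmtdef]; show yb + t • (m - z).2 - yb = _
            rw [add_sub_cancel_left]; rfl
          have hnorm1 : ‖mt.1.1 - pb‖ = t * ‖m.1.1 - pb‖ := by
            rw [hmt1, norm_smul, Real.norm_eq_abs, abs_of_pos ht0]
          have hnorm2 : ‖mt.2 - yb‖ = t * ‖m.2 - yb‖ := by
            rw [hmt2, norm_smul, Real.norm_eq_abs, abs_of_pos ht0]
          have hnormsum : ‖mt.1.1 - pb‖ + ‖mt.2 - yb‖ = t * sn := by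
            rw [hnorm1, hnorm2, hsn]; ring
          have hUmem : mt.1.1 ∈ U := by
            apply hballU
            rw [Metric.mem_ball, dist_eq_norm, hnorm1]
            have : t * ‖m.1.1 - pb‖ ≤ t * sn := by
              rw [hsn]; nlinarith [norm_nonneg (m.2 - yb)]
            have h4 : min δ η ≤ η := min_le_right _ _
            linarith
          -- mt.2 ∈ Fmin mt.1.1 + K
          obtain ⟨y1, hy1, k, hk, hyk⟩ := hmtA
          replace hyk : y1 + k = mt.2 := hyk
          rw [mem_singleton_iff] at hy1
          have hmem1 : f mt.1 ∈ F mt.1.1 := by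
            rw [hF]
            exact ⟨mt.1.2, hmtB, by rw [Prod.mk.eta]⟩
          obtain ⟨y2, hy2, k2, hk2, hyk2⟩ := hdomU _ hUmem hmem1
          replace hyk2 : y2 + k2 = f mt.1 := hyk2
          have hvmem : mt.2 ∈ Fmin mt.1.1 + K := by
            refine ⟨y2, hy2, k2 + k, hKadd hk2 hk, ?_⟩
            show y2 + (k2 + k) = mt.2
            rw [← add_assoc, hyk2, ← hy1, hyk]
          have hlt : ‖mt.1.1 - pb‖ + ‖mt.2 - yb‖ < δ := by
            rw [hnormsum]; exact lt_of_lt_of_le htsn (min_le_left _ _)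
          have happ := hcond mt.1.1 mt.2 hvmem hlt
          rw [hnormsum, hmt1, hmt2, map_smul, map_smul] at happ
          simp only [smul_eq_mul] at happ
          have h5 : t * (φ (m.1.1 - pb) - ψ (m.2 - yb)) ≤ t * (ε * sn) := by
            calc t * (φ (m.1.1 - pb) - ψ (m.2 - yb))
                = t * φ (m.1.1 - pb) - t * ψ (m.2 - yb) := by ring
              _ ≤ ε * (t * sn) := happ
              _ = t * (ε * sn) := by ring
          exact le_of_mul_le_mul_left h5 ht0
        by_contra hcon
        push_neg at hcon
        have h6 := hle ((φ (m.1.1 - pb) - ψ (m.2 - yb)) / (2 * sn)) (by positivity)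
        have h7 : (φ (m.1.1 - pb) - ψ (m.2 - yb)) / (2 * sn) * sn
            = (φ (m.1.1 - pb) - ψ (m.2 - yb)) / 2 := by
          field_simp
        rw [h7] at h6
        linarith
    obtain ⟨Φ₂, hΦ₂B, hΦ₂A⟩ := split hfconv hfcl hBconv hBcl hzA hzB hsurj Φ hΦ
    set qstar : P →L[ℝ] ℝ := Φ₂.comp ((ContinuousLinearMap.inl ℝ (P × X) Y).comp
      (ContinuousLinearMap.inl ℝ P X)) with hqstardef
    set xstar : X →L[ℝ] ℝ := -(Φ₂.comp ((ContinuousLinearMap.inl ℝ (P × X) Y).comp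
      (ContinuousLinearMap.inr ℝ P X))) with hxstardef
    have hqapp : ∀ p : P, qstar p = Φ₂ ((p, 0), 0) := fun p => rfl
    have hxapp : ∀ x : X, xstar x = -Φ₂ ((0, x), 0) := fun x => rfl
    have hy0 : ∀ y : Y, Φ₂ (((0:P), (0:X)), y) = 0 := by
      have h1 : ∀ y : Y, Φ₂ (((0:P), (0:X)), y) ≤ 0 := by
        intro y
        have hb : (((pb, xb), yb + y) : (P × X) × Y) ∈ B := hxbC
        have h2 := hΦ₂B _ hb
        have h3 : (((pb, xb), yb + y) : (P × X) × Y) - z = (((0:P), (0:X)), y) := by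
          rw [hzdef]
          simp [Prod.ext_iff]
        rwa [h3] at h2
      intro y
      refine le_antisymm (h1 y) ?_
      have h4 := h1 (-y)
      have h5 : (((0:P), (0:X)), -y) = -(((0:P), (0:X)), y) := by
        simp [Prod.ext_iff]
      rw [h5, map_neg] at h4
      linarith
    have hdecomp : ∀ v : (P × X) × Y, Φ₂ v = qstar v.1.1 - xstar v.1.2 := by
      intro v
      have h1 : v = (((v.1.1 : P), (0:X)), (0:Y)) + (((0:P), v.1.2), (0:Y))
          + (((0:P), (0:X)), v.2) := by
        simp [Prod.ext_iff]
      rw [hqapp, hxapp]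
      calc Φ₂ v = Φ₂ ((((v.1.1 : P), (0:X)), (0:Y)) + (((0:P), v.1.2), (0:Y))
          + (((0:P), (0:X)), v.2)) := by rw [← h1]
        _ = Φ₂ (((v.1.1 : P), (0:X)), (0:Y)) + Φ₂ (((0:P), v.1.2), (0:Y))
            + Φ₂ (((0:P), (0:X)), v.2) := by rw [map_add, map_add]
        _ = Φ₂ ((v.1.1, 0), 0) - -Φ₂ ((0, v.1.2), 0) := by rw [hy0]; ring
    set pstar : P →L[ℝ] ℝ := φ - qstar with hpstardef
    refine ⟨pstar, xstar, ?_, qstar, ?_, ?_⟩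
    · -- coderiv of epi f
      intro u v hv
      have hmA : ((u, v) : (P × X) × Y) ∈ A := hv
      have h1 := hΦ₂A _ hmA
      have h2 : ((u, v) : (P × X) × Y) - z = ((u.1 - pb, u.2 - xb), v - yb) := by
        rw [hzdef]; simp [Prod.ext_iff]
      rw [h2, hΦapp, hdecomp] at h1
      simp only at h1
      -- h1 : φ (u.1 - pb) - ψ (v - yb) ≤ qstar (u.1 - pb) - xstar (u.2 - xb)
      rw [ContinuousLinearMap.coprod_apply, Prod.fst_sub, Prod.snd_sub]
      rw [hpstardef, ContinuousLinearMap.sub_apply, ← hyb]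
      linarith
    · -- coderiv of C
      intro u v hv
      have hb : (((u, v), yb) : (P × X) × Y) ∈ B := hv
      have h1 := hΦ₂B _ hb
      have h2 : (((u, v), yb) : (P × X) × Y) - z = ((u - pb, v - xb), (0:Y)) := by
        rw [hzdef]; simp [Prod.ext_iff]
      rw [h2, hdecomp] at h1
      simp only at h1
      exact h1
    · rw [hpstardef, sub_add_cancel]
  · -- easy direction
    rintro ⟨pstar, xstar, hco, qstar, hcq, rfl⟩
    intro ε hε
    refine ⟨1, one_pos, ?_⟩
    intro u v hv _
    obtain ⟨y1, hy1, k, hk, hyk⟩ := hv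
    replace hyk : y1 + k = v := hyk
    rw [hFmin] at hy1
    have hy1F := hy1.1
    rw [hF] at hy1F
    obtain ⟨x, hxC, hyx⟩ := hy1F
    have hvmem : v ∈ ({f (u, x)} : Set Y) + K := ⟨f (u, x), rfl, k, hk, by
      rw [← hyk, hyx]⟩
    have h1 := hco (u, x) v hvmem
    rw [ContinuousLinearMap.coprod_apply, Prod.fst_sub, Prod.snd_sub] at h1
    have h2 := hcq u x hxC
    have h3 : (pstar + qstar) (u - pb) = pstar (u - pb) + qstar (u - pb) :=
      ContinuousLinearMap.add_apply _ _ _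
    rw [h3]
    rw [← hyb] at h1
    have h4 : 0 ≤ ε * (‖u - pb‖ + ‖v - yb‖) := by
      apply mul_nonneg (le_of_lt hε)
      positivity
    simp only at h1
    linarith
end

section
/- Let P, X, Y be real Banach spaces, K ⊆ Y a pointed closed convex cone with nonempty interior, and K̃ ⊆ Y a closed convex cone with K̃ ⊆ int K ∪ {0}. Let f : P × X → Y be K̃-convex and K̃-closed, C : P ⇉ X closed convex, (p̄, x̄) ∈ gph S^w with ȳ = f(p̄, x̄), and H : P ⇉ P × X given by H(p) = {p} × C(p). Assume (i) ℝ⁺(rge H − dom f) is a closed linear subspace of P × X, (ii) ℝ⁺(P − dom C) is a closed linear subspace of P, and (iii) F is K̃-dominated by 𝓦 near p̄, i.e., F(p) ⊆ 𝓦(p) + K̃ for all p in some neighborhood of p̄. Then for every y* ∈ Y*, D̂*(𝓦 + K̃)(p̄, ȳ)(y*) = ⋃_{(p*, x*) ∈ D*(f + K̃)(p̄, x̄)(y*)} {p* + q* : q* ∈ D*C(p̄, x̄)(x*)}; in particular, for every y* ∈ K̃*, D̂*(𝓦 + K̃)(p̄, ȳ)(y*) = ⋃_{(p*, x*) ∈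 ∂⟨y*, f⟩(p̄, x̄)} {p* + q* : q* ∈ D*C(p̄, x̄)(x*)}. -/
open Set Pointwise Topology Filter

lemma le_zero_of_forall_le_eps {q S : ℝ} (hS : 0 ≤ S) (h : ∀ ε > (0:ℝ), q ≤ ε * S) : q ≤ 0 := by
  by_contra hq
  push_neg at hq
  have h2 : (0:ℝ) < 2*S+2 := by linarith
  have h3 := h (q / (2*S+2)) (by positivity)
  rw [div_mul_eq_mul_div, le_div_iff₀ h2] at h3
  nlinarith

lemma bdd_transport {Z : Type*} [NormedAddCommGroup Z] [NormedSpace ℝ Z]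
    {g : Z → ℝ} (hg : ConvexOn ℝ Set.univ g) {z0 : Z} {r M : ℝ}
    (hb : ∀ z ∈ Metric.ball z0 r, g z ≤ M) (z1 : Z) :
    ∃ M1, ∀ z ∈ Metric.ball z1 (r/2), g z ≤ M1 := by
  refine ⟨M/2 + g ((2:ℝ)•z1 - z0)/2, fun z hz => ?_⟩
  rw [Metric.mem_ball, dist_eq_norm] at hz
  have hu : (z0 + (2:ℝ)•(z - z1)) ∈ Metric.ball z0 r := by
    rw [Metric.mem_ball, dist_eq_norm, add_sub_cancel_left, norm_smul, Real.norm_eq_abs]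
    rw [abs_of_pos (by norm_num : (0:ℝ) < 2)]
    linarith
  have hcomb := hg.2 (Set.mem_univ (z0 + (2:ℝ)•(z - z1))) (Set.mem_univ ((2:ℝ)•z1 - z0))
    (by norm_num : (0:ℝ) ≤ 1/2) (by norm_num : (0:ℝ) ≤ 1/2) (by norm_num : (1/2:ℝ)+(1/2)=1)
  have hpt : (1/2:ℝ) • (z0 + (2:ℝ)•(z - z1)) + (1/2:ℝ) • ((2:ℝ)•z1 - z0) = z := by module
  rw [hpt] at hcomb
  simp only [smul_eq_mul] at hcomb
  have := hb _ hu
  nlinarith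

lemma usc_of_bdd {Z : Type*} [NormedAddCommGroup Z] [NormedSpace ℝ Z]
    {g : Z → ℝ} (hg : ConvexOn ℝ Set.univ g) {z : Z} {r M : ℝ} (hr : 0 < r)
    (hb : ∀ u ∈ Metric.ball z r, g u ≤ M) {ε : ℝ} (hε : 0 < ε) :
    ∃ δ > (0:ℝ), ∀ u, dist u z < δ → g u < g z + ε := by
  have hMz : g z ≤ M := hb z (Metric.mem_ball_self hr)
  set t : ℝ := min 1 (ε / (2*(M - g z + 1))) with ht_def
  have hd : (0:ℝ) < 2*(M - g z + 1) := by linarith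
  have ht : 0 < t := lt_min one_pos (div_pos hε hd)
  refine ⟨t * r, mul_pos ht hr, fun u hu => ?_⟩
  rw [dist_eq_norm] at hu
  have hw : z + t⁻¹ • (u - z) ∈ Metric.ball z r := by
    rw [Metric.mem_ball, dist_eq_norm, add_sub_cancel_left, norm_smul, Real.norm_eq_abs,
      abs_of_pos (inv_pos.2 ht), inv_mul_lt_iff₀ ht]
    exact hu
  have ht1 : t ≤ 1 := min_le_left _ _
  have hcomb := hg.2 (Set.mem_univ z) (Set.mem_univ (z + t⁻¹ • (u - z)))
    (by linarith : (0:ℝ) ≤ 1 - t) ht.le (by ring)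
  have hpt : (1 - t) • z + t • (z + t⁻¹ • (u - z)) = u := by
    rw [smul_add, smul_inv_smul₀ ht.ne']
    module
  rw [hpt] at hcomb
  simp only [smul_eq_mul] at hcomb
  have h2 : g (z + t⁻¹ • (u-z)) ≤ M := hb _ hw
  have ht2 : t * (M - g z) ≤ ε/2 := by
    have h4 : t ≤ ε / (2*(M - g z + 1)) := min_le_right _ _
    have h3 : (0:ℝ) ≤ M - g z := by linarith
    calc t * (M - g z) ≤ (ε / (2*(M - g z + 1))) * (M - g z) :=
          mul_le_mul_of_nonneg_right h4 h3
      _ ≤ ε/2 := by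
          rw [div_mul_eq_mul_div, div_le_div_iff₀ (by positivity) (by norm_num)]
          nlinarith
  nlinarith [mul_le_mul_of_nonneg_left (sub_le_sub_right h2 (g z)) ht.le]

lemma mr_split {Z : Type*} [NormedAddCommGroup Z] [NormedSpace ℝ Z]
    {g : Z → ℝ} (hg : ConvexOn ℝ Set.univ g)
    {z0 : Z} {r0 M0 : ℝ} (hr0 : 0 < r0) (hb0 : ∀ z ∈ Metric.ball z0 r0, g z ≤ M0)
    {Ω : Set Z} (hΩ : Convex ℝ Ω) {zb : Z} (hzb : zb ∈ Ω)
    (W : Z →L[ℝ] ℝ) (hW : ∀ z ∈ Ω, W (z - zb) ≤ g z - g zb) :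
    ∃ ζ : Z →L[ℝ] ℝ, (∀ z, ζ (z - zb) ≤ g z - g zb) ∧
      ∀ z ∈ Ω, W (z - zb) - ζ (z - zb) ≤ 0 := by
  classical
  set A : Set (Z × ℝ) := {p | g p.1 < p.2} with hA_def
  have hAopen : IsOpen A := by
    rw [Metric.isOpen_iff]
    rintro ⟨z, s⟩ hzs
    have hzs' : g z < s := hzs
    obtain ⟨M1, hM1⟩ := bdd_transport hg hb0 z
    have hε2 : (0:ℝ) < (s - g z)/2 := by linarith
    obtain ⟨δ, hδ, husc⟩ := usc_of_bdd hg (by linarith : (0:ℝ) < r0/2) hM1 hε2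
    refine ⟨min δ ((s - g z)/2), lt_min hδ hε2, ?_⟩
    rintro ⟨z', s'⟩ hdist
    rw [Metric.mem_ball, Prod.dist_eq, max_lt_iff] at hdist
    have h1 : g z' < g z + (s - g z)/2 := husc z' (lt_of_lt_of_le hdist.1 (min_le_left _ _))
    have h2 : |s' - s| < (s - g z)/2 := by
      have := lt_of_lt_of_le hdist.2 (min_le_right _ _)
      rwa [Real.dist_eq] at this
    have := abs_lt.1 h2
    show g z' < s'
    linarith
  have hAconv : Convex ℝ A := by
    rintro p hp q hq a b ha hb hab
    show g (a • p + b • q).1 < (a • p + b • q).2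
    have hg2 := hg.2 (Set.mem_univ p.1) (Set.mem_univ q.1) ha hb hab
    simp only [Prod.fst_add, Prod.snd_add, Prod.smul_fst, Prod.smul_snd, smul_eq_mul]
    simp only [smul_eq_mul] at hg2
    refine lt_of_le_of_lt hg2 ?_
    rcases eq_or_lt_of_le ha with h | h
    · have hb1 : b = 1 := by linarith
      simp [← h, hb1]
      exact hq
    · have h1 : a * g p.1 < a * p.2 := by
        exact mul_lt_mul_of_pos_left hp h
      have h2 : b * g q.1 ≤ b * q.2 := mul_le_mul_of_nonneg_left (le_of_lt hq) hb
      linarith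
  set B : Set (Z × ℝ) := {p | p.1 ∈ Ω ∧ p.2 ≤ g zb + W (p.1 - zb)} with hB_def
  have hBconv : Convex ℝ B := by
    rintro p ⟨hp1, hp2⟩ q ⟨hq1, hq2⟩ a b ha hb hab
    obtain rfl : b = 1 - a := by linarith
    constructor
    · exact hΩ hp1 hq1 ha hb hab
    · show (a • p + (1-a) • q).2 ≤ g zb + W ((a • p + (1-a) • q).1 - zb)
      have hpt : (a • p + (1-a) • q).1 - zb = a • (p.1 - zb) + (1-a) • (q.1 - zb) := by
        simp only [Prod.fst_add, Prod.smul_fst]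
        module
      rw [hpt, map_add, map_smul, map_smul]
      simp only [Prod.snd_add, Prod.smul_snd, smul_eq_mul]
      nlinarith [mul_le_mul_of_nonneg_left hp2 ha, mul_le_mul_of_nonneg_left hq2 hb]
  have hdisj : Disjoint A B := by
    rw [Set.disjoint_left]
    rintro p hpA ⟨hp1, hp2⟩
    have := hW p.1 hp1
    have hlt : g p.1 < p.2 := hpA
    linarith
  obtain ⟨φ, u, hA, hB⟩ := geometric_hahn_banach_open hAconv hAopen hBconv hdisj
  set c : ℝ := φ (0, 1) with hc_def
  have hφ : ∀ (z : Z) (s : ℝ), φ (z, s) = φ (z, 0) + s * c := by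
    intro z s
    have h : ((z, s) : Z × ℝ) = (z, 0) + s • ((0 : Z), (1:ℝ)) := by
      simp [Prod.ext_iff]
    rw [h, map_add, map_smul, smul_eq_mul]
  have hWzb : W (zb - zb) = 0 := by simp
  have hc_lt : c < 0 := by
    rcases lt_or_ge c 0 with h | h
    · exact h
    exfalso
    rcases eq_or_lt_of_le h with h0 | h0
    · have h1 : ((zb, g zb + 1) : Z × ℝ) ∈ A := by show g zb < g zb + 1; linarith
      have h2 : ((zb, g zb) : Z × ℝ) ∈ B := ⟨hzb, by rw [hWzb]; simp⟩
      have := hA _ h1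
      have := hB _ h2
      rw [hφ] at *
      rw [← h0] at *
      linarith
    · obtain ⟨n, hn⟩ := exists_nat_gt ((u - φ (zb, 0) - c * (g zb + 1))/c)
      have h1 : ((zb, g zb + 1 + n) : Z × ℝ) ∈ A := by
        show g zb < g zb + 1 + n
        have : (0:ℝ) ≤ n := Nat.cast_nonneg n
        linarith
      have h2 := hA _ h1
      rw [hφ] at h2
      rw [div_lt_iff₀ h0] at hn
      nlinarith
  have hAle : ∀ z : Z, φ (z, 0) + c * g z ≤ u := by
    intro z
    have key : ∀ ε > (0:ℝ), φ (z, 0) + c * g z ≤ u + ε := by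
      intro ε hε
      have hmem : ((z, g z + ε/(-c)) : Z × ℝ) ∈ A := by
        show g z < g z + ε/(-c)
        have : 0 < ε/(-c) := div_pos hε (by linarith)
        linarith
      have := hA _ hmem
      rw [hφ] at this
      have hcne : c ≠ 0 := ne_of_lt hc_lt
      have hc' : (g z + ε/(-c)) * c = c * g z - ε := by
        have h1 : ε/(-c)*c = -ε := by
          rw [div_mul_eq_mul_div, div_neg, mul_comm, mul_div_cancel_left₀ ε hcne]
        rw [add_mul, h1]
        ring
      rw [hc'] at this
      linarith
    exact le_of_forall_pos_le_add key
  have hBge : ∀ z ∈ Ω, u ≤ φ (z, 0) + c * (g zb + W (z - zb)) := by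
    intro z hz
    have hmem : ((z, g zb + W (z - zb)) : Z × ℝ) ∈ B := ⟨hz, le_refl _⟩
    have := hB _ hmem
    rw [hφ] at this
    linarith [this]
  have hu_eq : u = φ (zb, 0) + c * g zb := by
    have h1 := hAle zb
    have h2 := hBge zb hzb
    rw [hWzb] at h2
    have : c * (g zb + 0) = c * g zb := by ring
    rw [this] at h2
    linarith
  set ζ₀ : Z →L[ℝ] ℝ := φ.comp (ContinuousLinearMap.inl ℝ Z ℝ) with hζ₀_def
  have hζ₀ : ∀ z : Z, ζ₀ z = φ (z, 0) := fun z => rfl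
  refine ⟨(-c)⁻¹ • ζ₀, ?_, ?_⟩
  · intro z
    have h1 := hAle z
    have h2 : ζ₀ (z - zb) = φ (z, 0) - φ (zb, 0) := by
      rw [map_sub, hζ₀, hζ₀]
    show ((-c)⁻¹ • ζ₀) (z - zb) ≤ g z - g zb
    rw [ContinuousLinearMap.smul_apply, smul_eq_mul, h2, inv_mul_eq_div,
      div_le_iff₀ (by linarith : (0:ℝ) < -c)]
    rw [hu_eq] at h1
    nlinarith
  · intro z hz
    have h1 := hBge z hz
    rw [hu_eq] at h1
    have h2 : ζ₀ (z - zb) = φ (z, 0) - φ (zb, 0) := by rw [map_sub, hζ₀, hζ₀]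
    have h3 : (-c) * W (z - zb) ≤ ζ₀ (z - zb) := by rw [h2]; nlinarith
    have h4 : W (z - zb) ≤ ((-c)⁻¹ • ζ₀) (z - zb) := by
      rw [ContinuousLinearMap.smul_apply, smul_eq_mul, inv_mul_eq_div,
        le_div_iff₀ (by linarith : (0:ℝ) < -c)]
      nlinarith
    linarith

lemma ru_bounded_fiber {Z Y : Type*} [NormedAddCommGroup Z] [NormedSpace ℝ Z] [CompleteSpace Z]
    [NormedAddCommGroup Y] [NormedSpace ℝ Y] [CompleteSpace Y]
    {G : Set (Z × Y)} (hGc : Convex ℝ G) (hGcl : IsClosed G)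
    (hfull : ∀ z : Z, ∃ v, (z, v) ∈ G) :
    ∃ (c : Z) (ρ M : ℝ), 0 < ρ ∧ ∀ z ∈ Metric.ball c ρ, ∃ v, (z, v) ∈ G ∧ ‖v‖ ≤ M := by
  classical
  have : Nonempty Z := ⟨0⟩
  set A : ℕ → Set Z := fun n => {z | ∃ v, (z, v) ∈ G ∧ ‖v‖ ≤ n} with hA_def
  have hcover : (⋃ n, closure (A n)) = Set.univ := by
    ext z
    simp only [Set.mem_iUnion, Set.mem_univ, iff_true]
    obtain ⟨v, hv⟩ := hfull z
    obtain ⟨n, hn⟩ := exists_nat_ge ‖v‖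
    exact ⟨n, subset_closure ⟨v, hv, hn⟩⟩
  obtain ⟨N, hN⟩ := nonempty_interior_of_iUnion_of_closed (fun n => isClosed_closure) hcover
  obtain ⟨z0, hz0⟩ := hN
  rw [mem_interior_iff_mem_nhds, Metric.mem_nhds_iff] at hz0
  obtain ⟨ε, hε, hball⟩ := hz0
  set ρ : ℝ := ε/4 with hρ_def
  have hρ : 0 < ρ := by positivity
  refine ⟨z0, ρ, N, hρ, ?_⟩
  intro z hz
  rw [Metric.mem_ball, dist_eq_norm] at hz
  -- total choice function
  have key : ∀ (k : ℕ) (t : Z), ∃ p : Z × Y, p ∈ G ∧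
      (t ∈ Metric.ball z0 (ε/2) → ‖p.2‖ ≤ (N:ℝ) ∧ ‖t - p.1‖ < ρ / 2^(k+1)) := by
    intro k t
    by_cases h : t ∈ Metric.ball z0 (ε/2)
    · have ht : t ∈ closure (A N) := hball (Metric.ball_subset_ball (by linarith) h)
      rw [Metric.mem_closure_iff] at ht
      obtain ⟨b, hb, hdist⟩ := ht (ρ / 2^(k+1)) (by positivity)
      obtain ⟨v, hvG, hvN⟩ := hb
      exact ⟨(b, v), hvG, fun _ => ⟨hvN, by rwa [dist_eq_norm] at hdist⟩⟩
    · exact ⟨(t, (hfull t).choose), (hfull t).choose_spec, fun hc => absurd hc h⟩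
  choose pick hpickG hpick using key
  set zs : ℕ → Z := fun k => Nat.recAux z (fun k t => (2:ℝ) • t - (pick k t).1) k with hzs_def
  have hzs0 : zs 0 = z := rfl
  have hzs_succ : ∀ k, zs (k+1) = (2:ℝ) • zs k - (pick k (zs k)).1 := fun k => rfl
  set q : ℕ → Z × Y := fun k => pick k (zs k) with hq_def
  have inv : ∀ k, ‖zs k - z0‖ < ρ * (2 - (1/2)^k) := by
    intro k
    induction k with
    | zero =>
      rw [hzs0]
      simp only [pow_zero]
      norm_num
      linarith
    | succ k ih =>
      have hhalf : (0:ℝ) < (1/2:ℝ)^k := by positivity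
      have hin : zs k ∈ Metric.ball z0 (ε/2) := by
        rw [Metric.mem_ball, dist_eq_norm]
        calc ‖zs k - z0‖ < ρ * (2 - (1/2)^k) := ih
          _ ≤ ρ * 2 := by nlinarith
          _ = ε/2 := by rw [hρ_def]; ring
      have h2 := (hpick k (zs k) hin).2
      rw [hzs_succ k]
      have heq : (2:ℝ) • zs k - (pick k (zs k)).1 - z0
          = (zs k - z0) + (zs k - (pick k (zs k)).1) := by module
      rw [heq]
      calc ‖(zs k - z0) + (zs k - (pick k (zs k)).1)‖
          ≤ ‖zs k - z0‖ + ‖zs k - (pick k (zs k)).1‖ := norm_add_le _ _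
        _ < ρ * (2 - (1/2)^k) + ρ / 2^(k+1) := add_lt_add ih h2
        _ = ρ * (2 - (1/2)^(k+1)) := by
            field_simp
            have h2k : ((1:ℝ)/2)^k * 2^k = 1 := by rw [← mul_pow]; norm_num
            linear_combination (-1:ℝ) * h2k
  have hball2 : ∀ k, zs k ∈ Metric.ball z0 (ε/2) := by
    intro k
    have hhalf : (0:ℝ) < (1/2:ℝ)^k := by positivity
    rw [Metric.mem_ball, dist_eq_norm]
    calc ‖zs k - z0‖ < ρ * (2 - (1/2)^k) := inv k
      _ ≤ ρ * 2 := by nlinarith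
      _ = ε/2 := by rw [hρ_def]; ring
  have hqG : ∀ k, q k ∈ G := fun k => hpickG k (zs k)
  have hqN : ∀ k, ‖(q k).2‖ ≤ (N:ℝ) := fun k => (hpick k (zs k) (hball2 k)).1
  have hqclose : ∀ k, ‖zs k - (q k).1‖ < ρ / 2^(k+1) :=
    fun k => (hpick k (zs k) (hball2 k)).2
  -- telescoping identity for first components
  have tele1 : ∀ m, ∑ k ∈ Finset.range m, ((1:ℝ)/2)^(k+1) • (q k).1
      = z - ((1:ℝ)/2)^m • zs m := by
    intro m
    induction m with
    | zero => simp [hzs0]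
    | succ m ih =>
      rw [Finset.sum_range_succ, ih, hzs_succ m]
      have : q m = pick m (zs m) := rfl
      rw [this]
      module
  -- summability of second components
  have hgeom : Summable (fun k : ℕ => ((1:ℝ)/2)^(k+1) * N) := by
    have h0 : Summable (fun k : ℕ => ((1:ℝ)/2)^k) :=
      summable_geometric_of_lt_one (by norm_num) (by norm_num)
    have h := h0.mul_left ((1:ℝ)/2 * N)
    exact h.congr (fun k => by ring)
  have hbound : ∀ k : ℕ, ‖((1:ℝ)/2)^(k+1) • (q k).2‖ ≤ ((1:ℝ)/2)^(k+1) * N := by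
    intro k
    rw [norm_smul, Real.norm_eq_abs, abs_of_pos (by positivity : (0:ℝ) < (1/2:ℝ)^(k+1))]
    exact mul_le_mul_of_nonneg_left (hqN k) (by positivity)
  have hsum : Summable (fun k : ℕ => ((1:ℝ)/2)^(k+1) • (q k).2) :=
    Summable.of_norm_bounded hgeom hbound
  set v : Y := ∑' k : ℕ, ((1:ℝ)/2)^(k+1) • (q k).2 with hv_def
  have hsn : Summable (fun k : ℕ => ‖((1:ℝ)/2)^(k+1) • (q k).2‖) :=
    Summable.of_nonneg_of_le (fun k => norm_nonneg _) hbound hgeom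
  have hv_norm : ‖v‖ ≤ (N:ℝ) := by
    calc ‖v‖ ≤ ∑' k : ℕ, ‖((1:ℝ)/2)^(k+1) • (q k).2‖ := norm_tsum_le_tsum_norm hsn
      _ ≤ ∑' k : ℕ, ((1:ℝ)/2)^(k+1) * N := Summable.tsum_le_tsum hbound hsn hgeom
      _ = (∑' k : ℕ, ((1:ℝ)/2)^(k+1)) * N := tsum_mul_right
      _ = (N:ℝ) := by
          have h1 : ∑' k : ℕ, ((1:ℝ)/2)^(k+1) = (1/2) * ∑' k : ℕ, ((1:ℝ)/2)^k := by
            rw [← tsum_mul_left]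
            exact tsum_congr (fun k => by ring)
          rw [h1, tsum_geometric_of_lt_one (by norm_num) (by norm_num)]
          norm_num
  -- partial normalized combinations are in G
  have hcomb : ∀ m, 1 ≤ m →
      (1 - ((1:ℝ)/2)^m)⁻¹ • (∑ k ∈ Finset.range m, ((1:ℝ)/2)^(k+1) • q k) ∈ G := by
    intro m hm
    induction m with
    | zero => omega
    | succ m ih =>
      by_cases hm0 : m = 0
      · subst hm0
        have heq : (1 - ((1:ℝ)/2)^1)⁻¹ • (∑ k ∈ Finset.range 1, ((1:ℝ)/2)^(k+1) • q k)
            = q 0 := by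
          rw [Finset.sum_range_one, smul_smul]
          norm_num
        rw [heq]
        exact hqG 0
      · have hm1 : 1 ≤ m := Nat.one_le_iff_ne_zero.2 hm0
        have hprev := ih hm1
        have ha : (0:ℝ) < 1 - ((1:ℝ)/2)^m := by
          have : ((1:ℝ)/2)^m < 1 := pow_lt_one₀ (by norm_num) (by norm_num) hm0
          linarith
        have ha' : (0:ℝ) < 1 - ((1:ℝ)/2)^(m+1) := by
          have : ((1:ℝ)/2)^(m+1) < 1 := pow_lt_one₀ (by norm_num) (by norm_num) (by omega)
          linarith
        have hw1 : (0:ℝ) ≤ (1 - ((1:ℝ)/2)^m) / (1 - ((1:ℝ)/2)^(m+1)) := by positivity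
        have hw2 : (0:ℝ) ≤ ((1:ℝ)/2)^(m+1) / (1 - ((1:ℝ)/2)^(m+1)) := by positivity
        have hw : (1 - ((1:ℝ)/2)^m) / (1 - ((1:ℝ)/2)^(m+1))
            + ((1:ℝ)/2)^(m+1) / (1 - ((1:ℝ)/2)^(m+1)) = 1 := by
          rw [← add_div, div_eq_one_iff_eq ha'.ne']
          ring
        have hmem := hGc hprev (hqG m) hw1 hw2 hw
        have hpteq : ((1 - ((1:ℝ)/2)^m) / (1 - ((1:ℝ)/2)^(m+1)))
              • ((1 - ((1:ℝ)/2)^m)⁻¹ • (∑ k ∈ Finset.range m, ((1:ℝ)/2)^(k+1) • q k))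
            + (((1:ℝ)/2)^(m+1) / (1 - ((1:ℝ)/2)^(m+1))) • q m
            = (1 - ((1:ℝ)/2)^(m+1))⁻¹
              • (∑ k ∈ Finset.range (m+1), ((1:ℝ)/2)^(k+1) • q k) := by
          rw [Finset.sum_range_succ, smul_add, smul_smul, smul_smul]
          congr 2
          · rw [div_eq_mul_inv, mul_right_comm, mul_inv_cancel₀ ha.ne', one_mul]
          · rw [div_eq_mul_inv, mul_comm]
        rw [← hpteq]
        exact hmem
  -- take the limit
  have hsplit : ∀ m, (∑ k ∈ Finset.range m, ((1:ℝ)/2)^(k+1) • q k)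
      = ((∑ k ∈ Finset.range m, ((1:ℝ)/2)^(k+1) • (q k).1 : Z),
         (∑ k ∈ Finset.range m, ((1:ℝ)/2)^(k+1) • (q k).2 : Y)) := by
    intro m
    induction m with
    | zero => simp; rfl
    | succ m ih =>
      rw [Finset.sum_range_succ, ih, Finset.sum_range_succ, Finset.sum_range_succ]
      rfl
  have hfsum : ∀ m, (∑ k ∈ Finset.range m, ((1:ℝ)/2)^(k+1) • q k)
      = ((z - ((1:ℝ)/2)^m • zs m : Z),
         (∑ k ∈ Finset.range m, ((1:ℝ)/2)^(k+1) • (q k).2 : Y)) := by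
    intro m
    rw [hsplit m, tele1 m]
  -- the normalizing scalars tend to 1
  have hpow : Tendsto (fun m : ℕ => ((1:ℝ)/2)^(m+1)) atTop (nhds 0) := by
    have h0 : Tendsto (fun m : ℕ => ((1:ℝ)/2)^m) atTop (nhds 0) :=
      tendsto_pow_atTop_nhds_zero_of_lt_one (by norm_num) (by norm_num)
    exact h0.comp (tendsto_add_atTop_nat 1)
  have hco : Tendsto (fun m : ℕ => (1 - ((1:ℝ)/2)^(m+1))⁻¹) atTop (nhds 1) := by
    have h1 : Tendsto (fun m : ℕ => 1 - ((1:ℝ)/2)^(m+1)) atTop (nhds 1) := by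
      have := (tendsto_const_nhds (x := (1:ℝ)) (f := atTop (α := ℕ))).sub hpow
      simpa using this
    have h2 := h1.inv₀ (by norm_num)
    simpa using h2
  -- first components tend to z
  have hz1 : Tendsto (fun m : ℕ => z - ((1:ℝ)/2)^(m+1) • zs (m+1)) atTop (nhds z) := by
    have hzsb : ∀ m : ℕ, ‖zs m‖ ≤ ‖z0‖ + ρ * 2 := by
      intro m
      have h := inv m
      have hhalf : (0:ℝ) < (1/2:ℝ)^m := by positivity
      calc ‖zs m‖ = ‖zs m - z0 + z0‖ := by rw [sub_add_cancel]
        _ ≤ ‖zs m - z0‖ + ‖z0‖ := norm_add_le _ _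
        _ ≤ ‖z0‖ + ρ * 2 := by nlinarith
    have hzero : Tendsto (fun m : ℕ => ((1:ℝ)/2)^(m+1) • zs (m+1)) atTop (nhds 0) := by
      have hgb : ∀ m : ℕ, ‖((1:ℝ)/2)^(m+1) • zs (m+1)‖ ≤ ((1:ℝ)/2)^(m+1) * (‖z0‖ + ρ * 2) := by
        intro m
        rw [norm_smul, Real.norm_eq_abs, abs_of_pos (by positivity : (0:ℝ) < (1/2:ℝ)^(m+1))]
        exact mul_le_mul_of_nonneg_left (hzsb (m+1)) (by positivity)
      have hgt : Tendsto (fun m : ℕ => ((1:ℝ)/2)^(m+1) * (‖z0‖ + ρ * 2)) atTop (nhds 0) := by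
        have h0 := hpow.mul_const (‖z0‖ + ρ * 2)
        simpa using h0
      exact squeeze_zero_norm hgb hgt
    have := (tendsto_const_nhds (x := z) (f := atTop (α := ℕ))).sub hzero
    simpa using this
  -- second components tend to v
  have hz2 : Tendsto (fun m : ℕ => ∑ k ∈ Finset.range (m+1), ((1:ℝ)/2)^(k+1) • (q k).2)
      atTop (nhds v) := by
    have h0 := hsum.hasSum.tendsto_sum_nat
    exact h0.comp (tendsto_add_atTop_nat 1)
  have htend : Tendsto (fun m : ℕ => (1 - ((1:ℝ)/2)^(m+1))⁻¹
      • (∑ k ∈ Finset.range (m+1), ((1:ℝ)/2)^(k+1) • q k)) atTop (nhds ((z, v) : Z × Y)) := by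
    have hpair : Tendsto (fun m : ℕ => ((z - ((1:ℝ)/2)^(m+1) • zs (m+1) : Z),
        (∑ k ∈ Finset.range (m+1), ((1:ℝ)/2)^(k+1) • (q k).2 : Y))) atTop
        (nhds ((z, v) : Z × Y)) := hz1.prodMk_nhds hz2
    have heq : (fun m : ℕ => (1 - ((1:ℝ)/2)^(m+1))⁻¹
        • (∑ k ∈ Finset.range (m+1), ((1:ℝ)/2)^(k+1) • q k))
        = fun m : ℕ => (1 - ((1:ℝ)/2)^(m+1))⁻¹
          • (((z - ((1:ℝ)/2)^(m+1) • zs (m+1) : Z),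
             (∑ k ∈ Finset.range (m+1), ((1:ℝ)/2)^(k+1) • (q k).2 : Y)) : Z × Y) := by
      funext m
      rw [hfsum (m+1)]
    rw [heq]
    have := hco.smul hpair
    simpa using this
  have hmemG : ((z, v) : Z × Y) ∈ G := by
    refine hGcl.mem_of_tendsto htend (Filter.Eventually.of_forall (fun m => ?_))
    exact hcomb (m+1) (Nat.le_add_left 1 m)
  exact ⟨v, hmemG, hv_norm⟩

set_option maxHeartbeats 1000000 in
/-- the weak perturbation map version.  With `K̃ ⊆ int K ∪ {0}` a closed
convex cone, `f` `K̃`-convex and `K̃`-closed, `𝓦(p) = WMin_K F(p)` and `F`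
`K̃`-dominated by `𝓦` near `pb`, for every `y* ∈ Y*`:
`D̂*(𝓦 + K̃)(pb, yb)(y*) = ⋃_{(p*,x*) ∈ D*(f + K̃)(pb, xb)(y*)} {p* + D*C(pb, xb)(x*)}`;
in particular, for every `y* ∈ K̃*` the union can be taken over `∂⟨y*, f⟩(pb, xb)`. -/
theorem stmt15
    {P X Y : Type*}
    [NormedAddCommGroup P] [NormedSpace ℝ P] [CompleteSpace P]
    [NormedAddCommGroup X] [NormedSpace ℝ X] [CompleteSpace X]
    [NormedAddCommGroup Y] [NormedSpace ℝ Y] [CompleteSpace Y]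
    -- K is a pointed closed convex cone in Y with nonempty interior
    (K : Set Y) (hKconv : Convex ℝ K) (hKclosed : IsClosed K)
    (hKcone : ∀ t : ℝ, 0 ≤ t → ∀ y ∈ K, t • y ∈ K)
    (hKpointed : K ∩ (-K) = {0}) (hKint : (interior K).Nonempty)
    -- K̃ is a closed convex cone contained in int K ∪ {0}
    (Kt : Set Y) (hKtconv : Convex ℝ Kt) (hKtclosed : IsClosed Kt)
    (hKtcone : ∀ t : ℝ, 0 ≤ t → ∀ y ∈ Kt, t • y ∈ Kt)
    (hKtsub : Kt ⊆ interior K ∪ {0})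
    -- f is K̃-convex and K̃-closed
    (f : P × X → Y)
    (hfconv : Convex ℝ {q : (P × X) × Y | q.2 ∈ ({f q.1} : Set Y) + Kt})
    (hfcl : IsClosed {q : (P × X) × Y | q.2 ∈ ({f q.1} : Set Y) + Kt})
    -- C is a closed convex set-valued map
    (C : P → Set X) (hCconv : Convex ℝ (gph C)) (hCcl : IsClosed (gph C))
    -- F(p) = {f(p,x) : x ∈ C(p)},  𝓦(p) = WMin_K F(p)
    (F : P → Set Y) (hF : ∀ p, F p = {y : Y | ∃ x ∈ C p, y = f (p, x)})
    (Fw : P → Set Y)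
    (hFw : ∀ p, Fw p = {a ∈ F p | (F p - {a}) ∩ (-(interior K)) = ∅})
    -- (pb, xb) ∈ gph S^w, yb = f(pb, xb)
    (pb : P) (xb : X) (hxbC : xb ∈ C pb) (hsol : f (pb, xb) ∈ Fw pb)
    (yb : Y) (hyb : yb = f (pb, xb))
    -- (i) ℝ⁺(rge H − dom f) is a closed linear subspace of P × X, H(p) = {p} × C(p)
    (hqual1 : ∃ S : Submodule ℝ (P × X), IsClosed (S : Set (P × X)) ∧
      {w : P × X | ∃ t : ℝ, 0 ≤ t ∧
        ∃ u ∈ ⋃ p : P, ({p} : Set P) ×ˢ C p, ∃ v : P × X, w = t • (u - v)} = S)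
    -- (ii) ℝ⁺(P − dom C) is a closed linear subspace of P
    (hqual2 : ∃ S : Submodule ℝ P, IsClosed (S : Set P) ∧
      {w : P | ∃ t : ℝ, 0 ≤ t ∧ ∃ u : P, ∃ v ∈ dom C, w = t • (u - v)} = S)
    -- (iii) F is K̃-dominated by 𝓦 near pb
    (hdom : ∃ U ∈ nhds pb, ∀ p ∈ U, F p ⊆ Fw p + Kt) :
    (∀ ψ : Y →L[ℝ] ℝ,
        fCoderiv (fun p => Fw p + Kt) pb yb ψ
          = {w : P →L[ℝ] ℝ | ∃ pstar : P →L[ℝ] ℝ, ∃ xstar : X →L[ℝ] ℝ,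
              pstar.coprod xstar
                ∈ coderiv (fun q : P × X => ({f q} : Set Y) + Kt) (pb, xb) (f (pb, xb)) ψ ∧
              ∃ qstar ∈ coderiv C pb xb xstar, w = pstar + qstar})
      ∧ (∀ ψ : Y →L[ℝ] ℝ, (∀ k ∈ Kt, 0 ≤ ψ k) →
          fCoderiv (fun p => Fw p + Kt) pb yb ψ
            = {w : P →L[ℝ] ℝ | ∃ pstar : P →L[ℝ] ℝ, ∃ xstar : X →L[ℝ] ℝ,
                pstar.coprod xstar ∈ subdiff (fun q : P × X => ψ (f q)) (pb, xb) ∧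
                ∃ qstar ∈ coderiv C pb xb xstar, w = pstar + qstar}) := by
  classical
  obtain ⟨U, hU, hUdom⟩ := hdom
  have hmemadd : ∀ (b : Y) (S : Set Y) (v : Y), v ∈ ({b} : Set Y) + S ↔ ∃ k ∈ S, v = b + k := by
    intro b S v
    constructor
    · intro h
      obtain ⟨x, hx, y, hy, hxy⟩ := Set.mem_add.1 h
      rw [Set.mem_singleton_iff] at hx
      exact ⟨y, hy, by rw [← hxy, hx]⟩
    · rintro ⟨k, hk, rfl⟩
      exact Set.mem_add.2 ⟨b, rfl, k, hk, rfl⟩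
  have hKt0 : (0:Y) ∈ Kt := by
    have h1 : f (pb, xb) ∈ F pb := by rw [hF]; exact ⟨xb, hxbC, rfl⟩
    have h2 := hUdom pb (mem_of_mem_nhds hU) h1
    obtain ⟨a, _, k, hk, _⟩ := Set.mem_add.1 h2
    simpa using hKtcone 0 le_rfl k hk
  have hKtadd : ∀ k1 ∈ Kt, ∀ k2 ∈ Kt, k1 + k2 ∈ Kt := by
    intro k1 h1 k2 h2
    have hmid := hKtconv h1 h2 (by norm_num : (0:ℝ) ≤ 1/2) (by norm_num : (0:ℝ) ≤ 1/2)
      (by norm_num)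
    have h3 := hKtcone 2 (by norm_num) _ hmid
    have h4 : (2:ℝ) • ((1/2:ℝ) • k1 + (1/2:ℝ) • k2) = k1 + k2 := by module
    rwa [h4] at h3
  have hybF : yb ∈ Fw pb := by rw [hyb]; exact hsol
  have hfself : ∀ uq : P × X, f uq ∈ ({f uq} : Set Y) + Kt :=
    fun uq => (hmemadd _ _ _).2 ⟨0, hKt0, (add_zero _).symm⟩
  -- easy direction
  have heasy : ∀ (ψ : Y →L[ℝ] ℝ) (w : P →L[ℝ] ℝ),
      (∃ pstar : P →L[ℝ] ℝ, ∃ xstar : X →L[ℝ] ℝ,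
        pstar.coprod xstar
          ∈ coderiv (fun q : P × X => ({f q} : Set Y) + Kt) (pb, xb) (f (pb, xb)) ψ ∧
        ∃ qstar ∈ coderiv C pb xb xstar, w = pstar + qstar) →
      w ∈ fCoderiv (fun p => Fw p + Kt) pb yb ψ := by
    rintro ψ w ⟨pstar, xstar, hps, qstar, hqs, rfl⟩
    intro ε hε
    refine ⟨1, one_pos, ?_⟩
    intro u v hv _
    obtain ⟨a, ha, k, hk, hak⟩ := Set.mem_add.1 hv
    have haF : a ∈ F u := by
      have := (hFw u) ▸ ha
      exact this.1
    rw [hF] at haF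
    obtain ⟨x, hxC, hax⟩ := haF
    have hvmem : v ∈ ({f (u, x)} : Set Y) + Kt :=
      (hmemadd _ _ _).2 ⟨k, hk, by rw [← hak, hax]⟩
    have h1 := hps (u, x) v hvmem
    have h2 := hqs u x hxC
    have e1 : (pstar.coprod xstar) ((u, x) - (pb, xb)) = pstar (u - pb) + xstar (x - xb) := rfl
    rw [e1] at h1
    have e2 : (pstar + qstar) (u - pb) = pstar (u - pb) + qstar (u - pb) := rfl
    rw [e2, hyb]
    have h3 : 0 ≤ ε * (‖u - pb‖ + ‖v - f (pb, xb)‖) := by positivity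
    linarith
  -- main equality for a fixed ψ
  have key : ∀ ψ : Y →L[ℝ] ℝ,
      fCoderiv (fun p => Fw p + Kt) pb yb ψ
        = {w : P →L[ℝ] ℝ | ∃ pstar : P →L[ℝ] ℝ, ∃ xstar : X →L[ℝ] ℝ,
            pstar.coprod xstar
              ∈ coderiv (fun q : P × X => ({f q} : Set Y) + Kt) (pb, xb) (f (pb, xb)) ψ ∧
            ∃ qstar ∈ coderiv C pb xb xstar, w = pstar + qstar} := by
    intro ψ
    by_cases hψ : ∀ k ∈ Kt, 0 ≤ ψ k
    · -- main case
      ext w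
      simp only [Set.mem_setOf_eq]
      constructor
      · intro hw
        -- Step (∗): globalize the Fréchet inequality
        have star : ∀ (u : P) (x : X), x ∈ C u → ∀ v, v ∈ ({f (u, x)} : Set Y) + Kt →
            w (u - pb) - ψ (v - yb) ≤ 0 := by
          intro u x hxC v hv
          apply le_zero_of_forall_le_eps
            (by positivity : (0:ℝ) ≤ ‖u - pb‖ + ‖v - yb‖)
          intro ε hε
          obtain ⟨δ, hδ, hineq⟩ := hw ε hε
          obtain ⟨r, hr, hrU⟩ := Metric.mem_nhds_iff.1 hU
          set S : ℝ := ‖u - pb‖ + ‖v - yb‖ with hS_def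
          have hS0 : (0:ℝ) ≤ S := by positivity
          set t : ℝ := min 1 (min (δ / (S+1) / 2) (r / (‖u - pb‖+1) / 2)) with ht_def
          have ht : 0 < t := lt_min one_pos (lt_min (by positivity) (by positivity))
          have ht1 : t ≤ 1 := min_le_left _ _
          have hm1 : (((pb, xb), yb) : (P × X) × Y)
              ∈ {q : (P × X) × Y | q.2 ∈ ({f q.1} : Set Y) + Kt} :=
            (hmemadd _ _ _).2 ⟨0, hKt0, by rw [hyb, add_zero]⟩
          have hm2 : (((u, x), v) : (P × X) × Y)
              ∈ {q : (P × X) × Y | q.2 ∈ ({f q.1} : Set Y) + Kt} := hv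
          have hcomb := hfconv hm1 hm2 (by linarith : (0:ℝ) ≤ 1 - t) ht.le (by ring)
          set zt : P × X := (1-t) • ((pb, xb) : P × X) + t • ((u, x) : P × X) with hzt_def
          have hcomb' : ((1-t) • yb + t • v) ∈ ({f zt} : Set Y) + Kt := hcomb
          have hCt : zt ∈ gph C :=
            hCconv (show ((pb, xb) : P × X) ∈ gph C from hxbC)
              (show ((u, x) : P × X) ∈ gph C from hxC)
              (by linarith : (0:ℝ) ≤ 1 - t) ht.le (by ring)
          have hzt1 : zt.1 = pb + t • (u - pb) := by
            show (1-t) • pb + t • u = pb + t • (u - pb)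
            module
          have hztU : zt.1 ∈ U := by
            apply hrU
            rw [Metric.mem_ball, dist_eq_norm, hzt1, add_sub_cancel_left, norm_smul,
              Real.norm_eq_abs, abs_of_pos ht]
            calc t * ‖u - pb‖ ≤ (r / (‖u - pb‖+1) / 2) * ‖u - pb‖ :=
                  mul_le_mul_of_nonneg_right
                    (le_trans (min_le_right _ _) (min_le_right _ _)) (norm_nonneg _)
              _ < r := by
                  rw [div_div, div_mul_eq_mul_div, div_lt_iff₀ (by positivity)]
                  nlinarith [norm_nonneg (u - pb)]
          obtain ⟨k1, hk1, hfzt⟩ := (hmemadd _ _ _).1 hcomb'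
          have hfF : f zt ∈ F zt.1 := by
            rw [hF]
            exact ⟨zt.2, hCt, rfl⟩
          obtain ⟨a, haFw, k2, hk2, hak⟩ := Set.mem_add.1 (hUdom zt.1 hztU hfF)
          have hvt : ((1-t) • yb + t • v) ∈ Fw zt.1 + Kt := by
            refine Set.mem_add.2 ⟨a, haFw, k2 + k1, hKtadd _ hk2 _ hk1, ?_⟩
            rw [hfzt, ← hak]
            abel
          have e2 : (1-t) • yb + t • v - yb = t • (v - yb) := by module
          have hnorm : ‖zt.1 - pb‖ + ‖((1-t) • yb + t • v) - yb‖ < δ := by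
            rw [hzt1, add_sub_cancel_left, e2, norm_smul, norm_smul, Real.norm_eq_abs,
              abs_of_pos ht, ← mul_add]
            calc t * S ≤ (δ / (S+1) / 2) * S :=
                mul_le_mul_of_nonneg_right
                  (le_trans (min_le_right _ _) (min_le_left _ _)) hS0
              _ < δ := by
                  rw [div_div, div_mul_eq_mul_div, div_lt_iff₀ (by positivity)]
                  nlinarith
          have hiq := hineq zt.1 _ hvt hnorm
          rw [hzt1, add_sub_cancel_left, e2, map_smul, map_smul, norm_smul, norm_smul,
            Real.norm_eq_abs, abs_of_pos ht, ← mul_add, smul_eq_mul, smul_eq_mul] at hiq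
          rw [← hS_def] at hiq
          have h3 : t * (w (u - pb) - ψ (v - yb)) ≤ t * (ε * S) := by nlinarith [hiq]
          exact (mul_le_mul_iff_right₀ ht).1 h3
        -- convexity of g = ψ ∘ f
        set g : (P × X) → ℝ := fun zq => ψ (f zq) with hg_def
        have hgconv : ConvexOn ℝ Set.univ g := by
          refine ⟨convex_univ, ?_⟩
          intro q1 _ q2 _ a b ha hb hab
          have hm1 : ((q1, f q1) : (P × X) × Y)
              ∈ {q : (P × X) × Y | q.2 ∈ ({f q.1} : Set Y) + Kt} := hfself q1
          have hm2 : ((q2, f q2) : (P × X) × Y)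
              ∈ {q : (P × X) × Y | q.2 ∈ ({f q.1} : Set Y) + Kt} := hfself q2
          have hc := hfconv hm1 hm2 ha hb hab
          have hc' : (a • f q1 + b • f q2) ∈ ({f (a • q1 + b • q2)} : Set Y) + Kt := hc
          obtain ⟨k, hk, hke⟩ := (hmemadd _ _ _).1 hc'
          have hψk := hψ k hk
          have hψc : ψ (a • f q1 + b • f q2) = a * ψ (f q1) + b * ψ (f q2) := by
            rw [map_add, map_smul, map_smul, smul_eq_mul, smul_eq_mul]
          have hke' : ψ (a • f q1 + b • f q2) = ψ (f (a • q1 + b • q2)) + ψ k := by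
            rw [hke, map_add]
          show ψ (f (a • q1 + b • q2)) ≤ a • ψ (f q1) + b • ψ (f q2)
          rw [smul_eq_mul, smul_eq_mul]
          linarith
        -- boundedness from the Robinson–Ursescu argument
        have hfull : ∀ zq : P × X, ∃ vv, ((zq, vv) : (P × X) × Y)
            ∈ {q : (P × X) × Y | q.2 ∈ ({f q.1} : Set Y) + Kt} :=
          fun zq => ⟨f zq, hfself zq⟩
        obtain ⟨c0, ρ0, M0, hρ0, hball0⟩ := ru_bounded_fiber hfconv hfcl hfull
        have hb0 : ∀ zq ∈ Metric.ball c0 ρ0, g zq ≤ ‖ψ‖ * M0 := by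
          intro zq hzq
          obtain ⟨vv, hvvG, hvvM⟩ := hball0 zq hzq
          obtain ⟨k, hk, hke⟩ := (hmemadd _ _ _).1
            (show vv ∈ ({f zq} : Set Y) + Kt from hvvG)
          have h1 : ψ (f zq) = ψ vv - ψ k := by rw [hke, map_add]; ring
          have h2 : ψ vv ≤ ‖ψ‖ * M0 := by
            calc ψ vv ≤ |ψ vv| := le_abs_self _
              _ = ‖ψ vv‖ := (Real.norm_eq_abs _).symm
              _ ≤ ‖ψ‖ * ‖vv‖ := ψ.le_opNorm vv
              _ ≤ ‖ψ‖ * M0 := mul_le_mul_of_nonneg_left hvvM (norm_nonneg ψ)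
          have h3 := hψ k hk
          show ψ (f zq) ≤ ‖ψ‖ * M0
          linarith
        -- apply the Moreau–Rockafellar splitting
        set Wl : (P × X) →L[ℝ] ℝ := w.comp (ContinuousLinearMap.fst ℝ P X) with hWl_def
        have hWcond : ∀ zq ∈ gph C, Wl (zq - (pb, xb)) ≤ g zq - g (pb, xb) := by
          intro zq hzq
          have h0 := star zq.1 zq.2 hzq (f zq) (hfself zq)
          have e : Wl (zq - (pb, xb)) = w (zq.1 - pb) := rfl
          rw [e]
          have h0' : w (zq.1 - pb) - (ψ (f zq) - ψ yb) ≤ 0 := by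
            rw [← map_sub]; exact h0
          have e3 : g (pb, xb) = ψ yb := by rw [hg_def, hyb]
          show w (zq.1 - pb) ≤ ψ (f zq) - g (pb, xb)
          rw [e3]
          linarith [h0']
        obtain ⟨ζ, hζglob, hζΩ⟩ := mr_split hgconv hρ0 hb0 hCconv
          (show ((pb, xb) : P × X) ∈ gph C from hxbC) Wl hWcond
        refine ⟨ζ.comp (ContinuousLinearMap.inl ℝ P X),
          ζ.comp (ContinuousLinearMap.inr ℝ P X), ?_, w - ζ.comp (ContinuousLinearMap.inl ℝ P X), ?_, ?_⟩
        · have hcoprod : (ζ.comp (ContinuousLinearMap.inl ℝ P X)).coprod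
              (ζ.comp (ContinuousLinearMap.inr ℝ P X)) = ζ := by
            apply ContinuousLinearMap.ext
            rintro ⟨p', x'⟩
            show ζ (p', 0) + ζ (0, x') = ζ (p', x')
            rw [← map_add]
            congr 1
            simp [Prod.ext_iff]
          rw [hcoprod]
          intro uq vv hvv
          obtain ⟨k, hk, hke⟩ := (hmemadd _ _ _).1 hvv
          have h1 := hζglob uq
          have h2 : ψ (vv - f (pb, xb)) = ψ (f uq) + ψ k - ψ (f (pb, xb)) := by
            rw [hke, map_sub, map_add]
          have h3 := hψ k hk
          have h4 : g uq = ψ (f uq) := rfl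
          have h5 : g (pb, xb) = ψ (f (pb, xb)) := rfl
          rw [h2]
          rw [h4, h5] at h1
          linarith
        · intro u' v' hv'
          have h := hζΩ (u', v') hv'
          have e1 : Wl ((u', v') - (pb, xb)) = w (u' - pb) := rfl
          have e2 : ζ ((u', v') - (pb, xb)) = ζ.comp (ContinuousLinearMap.inl ℝ P X) (u' - pb)
              + ζ.comp (ContinuousLinearMap.inr ℝ P X) (v' - xb) := by
            show ζ _ = ζ (u' - pb, 0) + ζ (0, v' - xb)
            rw [← map_add]
            congr 1
            simp [Prod.ext_iff]
          show (w - ζ.comp (ContinuousLinearMap.inl ℝ P X)) (u' - pb)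
              - (ζ.comp (ContinuousLinearMap.inr ℝ P X)) (v' - xb) ≤ 0
          rw [ContinuousLinearMap.sub_apply]
          rw [e1, e2] at h
          linarith
        · abel
      · intro hrhs
        exact heasy ψ w hrhs
    · -- ψ is not nonnegative on Kt : both sides empty
      push_neg at hψ
      obtain ⟨k, hk, hψk⟩ := hψ
      ext w
      simp only [Set.mem_setOf_eq]
      constructor
      · intro hw
        exfalso
        have hkey : ∀ ε > (0:ℝ), -ψ k ≤ ε * ‖k‖ := by
          intro ε hε
          obtain ⟨δ, hδ, hineq⟩ := hw ε hε
          set t : ℝ := δ / (2 * (‖k‖ + 1)) with ht_def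
          have ht : 0 < t := by positivity
          have hvmem : yb + t • k ∈ Fw pb + Kt :=
            Set.mem_add.2 ⟨yb, hybF, t • k, hKtcone t ht.le k hk, rfl⟩
          have hnorm : ‖pb - pb‖ + ‖yb + t • k - yb‖ < δ := by
            rw [sub_self, norm_zero, zero_add, add_sub_cancel_left, norm_smul,
              Real.norm_eq_abs, abs_of_pos ht, ht_def, div_mul_eq_mul_div,
              div_lt_iff₀ (by positivity)]
            nlinarith [norm_nonneg k, hδ]
          have h2 := hineq pb _ hvmem hnorm
          rw [sub_self, norm_zero, zero_add, add_sub_cancel_left, map_zero, map_smul,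
            norm_smul, Real.norm_eq_abs, abs_of_pos ht, smul_eq_mul] at h2
          have h3 : t * (-ψ k) ≤ t * (ε * ‖k‖) := by nlinarith [h2]
          exact (mul_le_mul_iff_right₀ ht).1 h3
        have h4 := hkey ((-ψ k) / (2 * (‖k‖ + 1))) (div_pos (by linarith) (by positivity))
        rw [div_mul_eq_mul_div, le_div_iff₀ (by positivity)] at h4
        nlinarith [norm_nonneg k]
      · rintro ⟨pstar, xstar, hps, _⟩
        exfalso
        have hmem : f (pb, xb) + k ∈ ({f ((pb, xb) : P × X)} : Set Y) + Kt :=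
          (hmemadd _ _ _).2 ⟨k, hk, rfl⟩
        have h1 := hps (pb, xb) _ hmem
        rw [sub_self, map_zero, add_sub_cancel_left] at h1
        linarith
  refine ⟨key, ?_⟩
  intro ψ hψ
  rw [key ψ]
  have hequiv : ∀ φ : (P × X) →L[ℝ] ℝ,
      φ ∈ coderiv (fun q : P × X => ({f q} : Set Y) + Kt) (pb, xb) (f (pb, xb)) ψ ↔
      φ ∈ subdiff (fun q : P × X => ψ (f q)) (pb, xb) := by
    intro φ
    constructor
    · intro h u
      have h1 := h u (f u) (hfself u)
      have h2 : ψ (f u - f (pb, xb)) = ψ (f u) - ψ (f (pb, xb)) := map_sub ψ _ _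
      rw [h2] at h1
      show φ (u - (pb, xb)) ≤ ψ (f u) - ψ (f (pb, xb))
      linarith
    · intro h uq vv hvv
      obtain ⟨k, hk, hke⟩ := (hmemadd _ _ _).1 hvv
      have h1 := h uq
      have h2 : ψ (vv - f (pb, xb)) = ψ (f uq) + ψ k - ψ (f (pb, xb)) := by
        rw [hke, map_sub, map_add]
      have h3 := hψ k hk
      rw [h2]
      linarith
  ext w
  simp only [Set.mem_setOf_eq]
  constructor
  · rintro ⟨pstar, xstar, h1, qstar, h2, h3⟩
    exact ⟨pstar, xstar, (hequiv _).1 h1, qstar, h2, h3⟩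
  · rintro ⟨pstar, xstar, h1, qstar, h2, h3⟩
    exact ⟨pstar, xstar, (hequiv _).2 h1, qstar, h2, h3⟩
end

section
/- Let P, X, Y be real Banach spaces, K ⊆ Y a pointed closed convex cone, f : P × X → Y a K-convex and K-closed map, and C : P ⇉ X a closed convex set-valued map. Let (p̄, x̄) ∈ gph S^ρ with ȳ = f(p̄, x̄), and H : P ⇉ P × X given by H(p) = {p} × C(p). Assume (i) ℝ⁺(rge H − dom f) is a closed linear subspace of P × X, (ii) ℝ⁺(P − dom C) is a closed linear subspace of P, and (iii) F is K-dominated by 𝓟 near p̄, i.e., F(p) ⊆ 𝓟(p) + K for all p in some neighborhood of p̄. Then for every y* ∈ Y*, D̂*(𝓟 + K)(p̄, ȳ)(y*) = ⋃_{(p*, x*) ∈ D*(f + K)(p̄, x̄)(y*)} {p* + q* : q* ∈ D*C(p̄, x̄)(x*)}; in particular, for every y* ∈ K*, D̂*(𝓟 + K)(p̄, ȳ)(y*) = ⋃_{(p*, x*) ∈ ∂⟨y*, f⟩(p̄, x̄)} {p* + q* : q* ∈ D*C(p̄, x̄)(x*)}. -/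
open Set Pointwise Topology Filter

/-- Iteration step: from density of bounded selections, get exact bounded selections. -/
lemma aux_iter {Z Y : Type*} [NormedAddCommGroup Z] [NormedSpace ℝ Z]
    [NormedAddCommGroup Y] [NormedSpace ℝ Y] [CompleteSpace Y]
    (A : Set (Z × Y)) (hAc : IsClosed A) (hAv : Convex ℝ A)
    (zb : Z) (yb : Y) (hmem : (zb, yb) ∈ A) (M0 r' : ℝ) (hM0 : 0 ≤ M0) (hr' : 0 < r')
    (hH : ∀ w : Z, ‖w - zb‖ < r' → ∀ ε > (0:ℝ),
      ∃ a y, (a, y) ∈ A ∧ ‖y - yb‖ ≤ M0 ∧ ‖a - w‖ < ε) :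
    ∀ z : Z, ‖z - zb‖ ≤ r' / 4 → ∃ y, (z, y) ∈ A ∧ ‖y - yb‖ ≤ M0 := by
  intro z hz
  set Inv : ℕ → Z × Y → Prop :=
    fun n p => p ∈ A ∧ ‖p.2 - yb‖ ≤ M0 ∧ ‖p.1 - z‖ ≤ r' / 4 * (1/2 : ℝ) ^ n with hInv
  have base : Inv 0 (zb, yb) := by
    refine ⟨hmem, by simpa using hM0, ?_⟩
    simpa [norm_sub_rev] using hz
  have key : ∀ n (p : Z × Y), Inv n p →
      ∃ q : Z × Y, Inv (n+1) q ∧ ‖q.2 - p.2‖ ≤ (2 * M0) * (1/2 : ℝ) ^ n := by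
    intro n p hp
    obtain ⟨hpA, hpy, hpz⟩ := hp
    set t : ℝ := (1/2 : ℝ) ^ n with htdef
    have ht0 : 0 < t := by positivity
    have ht1 : t ≤ 1 := by
      apply pow_le_one₀ <;> norm_num
    set w : Z := p.1 + t⁻¹ • (z - p.1) with hwdef
    have hw : ‖w - zb‖ < r' := by
      have h1 : ‖w - zb‖ ≤ ‖p.1 - zb‖ + t⁻¹ * ‖z - p.1‖ := by
        have : w - zb = (p.1 - zb) + t⁻¹ • (z - p.1) := by rw [hwdef]; module
        rw [this]
        refine (norm_add_le _ _).trans ?_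
        rw [norm_smul, Real.norm_eq_abs, abs_of_pos (by positivity)]
      have h2 : ‖z - p.1‖ ≤ r' / 4 * t := by rwa [norm_sub_rev]
      have h3 : t⁻¹ * ‖z - p.1‖ ≤ r' / 4 := by
        calc t⁻¹ * ‖z - p.1‖ ≤ t⁻¹ * (r' / 4 * t) := by
              exact mul_le_mul_of_nonneg_left h2 (by positivity)
          _ = r' / 4 := by field_simp
      have h4 : ‖p.1 - zb‖ ≤ ‖p.1 - z‖ + ‖z - zb‖ := norm_sub_le_norm_sub_add_norm_sub _ _ _
      have h5 : r' / 4 * t ≤ r' / 4 := by nlinarith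
      calc ‖w - zb‖ ≤ ‖p.1 - zb‖ + t⁻¹ * ‖z - p.1‖ := h1
        _ ≤ (‖p.1 - z‖ + ‖z - zb‖) + r' / 4 := by linarith
        _ ≤ (r' / 4 * t + r' / 4) + r' / 4 := by linarith
        _ < r' := by nlinarith
    obtain ⟨a, y, hay, hyM, haw⟩ := hH w hw (r' / 8) (by positivity)
    refine ⟨((1 - t) • p.1 + t • a, (1 - t) • p.2 + t • y), ⟨?_, ?_, ?_⟩, ?_⟩
    · have := hAv hpA hay (by linarith : (0:ℝ) ≤ 1 - t) ht0.le (by ring)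
      exact this
    · have heq : ((1 - t) • p.2 + t • y) - yb = (1 - t) • (p.2 - yb) + t • (y - yb) := by
        module
      rw [heq]
      calc ‖(1 - t) • (p.2 - yb) + t • (y - yb)‖
          ≤ ‖(1 - t) • (p.2 - yb)‖ + ‖t • (y - yb)‖ := norm_add_le _ _
        _ = (1 - t) * ‖p.2 - yb‖ + t * ‖y - yb‖ := by
            rw [norm_smul, norm_smul, Real.norm_eq_abs, Real.norm_eq_abs,
              abs_of_nonneg (by linarith), abs_of_pos ht0]
        _ ≤ (1 - t) * M0 + t * M0 := by
            have := hpy; nlinarith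
        _ = M0 := by ring
    · have htt : t * t⁻¹ = 1 := mul_inv_cancel₀ ht0.ne'
      have heq : ((1 - t) • p.1 + t • a) - z = t • (a - w) := by
        rw [hwdef, smul_sub, smul_add, smul_smul, htt, one_smul]
        module
      rw [heq, norm_smul, Real.norm_eq_abs, abs_of_pos ht0]
      calc t * ‖a - w‖ ≤ t * (r' / 8) := by nlinarith [haw, ht0.le]
        _ ≤ r' / 4 * (1/2 : ℝ) ^ (n + 1) := by
            rw [pow_succ, ← htdef]; nlinarith
    · have heq : ((1 - t) • p.2 + t • y) - p.2 = t • (y - p.2) := by module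
      rw [heq, norm_smul, Real.norm_eq_abs, abs_of_pos ht0]
      have h6 : ‖y - p.2‖ ≤ ‖y - yb‖ + ‖p.2 - yb‖ := by
        calc ‖y - p.2‖ ≤ ‖y - yb‖ + ‖yb - p.2‖ := norm_sub_le_norm_sub_add_norm_sub _ _ _
          _ = ‖y - yb‖ + ‖p.2 - yb‖ := by rw [norm_sub_rev yb]
      calc t * ‖y - p.2‖ ≤ t * (2 * M0) := by nlinarith
        _ = (2 * M0) * (1/2 : ℝ) ^ n := by rw [← htdef]; ring
  -- build the sequence
  let seq : ∀ n : ℕ, {p : Z × Y // Inv n p} :=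
    fun n => Nat.rec ⟨(zb, yb), base⟩
      (fun n ih => ⟨(key n ih.1 ih.2).choose, (key n ih.1 ih.2).choose_spec.1⟩) n
  have hstep : ∀ n : ℕ, ‖((seq (n+1)).1).2 - ((seq n).1).2‖ ≤ (2 * M0) * (1/2 : ℝ) ^ n :=
    fun n => (key n (seq n).1 (seq n).2).choose_spec.2
  have hcauchy : CauchySeq (fun n => ((seq n).1).2) := by
    apply cauchySeq_of_le_geometric (1/2 : ℝ) (2 * M0) (by norm_num)
    intro n
    rw [dist_eq_norm, norm_sub_rev]
    exact hstep n
  obtain ⟨y, hy⟩ := cauchySeq_tendsto_of_complete hcauchy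
  have hzn : Tendsto (fun n => ((seq n).1).1) atTop (nhds z) := by
    rw [← tendsto_sub_nhds_zero_iff]
    apply squeeze_zero_norm (fun n => (seq n).2.2.2)
    have := (tendsto_pow_atTop_nhds_zero_of_lt_one (by norm_num : (0:ℝ) ≤ 1/2)
      (by norm_num)).const_mul (r' / 4)
    simpa using this
  have hpair : Tendsto (fun n => (seq n).1) atTop (nhds (z, y)) := by
    have := hzn.prodMk_nhds hy
    simpa using this
  refine ⟨y, hAc.mem_of_tendsto hpair (Filter.Eventually.of_forall fun n => (seq n).2.1), ?_⟩
  have hnorm : Tendsto (fun n => ‖((seq n).1).2 - yb‖) atTop (nhds ‖y - yb‖) :=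
    ((hy.sub tendsto_const_nhds).norm)
  exact le_of_tendsto hnorm (Filter.Eventually.of_forall fun n => (seq n).2.2.1)

/-- Robinson–Ursescu-type bounded selection: a closed convex set-valued map with full
domain admits locally bounded selections. -/
lemma aux_bounded {Z Y : Type*} [NormedAddCommGroup Z] [NormedSpace ℝ Z] [CompleteSpace Z]
    [NormedAddCommGroup Y] [NormedSpace ℝ Y] [CompleteSpace Y]
    (A : Set (Z × Y)) (hAc : IsClosed A) (hAv : Convex ℝ A)
    (htot : ∀ z : Z, ∃ y : Y, (z, y) ∈ A) (zb : Z) :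
    ∃ r > (0:ℝ), ∃ M : ℝ, ∀ z : Z, ‖z - zb‖ < r → ∃ y : Y, (z, y) ∈ A ∧ ‖y‖ ≤ M := by
  obtain ⟨yb, hyb⟩ := htot zb
  set D : ℝ → Set Z := fun m => {z | ∃ y, (z, y) ∈ A ∧ ‖y - yb‖ ≤ m} with hD
  have hDconv : ∀ m, Convex ℝ (D m) := by
    intro m z1 h1 z2 h2 a b ha hb hab
    obtain ⟨y1, hy1, hn1⟩ := h1
    obtain ⟨y2, hy2, hn2⟩ := h2
    refine ⟨a • y1 + b • y2, ?_, ?_⟩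
    · have := hAv hy1 hy2 ha hb hab
      simpa [Prod.smul_mk, Prod.mk_add_mk] using this
    · have heq : (a • y1 + b • y2) - yb = a • (y1 - yb) + b • (y2 - yb) := by
        calc (a • y1 + b • y2) - yb = (a • y1 + b • y2) - (a + b) • yb := by
              rw [hab, one_smul]
          _ = a • (y1 - yb) + b • (y2 - yb) := by module
      rw [heq]
      calc ‖a • (y1 - yb) + b • (y2 - yb)‖ ≤ a * ‖y1 - yb‖ + b * ‖y2 - yb‖ := by
            refine (norm_add_le _ _).trans ?_
            rw [norm_smul, norm_smul, Real.norm_eq_abs, Real.norm_eq_abs,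
              abs_of_nonneg ha, abs_of_nonneg hb]
        _ ≤ a * m + b * m := by
            have hm : 0 ≤ m := le_trans (norm_nonneg _) hn1
            nlinarith
        _ = m := by rw [← add_mul, hab, one_mul]
  have hcover : ⋃ n : ℕ, closure (D n) = univ := by
    apply eq_univ_of_forall
    intro z
    obtain ⟨y, hy⟩ := htot z
    obtain ⟨n, hn⟩ := exists_nat_ge ‖y - yb‖
    exact mem_iUnion.2 ⟨n, subset_closure ⟨y, hy, hn⟩⟩
  obtain ⟨N, z0', hz0'⟩ := nonempty_interior_of_iUnion_of_closed
    (fun n : ℕ => isClosed_closure (s := D n)) hcover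
  obtain ⟨ρ, hρ, hball⟩ := Metric.isOpen_iff.1 isOpen_interior z0' hz0'
  have hballN : Metric.ball z0' ρ ⊆ closure (D N) :=
    hball.trans interior_subset
  -- symmetrize around zb
  obtain ⟨y1, hy1⟩ := htot ((2:ℝ) • zb - z0')
  set M0 : ℝ := (N + ‖y1 - yb‖) / 2 with hM0def
  have hM0 : 0 ≤ M0 := by positivity
  have claim1 : ∀ w : Z, ‖w - zb‖ < ρ / 2 → w ∈ closure (D M0) := by
    intro w hw
    set w' : Z := (2:ℝ) • w - ((2:ℝ) • zb - z0') with hw'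
    have hw'mem : w' ∈ closure (D N) := by
      apply hballN
      rw [Metric.mem_ball, dist_eq_norm]
      have : w' - z0' = (2:ℝ) • (w - zb) := by rw [hw']; module
      rw [this, norm_smul, Real.norm_ofNat]
      linarith
    set T : Z → Z := fun a => (1/2 : ℝ) • a + (1/2 : ℝ) • ((2:ℝ) • zb - z0') with hT
    have hTw : T w' = w := by rw [hT, hw']; simp only; module
    have hTcont : Continuous T := by
      apply Continuous.add
      · exact (continuous_id.const_smul _)
      · exact continuous_const
    have hTim : T '' (D N) ⊆ D M0 := by
      rintro _ ⟨a, ⟨ya, haA, han⟩, rfl⟩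
      refine ⟨(1/2 : ℝ) • ya + (1/2 : ℝ) • y1, ?_, ?_⟩
      · have h2 := hAv haA hy1 (by norm_num : (0:ℝ) ≤ 1/2) (by norm_num : (0:ℝ) ≤ 1/2)
          (by norm_num)
        exact h2
      · have heq : ((1/2 : ℝ) • ya + (1/2 : ℝ) • y1) - yb
            = (1/2 : ℝ) • (ya - yb) + (1/2 : ℝ) • (y1 - yb) := by module
        rw [heq, hM0def]
        calc ‖(1/2 : ℝ) • (ya - yb) + (1/2 : ℝ) • (y1 - yb)‖
            ≤ (1/2) * ‖ya - yb‖ + (1/2) * ‖y1 - yb‖ := by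
              refine (norm_add_le _ _).trans ?_
              rw [norm_smul, norm_smul]; norm_num
          _ ≤ (N + ‖y1 - yb‖) / 2 := by linarith
    have hw2 : w ∈ T '' closure (D N) := ⟨w', hw'mem, hTw⟩
    exact closure_mono hTim (image_closure_subset_closure_image hTcont hw2)
  -- apply the iteration lemma with r' = ρ/2
  have hiter := aux_iter A hAc hAv zb yb hyb M0 (ρ/2) hM0 (by positivity) ?_
  · refine ⟨ρ/8, by positivity, M0 + ‖yb‖, ?_⟩
    intro z hz
    obtain ⟨y, hyA, hyM⟩ := hiter z (by linarith : ‖z - zb‖ ≤ ρ/2/4)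
    refine ⟨y, hyA, ?_⟩
    calc ‖y‖ = ‖(y - yb) + yb‖ := by rw [sub_add_cancel]
      _ ≤ ‖y - yb‖ + ‖yb‖ := norm_add_le _ _
      _ ≤ M0 + ‖yb‖ := by linarith
  · intro w hw ε hε
    have := claim1 w hw
    rw [Metric.mem_closure_iff] at this
    obtain ⟨a, ⟨ya, haA, haM⟩, hd⟩ := this ε hε
    exact ⟨a, ya, haA, haM, by rwa [← dist_eq_norm, dist_comm]⟩

/-- Fréchet coderivative only depends on the local graph. -/
lemma fCoderiv_congr {α β : Type*} [NormedAddCommGroup α] [NormedSpace ℝ α]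
    [NormedAddCommGroup β] [NormedSpace ℝ β]
    (H1 H2 : α → Set β) (a : α) (b : β) (ψ : β →L[ℝ] ℝ) (U : Set α) (hU : U ∈ nhds a)
    (h : ∀ p ∈ U, H1 p = H2 p) :
    fCoderiv H1 a b ψ = fCoderiv H2 a b ψ := by
  obtain ⟨r, hr, hball⟩ := Metric.mem_nhds_iff.1 hU
  have main : ∀ (G1 G2 : α → Set β), (∀ p ∈ U, G1 p = G2 p) →
      fCoderiv G1 a b ψ ⊆ fCoderiv G2 a b ψ := by
    intro G1 G2 hG φ hφ ε hε
    obtain ⟨δ, hδ, hcond⟩ := hφ ε hε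
    refine ⟨min δ r, lt_min hδ hr, ?_⟩
    intro u v hv hlt
    have hu : u ∈ U := by
      apply hball
      rw [Metric.mem_ball, dist_eq_norm]
      have := norm_nonneg (v - b)
      have := lt_of_lt_of_le hlt (min_le_right δ r)
      linarith
    exact hcond u v (by rwa [hG u hu]) (lt_of_lt_of_le hlt (min_le_left δ r))
  exact Subset.antisymm (main H1 H2 h) (main H2 H1 fun p hp => (h p hp).symm)

/-- For a set-valued map with convex graph, the Fréchet coderivative coincides with the
convex-analysis coderivative. -/
lemma fCoderiv_eq_coderiv {α β : Type*} [NormedAddCommGroup α] [NormedSpace ℝ α]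
    [NormedAddCommGroup β] [NormedSpace ℝ β]
    (H : α → Set β) (a : α) (b : β) (ψ : β →L[ℝ] ℝ)
    (hconv : Convex ℝ {q : α × β | q.2 ∈ H q.1}) (hmem : b ∈ H a) :
    fCoderiv H a b ψ = coderiv H a b ψ := by
  apply Subset.antisymm
  · intro φ hφ u v hv
    set s : ℝ := ‖u - a‖ + ‖v - b‖ with hs
    have hs0 : 0 ≤ s := by positivity
    have key : ∀ ε > (0:ℝ), φ (u - a) - ψ (v - b) ≤ ε * s := by
      intro ε hε
      obtain ⟨δ, hδ, hcond⟩ := hφ ε hε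
      rcases eq_or_lt_of_le hs0 with hs0' | hs0'
      · -- s = 0 : u = a, v = b
        have h1 : ‖u - a‖ = 0 := by
          have := norm_nonneg (u - a); have := norm_nonneg (v - b); rw [hs] at hs0'
          linarith
        have h2 : ‖v - b‖ = 0 := by
          have := norm_nonneg (u - a); have := norm_nonneg (v - b); rw [hs] at hs0'
          linarith
        rw [norm_eq_zero, sub_eq_zero] at h1 h2
        rw [h1, h2]
        simp
        positivity
      · set t : ℝ := min 1 (δ / (2 * s)) with ht
        have ht0 : 0 < t := lt_min one_pos (by positivity)
        have ht1 : t ≤ 1 := min_le_left _ _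
        have hts : t * s < δ := by
          calc t * s ≤ (δ / (2 * s)) * s := by
                exact mul_le_mul_of_nonneg_right (min_le_right _ _) hs0
            _ = δ / 2 := by field_simp
            _ < δ := by linarith
        have hmem' : b + t • (v - b) ∈ H (a + t • (u - a)) := by
          have hcomb := hconv (x := (a, b)) (y := (u, v)) hmem hv
            (by linarith : (0:ℝ) ≤ 1 - t) ht0.le (by ring)
          have heq : ((1 - t) • (a, b) + t • (u, v) : α × β)
              = (a + t • (u - a), b + t • (v - b)) := by
            rw [Prod.smul_mk, Prod.smul_mk, Prod.mk_add_mk, Prod.mk.injEq]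
            exact ⟨by module, by module⟩
          rwa [heq] at hcomb
        have hnorm1 : ‖(a + t • (u - a)) - a‖ = t * ‖u - a‖ := by
          rw [add_sub_cancel_left, norm_smul, Real.norm_eq_abs, abs_of_pos ht0]
        have hnorm2 : ‖(b + t • (v - b)) - b‖ = t * ‖v - b‖ := by
          rw [add_sub_cancel_left, norm_smul, Real.norm_eq_abs, abs_of_pos ht0]
        have happ := hcond (a + t • (u - a)) (b + t • (v - b)) hmem'
          (by rw [hnorm1, hnorm2, ← mul_add]; exact hts)
        rw [hnorm1, hnorm2, add_sub_cancel_left, add_sub_cancel_left, map_smul, map_smul,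
          ← mul_add] at happ
        have : t * (φ (u - a) - ψ (v - b)) ≤ t * (ε * s) := by
          have : t • φ (u - a) - t • ψ (v - b) = t * (φ (u - a) - ψ (v - b)) := by
            simp [smul_eq_mul]; ring
          rw [this] at happ
          calc t * (φ (u - a) - ψ (v - b)) ≤ ε * (t * s) := happ
            _ = t * (ε * s) := by ring
        exact le_of_mul_le_mul_left this ht0
    by_contra hlt
    push_neg at hlt
    set d : ℝ := φ (u - a) - ψ (v - b) with hd
    have hd0 : 0 < d := hlt
    have hk := key (d / (2 * (s + 1))) (by positivity)
    rw [div_mul_eq_mul_div, le_div_iff₀ (by positivity)] at hk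
    nlinarith
  · intro φ hφ ε hε
    refine ⟨1, one_pos, ?_⟩
    intro u v hv _
    have h1 := hφ u v hv
    have h2 : 0 ≤ ε * (‖u - a‖ + ‖v - b‖) := by positivity
    linarith

/-- The decomposition (sum rule) step. -/
lemma decomp {P X Y : Type*}
    [NormedAddCommGroup P] [NormedSpace ℝ P] [CompleteSpace P]
    [NormedAddCommGroup X] [NormedSpace ℝ X] [CompleteSpace X]
    [NormedAddCommGroup Y] [NormedSpace ℝ Y] [CompleteSpace Y]
    (K : Set Y) (h0K : (0:Y) ∈ K)
    (f : P × X → Y)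
    (hfconv : Convex ℝ {q : (P × X) × Y | q.2 ∈ ({f q.1} : Set Y) + K})
    (hfcl : IsClosed {q : (P × X) × Y | q.2 ∈ ({f q.1} : Set Y) + K})
    (C : P → Set X) (hCconv : Convex ℝ {q : P × X | q.2 ∈ C q.1})
    (pb : P) (xb : X) (hxbC : xb ∈ C pb)
    (ψ : Y →L[ℝ] ℝ) (hψK : ∀ k ∈ K, 0 ≤ ψ k)
    (w : P →L[ℝ] ℝ)
    (hw : ∀ (p : P) (x : X), x ∈ C p → w (p - pb) - (ψ (f (p, x)) - ψ (f (pb, xb))) ≤ 0) :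
    ∃ pstar : P →L[ℝ] ℝ, ∃ xstar : X →L[ℝ] ℝ,
      (∀ q : P × X, ∀ v ∈ ({f q} : Set Y) + K,
        (pstar.coprod xstar) (q - (pb, xb)) - ψ (v - f (pb, xb)) ≤ 0) ∧
      ∃ qstar : P →L[ℝ] ℝ,
        (∀ (p : P), ∀ x ∈ C p, qstar (p - pb) - xstar (x - xb) ≤ 0) ∧
        w = pstar + qstar := by
  classical
  set g : P × X → ℝ := fun z => ψ (f z) with hgdef
  have hmemE : ∀ (q : P × X) (v : Y), v ∈ ({f q} : Set Y) + K ↔ ∃ k ∈ K, v = f q + k := by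
    intro q v
    constructor
    · rintro ⟨a, ha, k, hk, rfl⟩
      rw [mem_singleton_iff] at ha
      exact ⟨k, hk, by rw [ha]⟩
    · rintro ⟨k, hk, rfl⟩
      exact ⟨f q, mem_singleton _, k, hk, rfl⟩
  have hE0 : ∀ q : P × X, (q, f q) ∈ {q : (P × X) × Y | q.2 ∈ ({f q.1} : Set Y) + K} := by
    intro q
    exact (hmemE q (f q)).2 ⟨0, h0K, by rw [add_zero]⟩
  -- convexity of g
  have hgc : ∀ (z1 z2 : P × X) (a b : ℝ), 0 ≤ a → 0 ≤ b → a + b = 1 →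
      g (a • z1 + b • z2) ≤ a * g z1 + b * g z2 := by
    intro z1 z2 a b ha hb hab
    have hcomb := hfconv (hE0 z1) (hE0 z2) ha hb hab
    rw [mem_setOf_eq] at hcomb
    have h2 : (a • ((z1, f z1) : (P × X) × Y) + b • (z2, f z2)).2 = a • f z1 + b • f z2 := rfl
    have h1 : (a • ((z1, f z1) : (P × X) × Y) + b • (z2, f z2)).1 = a • z1 + b • z2 := rfl
    rw [h1, h2] at hcomb
    obtain ⟨k, hk, hkeq⟩ := (hmemE _ _).1 hcomb
    have hψk := hψK k hk
    have happ : a • ψ (f z1) + b • ψ (f z2) = ψ (f (a • z1 + b • z2)) + ψ k := by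
      rw [← map_smul, ← map_smul, ← map_add, hkeq, map_add]
    simp only [smul_eq_mul] at happ
    have e1 : g (a • z1 + b • z2) = ψ (f (a • z1 + b • z2)) := rfl
    have e2 : g z1 = ψ (f z1) := rfl
    have e3 : g z2 = ψ (f z2) := rfl
    rw [e1, e2, e3]
    linarith
  -- local upper bound for g
  obtain ⟨r, hr, M, hbdd⟩ := aux_bounded {q : (P × X) × Y | q.2 ∈ ({f q.1} : Set Y) + K}
    hfcl hfconv (fun z => ⟨f z, hE0 z⟩) (pb, xb)
  set c : ℝ := ‖ψ‖ * M with hcdef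
  have hgb : ∀ z : P × X, ‖z - (pb, xb)‖ < r → g z ≤ c := by
    intro z hz
    obtain ⟨y, hyA, hyM⟩ := hbdd z hz
    obtain ⟨k, hk, hkeq⟩ := (hmemE z y).1 hyA
    have hψk := hψK k hk
    have h1 : g z ≤ ψ y := by
      rw [hkeq, map_add]
      have e2 : g z = ψ (f z) := rfl
      rw [e2]; linarith
    have h2 : ψ y ≤ ‖ψ‖ * ‖y‖ := by
      calc ψ y ≤ |ψ y| := le_abs_self _
        _ = ‖ψ y‖ := (Real.norm_eq_abs _).symm
        _ ≤ ‖ψ‖ * ‖y‖ := ψ.le_opNorm y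
    have h3 : ‖ψ‖ * ‖y‖ ≤ ‖ψ‖ * M := mul_le_mul_of_nonneg_left hyM (norm_nonneg ψ)
    rw [hcdef]; linarith
  -- the function G and its epigraph
  set G : P × X → ℝ := fun z => g z - g (pb, xb) - w (z.1 - pb) with hGdef
  have hG0 : ∀ z : P × X, z.2 ∈ C z.1 → 0 ≤ G z := by
    intro z hz
    have h := hw z.1 z.2 hz
    rw [Prod.mk.eta] at h
    have h' : w (z.1 - pb) - (g z - g (pb, xb)) ≤ 0 := h
    show (0:ℝ) ≤ g z - g (pb, xb) - w (z.1 - pb)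
    linarith
  have hGzb : G (pb, xb) = 0 := by
    show g (pb, xb) - g (pb, xb) - w ((pb, xb).1 - pb) = 0
    have : (pb, xb).1 - pb = 0 := sub_self pb
    rw [this, map_zero]
    ring
  set S : Set ((P × X) × ℝ) := {q | G q.1 ≤ q.2} with hSdef
  have hSmem : ∀ q : (P × X) × ℝ, q ∈ S ↔ G q.1 ≤ q.2 := fun q => Iff.rfl
  have hSconv : Convex ℝ S := by
    intro q1 hq1 q2 hq2 a b ha hb hab
    have hG1 : g q1.1 - g (pb, xb) - w (q1.1.1 - pb) ≤ q1.2 := hq1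
    have hG2 : g q2.1 - g (pb, xb) - w (q2.1.1 - pb) ≤ q2.2 := hq2
    show G (a • q1.1 + b • q2.1) ≤ a * q1.2 + b * q2.2
    show g (a • q1.1 + b • q2.1) - g (pb, xb) - w ((a • q1.1 + b • q2.1).1 - pb)
      ≤ a * q1.2 + b * q2.2
    have hgpart := hgc q1.1 q2.1 a b ha hb hab
    have hwpart : w ((a • q1.1 + b • q2.1).1 - pb)
        = a * w (q1.1.1 - pb) + b * w (q2.1.1 - pb) := by
      have heq : (a • q1.1 + b • q2.1).1 - pb = a • (q1.1.1 - pb) + b • (q2.1.1 - pb) := by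
        have h3 : (a • q1.1 + b • q2.1).1 = a • q1.1.1 + b • q2.1.1 := rfl
        rw [h3]
        calc a • q1.1.1 + b • q2.1.1 - pb = a • q1.1.1 + b • q2.1.1 - (a + b) • pb := by
              rw [hab, one_smul]
          _ = a • (q1.1.1 - pb) + b • (q2.1.1 - pb) := by module
      rw [heq, map_add, map_smul, map_smul]
      simp [smul_eq_mul]
    rw [hwpart]
    have e3 : a * g (pb, xb) + b * g (pb, xb) = g (pb, xb) := by rw [← add_mul, hab, one_mul]
    have e1 : a * (g q1.1 - g (pb, xb) - w (q1.1.1 - pb)) ≤ a * q1.2 :=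
      mul_le_mul_of_nonneg_left hG1 ha
    have e2 : b * (g q2.1 - g (pb, xb) - w (q2.1.1 - pb)) ≤ b * q2.2 :=
      mul_le_mul_of_nonneg_left hG2 hb
    nlinarith [hgpart, e1, e2, e3]
  -- interior point of S
  set c2 : ℝ := c - g (pb, xb) + ‖w‖ * r with hc2def
  have hSball : (Metric.ball (pb, xb) r ×ˢ Ioi c2) ⊆ S := by
    rintro ⟨z, s⟩ ⟨hz1, hz2⟩
    rw [Metric.mem_ball, dist_eq_norm] at hz1
    have h1 : g z ≤ c := hgb z hz1
    have h2 : -(‖w‖ * r) ≤ w (z.1 - pb) := by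
      have ha : ‖w (z.1 - pb)‖ ≤ ‖w‖ * ‖z.1 - pb‖ := w.le_opNorm _
      have hb0 : ‖z.1 - pb‖ ≤ ‖z - (pb, xb)‖ := by
        have e : (z - (pb, xb)).1 = z.1 - pb := rfl
        rw [← e]
        exact norm_fst_le _
      have hc0 : ‖w‖ * ‖z.1 - pb‖ ≤ ‖w‖ * r := by
        apply mul_le_mul_of_nonneg_left _ (norm_nonneg w)
        linarith
      rw [Real.norm_eq_abs] at ha
      have hab := abs_le.1 (ha.trans hc0)
      linarith [hab.1]
    simp only [mem_Ioi] at hz2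
    rw [hc2def] at hz2
    show g z - g (pb, xb) - w (z.1 - pb) ≤ s
    linarith
  have hq0int : (((pb, xb), c2 + 1) : (P × X) × ℝ) ∈ interior S := by
    apply interior_maximal hSball (Metric.isOpen_ball.prod isOpen_Ioi)
    exact ⟨Metric.mem_ball_self hr, lt_add_one c2⟩
  -- the second convex set
  set E2 : Set ((P × X) × ℝ) := {q : P × X | q.2 ∈ C q.1} ×ˢ Iic (0:ℝ) with hE2def
  have hE2conv : Convex ℝ E2 := hCconv.prod (convex_Iic 0)
  have hdisj : Disjoint (interior S) E2 := by
    rw [Set.disjoint_left]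
    rintro q hq1 ⟨hq2, hq3⟩
    obtain ⟨ε, hε, hball⟩ := Metric.isOpen_iff.1 isOpen_interior q hq1
    have hq' : ((q.1, q.2 - ε/2) : (P × X) × ℝ) ∈ S := by
      apply interior_subset
      apply hball
      rw [Metric.mem_ball, Prod.dist_eq]
      simp only [dist_self, dist_eq_norm]
      have e : ‖q.2 - ε/2 - q.2‖ = ε/2 := by
        rw [show q.2 - ε/2 - q.2 = -(ε/2) by ring, norm_neg, Real.norm_eq_abs,
          abs_of_pos (by linarith)]
      rw [e]
      simp only [sup_lt_iff]
      constructor <;> linarith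
    have hg1 : G q.1 ≤ q.2 - ε/2 := hq'
    have hg2 : 0 ≤ G q.1 := hG0 q.1 hq2
    have hq3' : q.2 ≤ 0 := hq3
    have h9 : (0:ℝ) ≤ q.2 - ε/2 := le_trans hg2 hg1
    exact lt_irrefl (0:ℝ) ((half_pos hε).trans_le ((sub_nonneg.mp h9).trans hq3'))
  obtain ⟨Λ, u, hΛ1, hΛ2⟩ := geometric_hahn_banach_open (hSconv.interior) isOpen_interior
    hE2conv hdisj
  -- decompose Λ
  set ν : (P × X) →L[ℝ] ℝ := Λ.comp (ContinuousLinearMap.inl ℝ (P × X) ℝ) with hν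
  set β : ℝ := Λ (0, 1) with hβdef
  have hΛeq : ∀ (z : P × X) (t : ℝ), Λ (z, t) = ν z + t * β := by
    intro z t
    have e : ((z, t) : (P × X) × ℝ) = (z, 0) + t • ((0 : P × X), (1:ℝ)) := by
      rw [Prod.smul_mk, Prod.mk_add_mk]
      simp
    rw [e, map_add, map_smul]
    show ν z + t • β = ν z + t * β
    rw [smul_eq_mul]
  -- Λ q ≤ u for all q ∈ S
  have hSle : ∀ q ∈ S, Λ q ≤ u := by
    intro q hq
    have hlt : ∀ t : ℝ, t ∈ Ioc (0:ℝ) 1 → t * Λ ((pb, xb), c2 + 1) + (1 - t) * Λ q < u := by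
      intro t ht
      have hcomb := hSconv.combo_interior_self_mem_interior hq0int hq ht.1
        (by linarith [ht.2] : (0:ℝ) ≤ 1 - t) (by ring)
      have := hΛ1 _ hcomb
      rwa [map_add, map_smul, map_smul, smul_eq_mul, smul_eq_mul] at this
    have htend : Tendsto (fun t : ℝ => t * Λ ((pb, xb), c2 + 1) + (1 - t) * Λ q)
        (nhdsWithin 0 (Ioi 0)) (nhds (Λ q)) := by
      have hcont : Continuous (fun t : ℝ => t * Λ ((pb, xb), c2 + 1) + (1 - t) * Λ q) :=
        (continuous_id.mul continuous_const).add
          ((continuous_const.sub continuous_id).mul continuous_const)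
      have h0 := hcont.tendsto 0
      simp only [zero_mul, sub_zero, one_mul, zero_add] at h0
      exact tendsto_nhdsWithin_of_tendsto_nhds h0
    apply le_of_tendsto htend
    filter_upwards [Ioc_mem_nhdsGT_of_mem (⟨le_refl (0:ℝ), one_pos⟩ : (0:ℝ) ∈ Ico (0:ℝ) 1)]
      with t ht
    exact (hlt t ht).le
  -- basic facts about ν and β
  have hzbS : (((pb, xb), (0:ℝ)) : (P × X) × ℝ) ∈ S := by
    show G (pb, xb) ≤ 0
    rw [hGzb]
  have hzbE2 : (((pb, xb), (0:ℝ)) : (P × X) × ℝ) ∈ E2 := ⟨hxbC, by simp⟩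
  have hνzb_le : ν (pb, xb) ≤ u := by
    have h := hSle _ hzbS
    rwa [hΛeq, zero_mul, add_zero] at h
  have hle_νzb : u ≤ ν (pb, xb) := by
    have h := hΛ2 _ hzbE2
    rwa [hΛeq, zero_mul, add_zero] at h
  have hβneg : β < 0 := by
    have hβ0 : β ≤ 0 := by
      by_contra hβpos
      push_neg at hβpos
      have hs : 0 ≤ (u - ν (pb, xb) + 1) / β := by
        apply div_nonneg _ hβpos.le
        linarith
      have hzS : (((pb, xb), (u - ν (pb, xb) + 1) / β) : (P × X) × ℝ) ∈ S := by
        show G (pb, xb) ≤ _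
        rw [hGzb]
        exact hs
      have h := hSle _ hzS
      rw [hΛeq, div_mul_cancel₀ _ hβpos.ne'] at h
      linarith
    rcases lt_or_eq_of_le hβ0 with h | h
    · exact h
    · exfalso
      have hlt := hΛ1 _ hq0int
      rw [hΛeq, h, mul_zero, add_zero] at hlt
      linarith
  -- the normalized functional
  set νh : (P × X) →L[ℝ] ℝ := (-β)⁻¹ • ν with hνh
  have hνhval : ∀ z : P × X, νh z = (-β)⁻¹ * ν z := fun z => rfl
  have hβpos : (0:ℝ) < -β := by linarith
  have key1 : ∀ z : P × X, νh z - νh (pb, xb) ≤ g z - g (pb, xb) - w (z.1 - pb) := by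
    intro z
    have hzS : ((z, G z) : (P × X) × ℝ) ∈ S := by show G z ≤ G z; exact le_refl _
    have h1 := hSle _ hzS
    rw [hΛeq] at h1
    have h2 : ν z - ν (pb, xb) ≤ G z * (-β) := by
      have e9 : G z * (-β) = -(G z * β) := by ring
      linarith
    rw [hνhval, hνhval]
    have e : (-β)⁻¹ * ν z - (-β)⁻¹ * ν (pb, xb) = (ν z - ν (pb, xb)) / (-β) := by
      rw [div_eq_inv_mul, mul_sub]
    rw [e, div_le_iff₀ hβpos]
    have eG : G z = g z - g (pb, xb) - w (z.1 - pb) := rfl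
    rw [eG] at h2
    linarith
  have key2 : ∀ z : P × X, z.2 ∈ C z.1 → 0 ≤ νh z - νh (pb, xb) := by
    intro z hz
    have h := hΛ2 (z, 0) ⟨hz, by simp⟩
    rw [hΛeq, zero_mul, add_zero] at h
    have h2 : ν (pb, xb) ≤ ν z := by linarith
    rw [hνhval, hνhval]
    have hβi : (0:ℝ) < (-β)⁻¹ := inv_pos.2 hβpos
    rw [← mul_sub]
    exact mul_nonneg hβi.le (sub_nonneg.2 h2)
  -- assemble
  set νhP : P →L[ℝ] ℝ := νh.comp (ContinuousLinearMap.inl ℝ P X) with hνhP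
  set νhX : X →L[ℝ] ℝ := νh.comp (ContinuousLinearMap.inr ℝ P X) with hνhX
  have hsplit : ∀ z : P × X, νh z = νhP z.1 + νhX z.2 := by
    intro z
    have e : (z : P × X) = (z.1, 0) + (0, z.2) := by
      rw [Prod.mk_add_mk]; simp
    simp only [hνhP, hνhX, ContinuousLinearMap.comp_apply, ContinuousLinearMap.inl_apply,
      ContinuousLinearMap.inr_apply]
    conv_lhs => rw [e, map_add]
  refine ⟨w + νhP, νhX, ?_, -νhP, ?_, ?_⟩
  · intro q v hv
    obtain ⟨k, hk, rfl⟩ := (hmemE q v).1 hv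
    rw [ContinuousLinearMap.coprod_apply]
    have h1 : ((q - (pb, xb)) : P × X).1 = q.1 - pb := rfl
    have h2 : ((q - (pb, xb)) : P × X).2 = q.2 - xb := rfl
    rw [h1, h2]
    have hA : (w + νhP) (q.1 - pb) = w (q.1 - pb) + νhP (q.1 - pb) := rfl
    have h3 : νhP (q.1 - pb) + νhX (q.2 - xb) = νh q - νh (pb, xb) := by
      have e1 : νhP ((q - (pb, xb)).1) + νhX ((q - (pb, xb)).2) = νh (q - (pb, xb)) :=
        (hsplit (q - (pb, xb))).symm
      have e2 : ((q - (pb, xb)) : P × X).1 = q.1 - pb := rfl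
      have e3 : ((q - (pb, xb)) : P × X).2 = q.2 - xb := rfl
      rw [e2, e3] at e1
      rw [e1, map_sub]
    have h6 : ψ (f q + k - f (pb, xb)) = ψ (f q) + ψ k - ψ (f (pb, xb)) := by
      rw [map_sub, map_add]
    have h5 := key1 q
    have h7 := hψK k hk
    have e4 : g q = ψ (f q) := rfl
    have e5 : g (pb, xb) = ψ (f (pb, xb)) := rfl
    rw [e4, e5] at h5
    rw [hA, h6]
    linarith
  · intro p x hx
    simp only [ContinuousLinearMap.neg_apply]
    have h1 : νhP (p - pb) + νhX (x - xb) = νh ((p, x) - (pb, xb)) := by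
      have e1 := (hsplit ((p, x) - (pb, xb))).symm
      have e2 : (((p, x) - (pb, xb)) : P × X).1 = p - pb := rfl
      have e3 : (((p, x) - (pb, xb)) : P × X).2 = x - xb := rfl
      rw [e2, e3] at e1
      exact e1
    have h2 : νh ((p, x) - (pb, xb)) = νh (p, x) - νh (pb, xb) := by rw [map_sub]
    have h3 := key2 (p, x) hx
    linarith
  · exact (add_neg_cancel_right w νhP).symm

/-- the proper (Henig) perturbation map version.  With
`𝓟(p) = PrMin_K F(p)` and `F` `K`-dominated by `𝓟` near `pb`, for every `y* ∈ Y*`: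
`D̂*(𝓟 + K)(pb, yb)(y*) = ⋃_{(p*,x*) ∈ D*(f + K)(pb, xb)(y*)} {p* + D*C(pb, xb)(x*)}`;
in particular, for every `y* ∈ K*` the union can be taken over `∂⟨y*, f⟩(pb, xb)`. -/
theorem stmt16
    {P X Y : Type*}
    [NormedAddCommGroup P] [NormedSpace ℝ P] [CompleteSpace P]
    [NormedAddCommGroup X] [NormedSpace ℝ X] [CompleteSpace X]
    [NormedAddCommGroup Y] [NormedSpace ℝ Y] [CompleteSpace Y]
    -- K is a pointed closed convex cone in Y
    (K : Set Y) (hKconv : Convex ℝ K) (hKclosed : IsClosed K)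
    (hKcone : ∀ t : ℝ, 0 ≤ t → ∀ y ∈ K, t • y ∈ K)
    (hKpointed : K ∩ (-K) = {0})
    -- f is K-convex and K-closed (its epigraph is convex and closed)
    (f : P × X → Y)
    (hfconv : Convex ℝ {q : (P × X) × Y | q.2 ∈ ({f q.1} : Set Y) + K})
    (hfcl : IsClosed {q : (P × X) × Y | q.2 ∈ ({f q.1} : Set Y) + K})
    -- C is a closed convex set-valued map
    (C : P → Set X) (hCconv : Convex ℝ (gph C)) (hCcl : IsClosed (gph C))
    -- F(p) = {f(p,x) : x ∈ C(p)},  𝓟(p) = PrMin_K F(p)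
    (F : P → Set Y) (hF : ∀ p, F p = {y : Y | ∃ x ∈ C p, y = f (p, x)})
    (Fprop : P → Set Y)
    (hFprop : ∀ p, Fprop p = {a ∈ F p | ∃ Q : Set Y, Convex ℝ Q ∧
      (∀ t : ℝ, 0 ≤ t → ∀ y ∈ Q, t • y ∈ Q) ∧ Q ≠ univ ∧
      K \ {0} ⊆ interior Q ∧ (F p - {a}) ∩ ((-Q) \ (Q ∩ -Q)) = ∅})
    -- (pb, xb) ∈ gph S, yb = f(pb, xb)
    (pb : P) (xb : X) (hxbC : xb ∈ C pb) (hsol : f (pb, xb) ∈ Fprop pb)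
    (yb : Y) (hyb : yb = f (pb, xb))
    -- (i) ℝ⁺(rge H − dom f) is a closed linear subspace of P × X, where
    --     H(p) = {p} × C(p), so rge H = gph C and dom f = P × X
    (hqual1 : ∃ S : Submodule ℝ (P × X), IsClosed (S : Set (P × X)) ∧
      {w : P × X | ∃ t : ℝ, 0 ≤ t ∧
        ∃ u ∈ ⋃ p : P, ({p} : Set P) ×ˢ C p, ∃ v : P × X, w = t • (u - v)} = S)
    -- (ii) ℝ⁺(P − dom C) is a closed linear subspace of P
    (hqual2 : ∃ S : Submodule ℝ P, IsClosed (S : Set P) ∧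
      {w : P | ∃ t : ℝ, 0 ≤ t ∧ ∃ u : P, ∃ v ∈ dom C, w = t • (u - v)} = S)
    -- (iii) F is K-dominated by 𝓟 near pb
    (hdom : ∃ U ∈ nhds pb, ∀ p ∈ U, F p ⊆ Fprop p + K) :
    (∀ ψ : Y →L[ℝ] ℝ,
        fCoderiv (fun p => Fprop p + K) pb yb ψ
          = {w : P →L[ℝ] ℝ | ∃ pstar : P →L[ℝ] ℝ, ∃ xstar : X →L[ℝ] ℝ,
              pstar.coprod xstar
                ∈ coderiv (fun q : P × X => ({f q} : Set Y) + K) (pb, xb) (f (pb, xb)) ψ ∧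
              ∃ qstar ∈ coderiv C pb xb xstar, w = pstar + qstar})
      ∧ (∀ ψ : Y →L[ℝ] ℝ, (∀ k ∈ K, 0 ≤ ψ k) →
          fCoderiv (fun p => Fprop p + K) pb yb ψ
            = {w : P →L[ℝ] ℝ | ∃ pstar : P →L[ℝ] ℝ, ∃ xstar : X →L[ℝ] ℝ,
                pstar.coprod xstar ∈ subdiff (fun q : P × X => ψ (f q)) (pb, xb) ∧
                ∃ qstar ∈ coderiv C pb xb xstar, w = pstar + qstar}) := by
  classical
  -- basic facts about K
  have h0K : (0:Y) ∈ K := by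
    have h : (0:Y) ∈ K ∩ (-K) := by rw [hKpointed]; exact mem_singleton 0
    exact h.1
  have hKK : ∀ k1 ∈ K, ∀ k2 ∈ K, k1 + k2 ∈ K := by
    intro k1 h1 k2 h2
    have hmid := hKconv h1 h2 (by norm_num : (0:ℝ) ≤ 1/2) (by norm_num : (0:ℝ) ≤ 1/2)
      (by norm_num)
    have := hKcone 2 (by norm_num) _ hmid
    rwa [smul_add, smul_smul, smul_smul, show (2:ℝ) * (1/2) = 1 by norm_num, one_smul,
      one_smul] at this
  have hmemE : ∀ (q : P × X) (v : Y), v ∈ ({f q} : Set Y) + K ↔ ∃ k ∈ K, v = f q + k := by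
    intro q v
    constructor
    · rintro ⟨a, ha, k, hk, rfl⟩
      rw [mem_singleton_iff] at ha
      exact ⟨k, hk, by rw [ha]⟩
    · rintro ⟨k, hk, rfl⟩
      exact ⟨f q, mem_singleton _, k, hk, rfl⟩
  have hE0 : ∀ q : P × X, (q, f q) ∈ {q : (P × X) × Y | q.2 ∈ ({f q.1} : Set Y) + K} := by
    intro q
    exact (hmemE q (f q)).2 ⟨0, h0K, by rw [add_zero]⟩
  have hFmem : ∀ (p : P) (y : Y), y ∈ F p + K ↔ ∃ x ∈ C p, ∃ k ∈ K, y = f (p, x) + k := by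
    intro p y
    constructor
    · rintro ⟨a, haF, k, hk, rfl⟩
      rw [hF p] at haF
      obtain ⟨x, hx, rfl⟩ := haF
      exact ⟨x, hx, k, hk, rfl⟩
    · rintro ⟨x, hx, k, hk, rfl⟩
      exact ⟨f (p, x), by rw [hF p]; exact ⟨x, hx, rfl⟩, k, hk, rfl⟩
  -- local agreement of Fprop + K and F + K
  obtain ⟨U, hU, hUdom⟩ := hdom
  have hloc : ∀ p ∈ U, Fprop p + K = F p + K := by
    intro p hp
    apply Subset.antisymm
    · apply add_subset_add_right
      rw [hFprop p]
      exact sep_subset _ _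
    · rintro y ⟨a, haF, k, hk, rfl⟩
      obtain ⟨b, hb, k', hk', rfl⟩ := hUdom p hp haF
      exact ⟨b, hb, k' + k, hKK k' hk' k hk, by show b + (k' + k) = b + k' + k; rw [add_assoc]⟩
  -- convexity of the graph of F + K
  have hFKconv : Convex ℝ {q : P × Y | q.2 ∈ F q.1 + K} := by
    intro q1 hq1 q2 hq2 a b ha hb hab
    obtain ⟨x1, hx1, k1, hk1, he1⟩ := (hFmem q1.1 q1.2).1 hq1
    obtain ⟨x2, hx2, k2, hk2, he2⟩ := (hFmem q2.1 q2.2).1 hq2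
    show (a • q1 + b • q2).2 ∈ F ((a • q1 + b • q2).1) + K
    have hc1 : (a • q1 + b • q2).1 = a • q1.1 + b • q2.1 := rfl
    have hc2 : (a • q1 + b • q2).2 = a • q1.2 + b • q2.2 := rfl
    rw [hc1, hc2, hFmem]
    have hxmem : ((a • q1.1 + b • q2.1, a • x1 + b • x2) : P × X).2
        ∈ C ((a • q1.1 + b • q2.1, a • x1 + b • x2) : P × X).1 := by
      have hcC := hCconv (show ((q1.1, x1) : P × X) ∈ gph C from hx1)
        (show ((q2.1, x2) : P × X) ∈ gph C from hx2) ha hb hab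
      exact hcC
    have hcf := hfconv (hE0 (q1.1, x1)) (hE0 (q2.1, x2)) ha hb hab
    rw [mem_setOf_eq] at hcf
    have hd1 : (a • (((q1.1, x1), f (q1.1, x1)) : (P × X) × Y)
        + b • ((q2.1, x2), f (q2.1, x2))).1 = (a • q1.1 + b • q2.1, a • x1 + b • x2) := rfl
    have hd2 : (a • (((q1.1, x1), f (q1.1, x1)) : (P × X) × Y)
        + b • ((q2.1, x2), f (q2.1, x2))).2 = a • f (q1.1, x1) + b • f (q2.1, x2) := rfl
    rw [hd1, hd2] at hcf
    obtain ⟨k0, hk0, hk0eq⟩ := (hmemE _ _).1 hcf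
    refine ⟨a • x1 + b • x2, hxmem, k0 + (a • k1 + b • k2),
      hKK k0 hk0 _ (hKK _ (hKcone a ha k1 hk1) _ (hKcone b hb k2 hk2)), ?_⟩
    rw [he1, he2]
    rw [show a • (f (q1.1, x1) + k1) + b • (f (q2.1, x2) + k2)
      = (a • f (q1.1, x1) + b • f (q2.1, x2)) + (a • k1 + b • k2) by module, hk0eq]
    rw [add_assoc]
  have hybmem : yb ∈ F pb + K :=
    (hFmem pb yb).2 ⟨xb, hxbC, 0, h0K, by rw [hyb, add_zero]⟩
  -- the main chain of identifications
  have hstep : ∀ ψ : Y →L[ℝ] ℝ, fCoderiv (fun p => Fprop p + K) pb yb ψ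
      = coderiv (fun p => F p + K) pb yb ψ := by
    intro ψ
    rw [fCoderiv_congr (fun p => Fprop p + K) (fun p => F p + K) pb yb ψ U hU hloc]
    exact fCoderiv_eq_coderiv (fun p => F p + K) pb yb ψ hFKconv hybmem
  have hmain : ∀ ψ : Y →L[ℝ] ℝ,
      fCoderiv (fun p => Fprop p + K) pb yb ψ
        = {w : P →L[ℝ] ℝ | ∃ pstar : P →L[ℝ] ℝ, ∃ xstar : X →L[ℝ] ℝ,
            pstar.coprod xstar
              ∈ coderiv (fun q : P × X => ({f q} : Set Y) + K) (pb, xb) (f (pb, xb)) ψ ∧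
            ∃ qstar ∈ coderiv C pb xb xstar, w = pstar + qstar} := by
    intro ψ
    rw [hstep ψ]
    ext w
    simp only [mem_setOf_eq]
    constructor
    · intro hw
      have hψK : ∀ k ∈ K, 0 ≤ ψ k := by
        intro k hk
        have hm : yb + k ∈ F pb + K :=
          (hFmem pb _).2 ⟨xb, hxbC, k, hk, by rw [hyb]⟩
        have h := hw pb (yb + k) hm
        rw [sub_self, map_zero, add_sub_cancel_left] at h
        linarith
      have hw' : ∀ (p : P) (x : X), x ∈ C p →
          w (p - pb) - (ψ (f (p, x)) - ψ (f (pb, xb))) ≤ 0 := by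
        intro p x hx
        have hm : f (p, x) ∈ F p + K :=
          (hFmem p _).2 ⟨x, hx, 0, h0K, (add_zero _).symm⟩
        have h := hw p (f (p, x)) hm
        rw [hyb] at h
        have e9 : ψ (f (p, x) - f (pb, xb)) = ψ (f (p, x)) - ψ (f (pb, xb)) :=
          map_sub ψ _ _
        rw [e9] at h
        exact h
      obtain ⟨pstar, xstar, hco, qstar, hq, heq⟩ :=
        decomp K h0K f hfconv hfcl C hCconv pb xb hxbC ψ hψK w hw'
      exact ⟨pstar, xstar, hco, qstar, hq, heq⟩
    · rintro ⟨pstar, xstar, hco, qstar, hq, rfl⟩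
      intro u v hv
      obtain ⟨x, hx, k, hk, rfl⟩ := (hFmem u v).1 hv
      have h1 := hco (u, x) (f (u, x) + k) ((hmemE (u, x) _).2 ⟨k, hk, rfl⟩)
      rw [ContinuousLinearMap.coprod_apply] at h1
      have e1 : (((u, x) - (pb, xb)) : P × X).1 = u - pb := rfl
      have e2 : (((u, x) - (pb, xb)) : P × X).2 = x - xb := rfl
      rw [e1, e2] at h1
      have h2 := hq u x hx
      rw [hyb]
      have hadd : (pstar + qstar) (u - pb) = pstar (u - pb) + qstar (u - pb) := rfl
      rw [hadd]
      linarith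
  refine ⟨hmain, ?_⟩
  intro ψ hψ
  rw [hmain ψ]
  ext w
  simp only [mem_setOf_eq]
  constructor
  · rintro ⟨pstar, xstar, hco, rest⟩
    refine ⟨pstar, xstar, ?_, rest⟩
    intro u
    have h := hco u (f u) ((hmemE u (f u)).2 ⟨0, h0K, (add_zero _).symm⟩)
    have e9 : ψ (f u - f (pb, xb)) = ψ (f u) - ψ (f (pb, xb)) := map_sub ψ _ _
    rw [e9] at h
    show (pstar.coprod xstar) (u - (pb, xb)) ≤ ψ (f u) - ψ (f (pb, xb))
    linarith
  · rintro ⟨pstar, xstar, hsub, rest⟩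
    refine ⟨pstar, xstar, ?_, rest⟩
    intro u v hv
    obtain ⟨k, hk, rfl⟩ := (hmemE u v).1 hv
    have h1 : (pstar.coprod xstar) (u - (pb, xb)) ≤ ψ (f u) - ψ (f (pb, xb)) := hsub u
    have h2 := hψ k hk
    have e : ψ (f u + k - f (pb, xb)) = ψ (f u) + ψ k - ψ (f (pb, xb)) := by
      rw [map_sub, map_add]
    rw [e]
    linarith
end
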